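/- arXiv:2006.09361 — 7 statements merged into one kernel-verified Lean document; each statement's English description precedes it below -/
import Mathlib

section
/- Let f : ℝ^{d1} × ℝ^{d2} → ℝ be differentiable with ℓ-Lipschitz gradient and μ-strongly concave in y for every fixed x (0 < μ ≤ ℓ). Then for every x ∈ ℝ^{d1} the maximizer y*(x) = argmax_{y ∈ ℝ^{d2}} f(x,y) exists and is unique, and the map x ↦ y*(x) is κ-Lipschitz, where κ = ℓ/μ. -/
open MeasureTheory

lemma grad_zero_of_max {d : ℕ} (g : EuclideanSpace ℝ (Fin d) → ℝ)
    (y : EuclideanSpace ℝ (Fin d)) (h : IsMaxOn g Set.univ y) : gradient g y = 0 := by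
  have hloc : IsLocalMax g y := h.isLocalMax (Filter.univ_mem)
  have : fderiv ℝ g y = 0 := hloc.fderiv_eq_zero
  simp [gradient, this]

/-- If `f : ℝ^{d1} × ℝ^{d2} → ℝ` is differentiable with `ℓ`-Lipschitz gradient
and `μ`-strongly concave in `y` for every fixed `x` (`0 < μ ≤ ℓ`), then for every `x` the
maximizer `y*(x)` exists and is unique, and any selection `x ↦ y*(x)` is `κ`-Lipschitz with
`κ = ℓ/μ`. -/
theorem zo_vrgda_stmt0 (d1 d2 : ℕ)
    (f : EuclideanSpace ℝ (Fin d1) → EuclideanSpace ℝ (Fin d2) → ℝ)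
    (ℓ μ : ℝ) (hμ : 0 < μ) (hμℓ : μ ≤ ℓ)
    (hdiff : Differentiable ℝ
      (fun p : EuclideanSpace ℝ (Fin d1) × EuclideanSpace ℝ (Fin d2) => f p.1 p.2))
    (hlip : ∀ x x' y y',
      ‖gradient (fun x'' => f x'' y) x - gradient (fun x'' => f x'' y') x'‖ ^ 2 +
          ‖gradient (f x) y - gradient (f x') y'‖ ^ 2 ≤
        ℓ ^ 2 * (‖x - x'‖ ^ 2 + ‖y - y'‖ ^ 2))
    (hconc : ∀ x y y',
      f x y ≤ f x y' + (inner ℝ (gradient (f x) y') (y - y') : ℝ) - μ / 2 * ‖y - y'‖ ^ 2) :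
    (∀ x, ∃! y, IsMaxOn (f x) Set.univ y) ∧
      ∀ ystar : EuclideanSpace ℝ (Fin d1) → EuclideanSpace ℝ (Fin d2),
        (∀ x, IsMaxOn (f x) Set.univ (ystar x)) →
        ∀ x x', ‖ystar x - ystar x'‖ ≤ ℓ / μ * ‖x - x'‖ := by
  have hℓ0 : 0 < ℓ := lt_of_lt_of_le hμ hμℓ
  -- differentiability / continuity in y
  have hdy : ∀ x, Differentiable ℝ (f x) := by
    intro x
    have : Differentiable ℝ (fun y : EuclideanSpace ℝ (Fin d2) => (x, y)) :=
      (differentiable_const x).prodMk differentiable_id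
    have h2 : Differentiable ℝ ((fun p : EuclideanSpace ℝ (Fin d1) × EuclideanSpace ℝ (Fin d2) => f p.1 p.2) ∘ (fun y : EuclideanSpace ℝ (Fin d2) => (x, y))) := hdiff.comp this
    exact h2
  constructor
  · intro x
    -- existence
    set g0 := gradient (f x) 0 with hg0
    set R := 2 * ‖g0‖ / μ with hR
    have hR0 : 0 ≤ R := by positivity
    obtain ⟨ym, hymK, hym⟩ :=
      (isCompact_closedBall (0 : EuclideanSpace ℝ (Fin d2)) R).exists_isMaxOn
        ⟨0, Metric.mem_closedBall_self hR0⟩ ((hdy x).continuous.continuousOn)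
    have hmax : IsMaxOn (f x) Set.univ ym := by
      intro y _
      by_cases hy : y ∈ Metric.closedBall (0 : EuclideanSpace ℝ (Fin d2)) R
      · exact hym hy
      · have hyR : R < ‖y‖ := by
          simpa [Metric.mem_closedBall, dist_eq_norm] using hy
        have h1 := hconc x y 0
        have h2 := real_inner_le_norm (gradient (f x) 0) (y - 0)
        have hs : ‖y - (0 : EuclideanSpace ℝ (Fin d2))‖ = ‖y‖ := by rw [sub_zero]
        rw [hs] at h1 h2
        have h3 : ‖gradient (f x) 0‖ ≤ μ / 2 * ‖y‖ := by
          have h3' : 2 * ‖g0‖ / μ < ‖y‖ := hyR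
          rw [div_lt_iff₀ hμ] at h3'
          rw [hg0] at h3'
          nlinarith
        have h4 : ‖gradient (f x) 0‖ * ‖y‖ ≤ μ / 2 * ‖y‖ * ‖y‖ :=
          mul_le_mul_of_nonneg_right h3 (norm_nonneg y)
        have h5 : μ / 2 * ‖y‖ * ‖y‖ = μ / 2 * ‖y‖ ^ 2 := by ring
        have h0 : f x 0 ≤ f x ym := hym (Metric.mem_closedBall_self hR0)
        have htest1 : f x y ≤ f x 0 := by linarith
        exact le_trans htest1 h0
    refine ⟨ym, hmax, ?_⟩
    -- uniqueness
    intro y hy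
    have hgy : gradient (f x) y = 0 := grad_zero_of_max _ _ hy
    have h1 : f x ym ≤ f x y + (inner ℝ (gradient (f x) y) (ym - y) : ℝ)
        - μ / 2 * ‖ym - y‖ ^ 2 := hconc x ym y
    rw [hgy] at h1
    simp only [inner_zero_left] at h1
    have h2 : f x y ≤ f x ym := hmax (Set.mem_univ y)
    have hsq : ‖ym - y‖ ^ 2 = 0 := le_antisymm (by nlinarith) (sq_nonneg _)
    have : ym - y = 0 := norm_eq_zero.mp (by
      have := pow_eq_zero_iff (n := 2) (by norm_num) |>.mp hsq
      exact this)
    exact (sub_eq_zero.mp this).symm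
  · -- Lipschitz
    intro ystar hst x x'
    set y := ystar x with hy
    set y' := ystar x' with hy'
    have hgy : gradient (f x) y = 0 := grad_zero_of_max _ _ (hst x)
    have hgy' : gradient (f x') y' = 0 := grad_zero_of_max _ _ (hst x')
    set g' := gradient (f x) y' with hg'
    -- monotonicity: μ ‖y - y'‖² ≤ ⟪g', y - y'⟫
    have h1 : f x y ≤ f x y' + (inner ℝ g' (y - y') : ℝ) - μ / 2 * ‖y - y'‖ ^ 2 :=
      hconc x y y'
    have h2 : f x y' ≤ f x y + (inner ℝ (gradient (f x) y) (y' - y) : ℝ)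
        - μ / 2 * ‖y' - y‖ ^ 2 := hconc x y' y
    rw [hgy] at h2
    simp only [inner_zero_left] at h2
    rw [norm_sub_rev y' y] at h2
    have hmono : μ * ‖y - y'‖ ^ 2 ≤ (inner ℝ g' (y - y') : ℝ) := by linarith
    -- ‖g'‖ ≤ ℓ ‖x - x'‖
    have hlip2 := hlip x x' y' y'
    simp only [sub_self, norm_zero] at hlip2
    have hg'n : ‖g'‖ ≤ ℓ * ‖x - x'‖ := by
      have hsq : ‖g' - gradient (f x') y'‖ ^ 2 ≤ ℓ ^ 2 * ‖x - x'‖ ^ 2 := by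
        nlinarith [sq_nonneg ‖gradient (fun x'' => f x'' y') x - gradient (fun x'' => f x'' y') x'‖]
      rw [hgy', sub_zero] at hsq
      nlinarith [norm_nonneg g', norm_nonneg (x - x'), mul_nonneg hℓ0.le (norm_nonneg (x - x'))]
    have hcs : (inner ℝ g' (y - y') : ℝ) ≤ ‖g'‖ * ‖y - y'‖ := real_inner_le_norm _ _
    have key : μ * ‖y - y'‖ ^ 2 ≤ ℓ * ‖x - x'‖ * ‖y - y'‖ := by
      calc μ * ‖y - y'‖ ^ 2 ≤ (inner ℝ g' (y - y') : ℝ) := hmono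
        _ ≤ ‖g'‖ * ‖y - y'‖ := hcs
        _ ≤ ℓ * ‖x - x'‖ * ‖y - y'‖ :=
            mul_le_mul_of_nonneg_right hg'n (norm_nonneg _)
    rcases eq_or_lt_of_le (norm_nonneg (y - y')) with h0 | h0
    · rw [← h0]; positivity
    · have h5 : (μ * ‖y - y'‖) * ‖y - y'‖ ≤ (ℓ * ‖x - x'‖) * ‖y - y'‖ := by
        calc (μ * ‖y - y'‖) * ‖y - y'‖ = μ * ‖y - y'‖ ^ 2 := by ring
          _ ≤ ℓ * ‖x - x'‖ * ‖y - y'‖ := key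
      have h6 : μ * ‖y - y'‖ ≤ ℓ * ‖x - x'‖ := le_of_mul_le_mul_right h5 h0
      rw [div_mul_eq_mul_div, le_div_iff₀ hμ]
      linarith
end

section
/- Let f : ℝ^{d1} × ℝ^{d2} → ℝ be differentiable with ℓ-Lipschitz gradient and μ-strongly concave in y for every fixed x (0 < μ ≤ ℓ), and let y*(x) = argmax_{y} f(x,y). Then Φ(x) = max_{y ∈ ℝ^{d2}} f(x,y) is differentiable with ∇Φ(x) = ∇_x f(x, y*(x)) for every x, and ∇Φ is (κ+1)ℓ-Lipschitz, where κ = ℓ/μ. -/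
open MeasureTheory

open InnerProductSpace in
private lemma quad_bound {F : Type*} [NormedAddCommGroup F] [InnerProductSpace ℝ F]
    [CompleteSpace F] (g : F → ℝ) (hg : Differentiable ℝ g) {L : ℝ} (hL : 0 ≤ L)
    (hlip : ∀ z z', ‖gradient g z - gradient g z'‖ ≤ L * ‖z - z'‖) (a b : F) :
    |g b - g a - (inner ℝ (gradient g a) (b - a) : ℝ)| ≤ (L * ‖b - a‖) * ‖b - a‖ := by
  have hfd : ∀ z, HasFDerivAt g (toDual ℝ F (gradient g z)) z :=
    fun z => (hg z).hasGradientAt.hasFDerivAt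
  have := (convex_closedBall a ‖b - a‖).norm_image_sub_le_of_norm_hasFDerivWithin_le'
    (f' := fun z => toDual ℝ F (gradient g z)) (φ := toDual ℝ F (gradient g a))
    (C := L * ‖b - a‖)
    (fun z _ => (hfd z).hasFDerivWithinAt)
    (fun z hz => by
      rw [← map_sub, LinearIsometryEquiv.norm_map]
      calc ‖gradient g z - gradient g a‖ ≤ L * ‖z - a‖ := hlip z a
        _ ≤ L * ‖b - a‖ :=
          mul_le_mul_of_nonneg_left (mem_closedBall_iff_norm.mp hz) hL)
    (Metric.mem_closedBall_self (norm_nonneg _))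
    (mem_closedBall_iff_norm.mpr le_rfl)
  rwa [toDual_apply_apply, Real.norm_eq_abs] at this

private lemma le_of_sq_le_sq' {a b : ℝ} (h : a ^ 2 ≤ b ^ 2) (ha : 0 ≤ a) (hb : 0 ≤ b) :
    a ≤ b := by nlinarith

/-- Under the same assumptions as Statement 0, if `y*` is a selection of
maximizers, then `Φ(x) = f(x, y*(x))` is differentiable with `∇Φ(x) = ∇_x f(x, y*(x))`,
and `∇Φ` is `(κ+1)ℓ`-Lipschitz where `κ = ℓ/μ`. -/
theorem zo_vrgda_stmt1 (d1 d2 : ℕ)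
    (f : EuclideanSpace ℝ (Fin d1) → EuclideanSpace ℝ (Fin d2) → ℝ)
    (ℓ μ : ℝ) (hμ : 0 < μ) (hμℓ : μ ≤ ℓ)
    (hdiff : Differentiable ℝ
      (fun p : EuclideanSpace ℝ (Fin d1) × EuclideanSpace ℝ (Fin d2) => f p.1 p.2))
    (hlip : ∀ x x' y y',
      ‖gradient (fun x'' => f x'' y) x - gradient (fun x'' => f x'' y') x'‖ ^ 2 +
          ‖gradient (f x) y - gradient (f x') y'‖ ^ 2 ≤
        ℓ ^ 2 * (‖x - x'‖ ^ 2 + ‖y - y'‖ ^ 2))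
    (hconc : ∀ x y y',
      f x y ≤ f x y' + (inner ℝ (gradient (f x) y') (y - y') : ℝ) - μ / 2 * ‖y - y'‖ ^ 2)
    (ystar : EuclideanSpace ℝ (Fin d1) → EuclideanSpace ℝ (Fin d2))
    (hystar : ∀ x, IsMaxOn (f x) Set.univ (ystar x)) :
    Differentiable ℝ (fun x => f x (ystar x)) ∧
      (∀ x, gradient (fun x' => f x' (ystar x')) x = gradient (fun x' => f x' (ystar x)) x) ∧
      ∀ x x',
        ‖gradient (fun x'' => f x'' (ystar x'')) x -
            gradient (fun x'' => f x'' (ystar x'')) x'‖ ≤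
          (ℓ / μ + 1) * ℓ * ‖x - x'‖ := by
  have hℓ : 0 < ℓ := hμ.trans_le hμℓ
  set gx : EuclideanSpace ℝ (Fin d1) → EuclideanSpace ℝ (Fin d2) → EuclideanSpace ℝ (Fin d1) :=
    fun x y => gradient (fun x'' => f x'' y) x with hgx_def
  set gy : EuclideanSpace ℝ (Fin d1) → EuclideanSpace ℝ (Fin d2) → EuclideanSpace ℝ (Fin d2) :=
    fun x y => gradient (f x) y with hgy_def
  -- differentiability of partial maps
  have hdx : ∀ y, Differentiable ℝ (fun x => f x y) := fun y =>
    hdiff.comp (differentiable_id.prodMk (differentiable_const y))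
  have hdy : ∀ x, Differentiable ℝ (f x) := fun x =>
    hdiff.comp ((differentiable_const x).prodMk differentiable_id)
  -- gradient in y vanishes at maximizer
  have hgy0 : ∀ x, gy x (ystar x) = 0 := by
    intro x
    have h1 : IsLocalMax (f x) (ystar x) := (hystar x).isLocalMax Filter.univ_mem
    have h2 := h1.fderiv_eq_zero
    simp only [hgy_def, gradient, h2, map_zero]
  -- consequences of hlip
  have hgx1 : ∀ x x' y, ‖gx x y - gx x' y‖ ≤ ℓ * ‖x - x'‖ := by
    intro x x' y
    have h := hlip x x' y y
    refine le_of_sq_le_sq' ?_ (norm_nonneg _) (by positivity)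
    have hn : (0:ℝ) ≤ ‖gy x y - gy x' y‖ ^ 2 := by positivity
    simp only [sub_self, norm_zero] at h
    nlinarith [h]
  have hgx2 : ∀ x y y', ‖gx x y - gx x y'‖ ≤ ℓ * ‖y - y'‖ := by
    intro x y y'
    have h := hlip x x y y'
    refine le_of_sq_le_sq' ?_ (norm_nonneg _) (by positivity)
    simp only [sub_self, norm_zero] at h
    nlinarith [h, sq_nonneg ‖gy x y - gy x y'‖]
  have hgy1 : ∀ x x' y, ‖gy x y - gy x' y‖ ≤ ℓ * ‖x - x'‖ := by
    intro x x' y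
    have h := hlip x x' y y
    refine le_of_sq_le_sq' ?_ (norm_nonneg _) (by positivity)
    simp only [sub_self, norm_zero] at h
    nlinarith [h, sq_nonneg ‖gx x y - gx x' y‖]
  -- ystar is (ℓ/μ)-Lipschitz
  have hyl : ∀ x x', ‖ystar x - ystar x'‖ ≤ ℓ / μ * ‖x - x'‖ := by
    intro x x'
    have h1 := hconc x (ystar x) (ystar x')
    have h2 := hconc x (ystar x') (ystar x)
    rw [show gradient (f x) (ystar x) = 0 from hgy0 x] at h2
    simp only [inner_zero_left] at h2
    have hmono : μ * ‖ystar x - ystar x'‖ ^ 2 ≤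
        (inner ℝ (gy x (ystar x')) (ystar x - ystar x') : ℝ) := by
      have hrev : ‖ystar x' - ystar x‖ = ‖ystar x - ystar x'‖ := norm_sub_rev _ _
      rw [hrev] at h2
      linarith [h1, h2]
    have hcs : (inner ℝ (gy x (ystar x')) (ystar x - ystar x') : ℝ) ≤
        ‖gy x (ystar x')‖ * ‖ystar x - ystar x'‖ := real_inner_le_norm _ _
    have hnorm : ‖gy x (ystar x')‖ ≤ ℓ * ‖x - x'‖ := by
      have := hgy1 x x' (ystar x')
      rwa [show gy x' (ystar x') = 0 from hgy0 x', sub_zero] at this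
    rcases eq_or_lt_of_le (norm_nonneg (ystar x - ystar x')) with h0 | h0
    · rw [← h0]; positivity
    · rw [div_mul_eq_mul_div, le_div_iff₀ hμ]
      have : μ * ‖ystar x - ystar x'‖ ^ 2 ≤ ℓ * ‖x - x'‖ * ‖ystar x - ystar x'‖ := by
        calc μ * ‖ystar x - ystar x'‖ ^ 2 ≤ _ := hmono
          _ ≤ ‖gy x (ystar x')‖ * ‖ystar x - ystar x'‖ := hcs
          _ ≤ ℓ * ‖x - x'‖ * ‖ystar x - ystar x'‖ :=
            mul_le_mul_of_nonneg_right hnorm (norm_nonneg _)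
      nlinarith [h0]
  have hquad : ∀ (y : EuclideanSpace ℝ (Fin d2)) (a b : EuclideanSpace ℝ (Fin d1)),
      |f b y - f a y - (inner ℝ (gx a y) (b - a) : ℝ)| ≤ (ℓ * ‖b - a‖) * ‖b - a‖ :=
    fun y a b => quad_bound (fun x => f x y) (hdx y) hℓ.le (fun z z' => hgx1 z z' y) a b
  have hCpos : (0:ℝ) < ℓ * (ℓ / μ) + ℓ := by positivity
  have hkey : ∀ x x',
      |f x' (ystar x') - f x (ystar x) - (inner ℝ (gx x (ystar x)) (x' - x) : ℝ)| ≤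
      (ℓ * (ℓ / μ) + ℓ) * ‖x' - x‖ ^ 2 := by
    intro x x'
    have hmax1 : f x' (ystar x) ≤ f x' (ystar x') := hystar x' (Set.mem_univ _)
    have hmax2 : f x (ystar x') ≤ f x (ystar x) := hystar x (Set.mem_univ _)
    have hq1 := hquad (ystar x') x x'
    have hq2 := hquad (ystar x) x x'
    have hinner : |(inner ℝ (gx x (ystar x')) (x' - x) : ℝ) -
        (inner ℝ (gx x (ystar x)) (x' - x) : ℝ)| ≤ ℓ * (ℓ / μ) * ‖x' - x‖ ^ 2 := by
      rw [← inner_sub_left]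
      calc |(inner ℝ (gx x (ystar x') - gx x (ystar x)) (x' - x) : ℝ)|
          ≤ ‖gx x (ystar x') - gx x (ystar x)‖ * ‖x' - x‖ := abs_real_inner_le_norm _ _
        _ ≤ (ℓ * (ℓ / μ * ‖x' - x‖)) * ‖x' - x‖ := by
            refine mul_le_mul_of_nonneg_right ?_ (norm_nonneg _)
            calc ‖gx x (ystar x') - gx x (ystar x)‖ ≤ ℓ * ‖ystar x' - ystar x‖ := hgx2 x _ _
              _ ≤ ℓ * (ℓ / μ * ‖x' - x‖) :=
                  mul_le_mul_of_nonneg_left (hyl x' x) hℓ.le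
        _ = ℓ * (ℓ / μ) * ‖x' - x‖ ^ 2 := by ring
    rw [abs_le] at hq1 hq2 hinner ⊢
    have hnn : (0:ℝ) ≤ ℓ * (ℓ / μ) * ‖x' - x‖ ^ 2 := by positivity
    constructor
    · linarith [hq2.1, hmax1, hnn]
    · linarith [hq1.2, hmax2, hinner.2]
  have hG : ∀ x, HasGradientAt (fun x' => f x' (ystar x')) (gx x (ystar x)) x := by
    intro x
    rw [hasGradientAt_iff_isLittleO, Asymptotics.isLittleO_iff]
    intro c hc
    have hb : Metric.ball x (c / (ℓ * (ℓ / μ) + ℓ)) ∈ nhds x :=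
      Metric.ball_mem_nhds x (by positivity)
    filter_upwards [hb] with x' hx'
    have hd : ‖x' - x‖ < c / (ℓ * (ℓ / μ) + ℓ) := by
      rwa [Metric.mem_ball, dist_eq_norm] at hx'
    have h := hkey x x'
    rw [Real.norm_eq_abs]
    calc |f x' (ystar x') - f x (ystar x) - (inner ℝ (gx x (ystar x)) (x' - x) : ℝ)|
        ≤ (ℓ * (ℓ / μ) + ℓ) * ‖x' - x‖ ^ 2 := h
      _ = ((ℓ * (ℓ / μ) + ℓ) * ‖x' - x‖) * ‖x' - x‖ := by ring
      _ ≤ c * ‖x' - x‖ := by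
          refine mul_le_mul_of_nonneg_right ?_ (norm_nonneg _)
          rw [← le_div_iff₀' hCpos]
          exact hd.le
  have hgradPhi : ∀ x, gradient (fun x' => f x' (ystar x')) x = gx x (ystar x) :=
    fun x => (hG x).gradient
  refine ⟨fun x => (hG x).differentiableAt, fun x => hgradPhi x, fun x x' => ?_⟩
  rw [hgradPhi x, hgradPhi x']
  have htri : ‖gx x (ystar x) - gx x' (ystar x')‖ ≤
      ‖gx x (ystar x) - gx x' (ystar x)‖ + ‖gx x' (ystar x) - gx x' (ystar x')‖ := by
    simpa [dist_eq_norm] using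
      dist_triangle (gx x (ystar x)) (gx x' (ystar x)) (gx x' (ystar x'))
  calc ‖gx x (ystar x) - gx x' (ystar x')‖
      ≤ ‖gx x (ystar x) - gx x' (ystar x)‖ + ‖gx x' (ystar x) - gx x' (ystar x')‖ := htri
    _ ≤ ℓ * ‖x - x'‖ + ℓ * ‖ystar x - ystar x'‖ := add_le_add (hgx1 x x' _) (hgx2 x' _ _)
    _ ≤ ℓ * ‖x - x'‖ + ℓ * (ℓ / μ * ‖x - x'‖) := by
        exact add_le_add_right (mul_le_mul_of_nonneg_left (hyl x x') hℓ.le) _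
    _ = (ℓ / μ + 1) * ℓ * ‖x - x'‖ := by ring
end

section
/- Let h : ℝ^d → ℝ have ℓ-Lipschitz gradient, and let τ > 0. Then for all x ∈ ℝ^d, |h(x) − h_τ(x)| ≤ (τ²/2) ℓ d, where h_τ(x) = E_ν[h(x + τν)] is the Gaussian smoothed function. -/
open MeasureTheory ProbabilityTheory
open Real
open scoped ENNReal NNReal RealInnerProductSpace

/-! ### Auxiliary scalar Gaussian facts -/

private lemma zo_exp_half_int : ∫ x : ℝ, rexp (-(1/2) * x ^ 2) = Real.sqrt (2 * π) := by
  rw [integral_gaussian]; norm_num [mul_comm]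

private lemma zo_int_x_exp : ∫ x : ℝ, x * rexp (-(1/2) * x ^ 2) = 0 := by
  have hd : ∀ x : ℝ, HasDerivAt (fun x : ℝ => -rexp (-(1/2) * x ^ 2))
      (x * rexp (-(1/2) * x ^ 2)) x := by
    intro x
    have h1 : HasDerivAt (fun x : ℝ => -(1/2) * x ^ 2) (-(1/2) * (2 * x)) x := by
      simpa using ((hasDerivAt_pow 2 x).const_mul (-(1/2) : ℝ))
    have := (h1.exp).neg
    convert this using 1
    · rfl
    · rfl
    · rfl
    ring
  exact integral_eq_zero_of_hasDerivAt_of_integrable hd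
    (integrable_mul_exp_neg_mul_sq (by norm_num))
    ((integrable_exp_neg_mul_sq (by norm_num : (0:ℝ) < 1/2)).neg)

private lemma zo_int_sq : Integrable (fun x : ℝ => x ^ 2 * rexp (-(1/2) * x ^ 2)) := by
  have := integrable_rpow_mul_exp_neg_mul_sq (b := 1/2) (by norm_num) (s := 2) (by norm_num)
  simpa [Real.rpow_natCast] using this

private lemma zo_int_x2_exp : ∫ x : ℝ, x ^ 2 * rexp (-(1/2) * x ^ 2) = Real.sqrt (2 * π) := by
  have hd : ∀ x : ℝ, HasDerivAt (fun x : ℝ => -(x * rexp (-(1/2) * x ^ 2)))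
      (x ^ 2 * rexp (-(1/2) * x ^ 2) - rexp (-(1/2) * x ^ 2)) x := by
    intro x
    have h1 : HasDerivAt (fun x : ℝ => -(1/2) * x ^ 2) (-(1/2) * (2 * x)) x := by
      simpa using ((hasDerivAt_pow 2 x).const_mul (-(1/2) : ℝ))
    have h2 := (hasDerivAt_id x).mul h1.exp
    have := h2.neg
    convert this using 1
    · rfl
    · rfl
    · rfl
    simp only [id]
    ring
  have hz := integral_eq_zero_of_hasDerivAt_of_integrable hd
    (by exact zo_int_sq.sub (integrable_exp_neg_mul_sq (by norm_num)))
    ((integrable_mul_exp_neg_mul_sq (by norm_num : (0:ℝ) < 1/2)).neg)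
  rw [integral_sub zo_int_sq (integrable_exp_neg_mul_sq (by norm_num)), zo_exp_half_int] at hz
  linarith

/-- The density of the standard real Gaussian. -/
noncomputable def zoPhi (x : ℝ) : ℝ := (Real.sqrt (2 * π))⁻¹ * rexp (-(1/2) * x ^ 2)

private lemma zo_pdf_eq : gaussianPDFReal 0 1 = zoPhi := by
  ext x
  unfold gaussianPDFReal zoPhi
  norm_num
  left
  ring

private lemma zo_gauss_eq :
    gaussianReal 0 1 = volume.withDensity (fun x => ENNReal.ofReal (zoPhi x)) := by
  rw [gaussianReal_of_var_ne_zero 0 one_ne_zero]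
  congr 1
  ext x
  rw [gaussianPDF, zo_pdf_eq]

private lemma zoPhi_meas : Measurable zoPhi := by unfold zoPhi; fun_prop

private lemma zoPhi_nonneg (x : ℝ) : 0 ≤ zoPhi x := by unfold zoPhi; positivity

private lemma zo_integrable_gauss_iff {g : ℝ → ℝ} :
    Integrable g (gaussianReal 0 1) ↔ Integrable (fun x => zoPhi x * g x) volume := by
  rw [zo_gauss_eq]
  have : (fun x => ENNReal.ofReal (zoPhi x)) = (fun x => ((zoPhi x).toNNReal : ℝ≥0∞)) := rfl
  rw [this, integrable_withDensity_iff_integrable_coe_smul (zoPhi_meas.real_toNNReal)]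
  simp only [NNReal.smul_def, smul_eq_mul]
  constructor <;> intro h <;> refine h.congr (Filter.Eventually.of_forall fun x => ?_) <;>
    simp [Real.coe_toNNReal _ (zoPhi_nonneg x)]

private lemma zo_integral_gauss (g : ℝ → ℝ) :
    ∫ x, g x ∂(gaussianReal 0 1) = ∫ x, zoPhi x * g x := by
  rw [zo_gauss_eq]
  have : (fun x => ENNReal.ofReal (zoPhi x)) = (fun x => ((zoPhi x).toNNReal : ℝ≥0∞)) := rfl
  rw [this, integral_withDensity_eq_integral_smul (zoPhi_meas.real_toNNReal)]
  congr 1; ext x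
  simp [NNReal.smul_def, Real.coe_toNNReal _ (zoPhi_nonneg x)]

private lemma zo_sqrt2pi_pos : 0 < Real.sqrt (2 * π) := Real.sqrt_pos.mpr (by positivity)

private lemma zo_m1_int : Integrable (fun x : ℝ => x) (gaussianReal 0 1) := by
  rw [zo_integrable_gauss_iff]
  unfold zoPhi
  exact ((integrable_mul_exp_neg_mul_sq (by norm_num : (0:ℝ) < 1/2)).const_mul
    ((Real.sqrt (2 * π))⁻¹)).congr (Filter.Eventually.of_forall fun x => by ring)

private lemma zo_m1 : ∫ x, x ∂(gaussianReal 0 1) = 0 := by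
  rw [zo_integral_gauss]
  unfold zoPhi
  have : (fun x : ℝ => (Real.sqrt (2 * π))⁻¹ * rexp (-(1/2) * x ^ 2) * x)
      = fun x : ℝ => (Real.sqrt (2 * π))⁻¹ * (x * rexp (-(1/2) * x ^ 2)) := by
    ext x; ring
  rw [this, integral_const_mul, zo_int_x_exp, mul_zero]

private lemma zo_m2_int : Integrable (fun x : ℝ => x ^ 2) (gaussianReal 0 1) := by
  rw [zo_integrable_gauss_iff]
  unfold zoPhi
  exact (zo_int_sq.const_mul ((Real.sqrt (2 * π))⁻¹)).congr
    (Filter.Eventually.of_forall fun x => by ring)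

private lemma zo_m2 : ∫ x, x ^ 2 ∂(gaussianReal 0 1) = 1 := by
  rw [zo_integral_gauss]
  unfold zoPhi
  have : (fun x : ℝ => (Real.sqrt (2 * π))⁻¹ * rexp (-(1/2) * x ^ 2) * x ^ 2)
      = fun x : ℝ => (Real.sqrt (2 * π))⁻¹ * (x ^ 2 * rexp (-(1/2) * x ^ 2)) := by
    ext x; ring
  rw [this, integral_const_mul, zo_int_x2_exp, inv_mul_cancel₀ zo_sqrt2pi_pos.ne']

/-! ### The product Gaussian measure -/

noncomputable def zoPiG (d : ℕ) : Measure (Fin d → ℝ) :=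
  Measure.pi fun _ : Fin d => gaussianReal 0 1

instance (d : ℕ) : IsProbabilityMeasure (zoPiG d) := by unfold zoPiG; infer_instance

private lemma zo_map_eval {d : ℕ} (i : Fin d) :
    (zoPiG d).map (fun y => y i) = gaussianReal 0 1 := by
  apply Measure.ext
  intro s hs
  rw [Measure.map_apply (measurable_pi_apply i) hs]
  have h1 : (fun y : Fin d → ℝ => y i) ⁻¹' s
      = Set.pi Set.univ (Function.update (fun _ : Fin d => Set.univ) i s) := by
    ext y
    simp only [Set.mem_preimage, Set.mem_pi, Set.mem_univ, forall_true_left]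
    constructor
    · intro hy j
      rcases eq_or_ne j i with rfl | hj
      · simpa using hy
      · simp [Function.update_of_ne hj]
    · intro hy
      simpa using hy i
  rw [h1, zoPiG, Measure.pi_pi]
  rw [Finset.prod_eq_single i (fun j _ hj => by simp [Function.update_of_ne hj]) (by simp)]
  simp

private lemma zo_integral_eval {d : ℕ} (i : Fin d) {g : ℝ → ℝ}
    (hg : AEStronglyMeasurable g (gaussianReal 0 1)) :
    ∫ y, g (y i) ∂(zoPiG d) = ∫ t, g t ∂(gaussianReal 0 1) := by
  rw [← zo_map_eval i, integral_map (measurable_pi_apply i).aemeasurable]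
  rw [zo_map_eval]; exact hg

private lemma zo_integrable_eval {d : ℕ} (i : Fin d) {g : ℝ → ℝ}
    (hg : AEStronglyMeasurable g (gaussianReal 0 1))
    (hint : Integrable g (gaussianReal 0 1)) : Integrable (fun y => g (y i)) (zoPiG d) := by
  have h2 : Integrable g ((zoPiG d).map (fun y => y i)) := by rw [zo_map_eval]; exact hint
  have h3 : AEStronglyMeasurable g ((zoPiG d).map (fun y => y i)) := by
    rw [zo_map_eval]; exact hg
  exact (integrable_map_measure h3 (measurable_pi_apply i).aemeasurable).mp h2

/-- The standard Gaussian measure `N(0, I_d)` on `ℝ^d`. -/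
noncomputable def stdGaussian (d : ℕ) : Measure (EuclideanSpace ℝ (Fin d)) :=
  (Measure.pi fun _ : Fin d => gaussianReal 0 1).map
    (EuclideanSpace.equiv (Fin d) ℝ).symm

private lemma zo_stdGaussian_eq {d : ℕ} :
    stdGaussian d = (zoPiG d).map (MeasurableEquiv.toLp 2 (Fin d → ℝ)) := rfl

private lemma zo_integral_std {d : ℕ} (F : EuclideanSpace ℝ (Fin d) → ℝ) :
    ∫ ν, F ν ∂(stdGaussian d)
      = ∫ y, F ((MeasurableEquiv.toLp 2 (Fin d → ℝ)) y) ∂(zoPiG d) := by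
  rw [zo_stdGaussian_eq, MeasureTheory.integral_map_equiv]

private lemma zo_integrable_std_iff {d : ℕ} (F : EuclideanSpace ℝ (Fin d) → ℝ) :
    Integrable F (stdGaussian d) ↔
      Integrable (fun y => F ((MeasurableEquiv.toLp 2 (Fin d → ℝ)) y)) (zoPiG d) := by
  rw [zo_stdGaussian_eq, integrable_map_equiv _]
  rfl

instance (d : ℕ) : IsProbabilityMeasure (stdGaussian d) := by
  rw [zo_stdGaussian_eq]
  exact Measure.isProbabilityMeasure_map (MeasurableEquiv.measurable _).aemeasurable

private lemma zo_esymm_apply {d : ℕ} (y : Fin d → ℝ) (i : Fin d) :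
    ((MeasurableEquiv.toLp 2 (Fin d → ℝ)) y) i = y i := rfl

private lemma zo_norm_sq_eq {d : ℕ} (ν : EuclideanSpace ℝ (Fin d)) :
    ‖ν‖ ^ 2 = ∑ i, (ν i) ^ 2 := by
  rw [EuclideanSpace.norm_eq, Real.sq_sqrt (by positivity)]
  simp [sq_abs]

private lemma zo_std_normsq_integrable {d : ℕ} :
    Integrable (fun ν : EuclideanSpace ℝ (Fin d) => ‖ν‖ ^ 2) (stdGaussian d) := by
  rw [zo_integrable_std_iff]
  have : (fun y : Fin d → ℝ => ‖(MeasurableEquiv.toLp 2 (Fin d → ℝ)) y‖ ^ 2)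
      = fun y => ∑ i, (y i) ^ 2 := by
    ext y
    rw [zo_norm_sq_eq]; rfl
  rw [this]
  exact integrable_finset_sum _ fun i _ =>
    zo_integrable_eval i (by fun_prop) zo_m2_int

private lemma zo_std_normsq_integral {d : ℕ} :
    ∫ ν, ‖ν‖ ^ 2 ∂(stdGaussian d) = (d : ℝ) := by
  rw [zo_integral_std]
  have : (fun y : Fin d → ℝ => ‖(MeasurableEquiv.toLp 2 (Fin d → ℝ)) y‖ ^ 2)
      = fun y => ∑ i, (y i) ^ 2 := by
    ext y
    rw [zo_norm_sq_eq]; rfl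
  rw [this, integral_finset_sum _ fun i _ => zo_integrable_eval i (by fun_prop) zo_m2_int]
  have : ∀ i : Fin d, ∫ y, (y i) ^ 2 ∂(zoPiG d) = 1 := fun i => by
    rw [zo_integral_eval (g := fun t => t ^ 2) i (by fun_prop), zo_m2]
  simp [this]

private lemma zo_std_norm_integrable {d : ℕ} :
    Integrable (fun ν : EuclideanSpace ℝ (Fin d) => ‖ν‖) (stdGaussian d) := by
  refine Integrable.mono' ((integrable_const (1:ℝ)).add zo_std_normsq_integrable)
    (by fun_prop) (Filter.Eventually.of_forall fun ν => ?_)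
  have h0 : (0:ℝ) ≤ ‖ν‖ := norm_nonneg _
  simp only [Pi.add_apply, Real.norm_eq_abs, abs_of_nonneg h0]
  rcases le_total ‖ν‖ 1 with hle | hle
  · nlinarith [sq_nonneg ‖ν‖]
  · nlinarith

private lemma zo_std_inner_integrable {d : ℕ} (g : EuclideanSpace ℝ (Fin d)) :
    Integrable (fun ν : EuclideanSpace ℝ (Fin d) => ⟪g, ν⟫) (stdGaussian d) := by
  rw [zo_integrable_std_iff]
  have : (fun y : Fin d → ℝ => ⟪g, (MeasurableEquiv.toLp 2 (Fin d → ℝ)) y⟫)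
      = fun y => ∑ i, g i * y i := by
    ext y
    rw [PiLp.inner_apply]
    simp [zo_esymm_apply, mul_comm]
  rw [this]
  exact integrable_finset_sum _ fun i _ =>
    zo_integrable_eval i (by fun_prop) (zo_m1_int.const_mul (g i))

private lemma zo_std_inner_integral {d : ℕ} (g : EuclideanSpace ℝ (Fin d)) :
    ∫ ν, ⟪g, ν⟫ ∂(stdGaussian d) = 0 := by
  rw [zo_integral_std]
  have : (fun y : Fin d → ℝ => ⟪g, (MeasurableEquiv.toLp 2 (Fin d → ℝ)) y⟫)
      = fun y => ∑ i, g i * y i := by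
    ext y
    rw [PiLp.inner_apply]
    simp [zo_esymm_apply, mul_comm]
  rw [this, integral_finset_sum _ fun i _ =>
    zo_integrable_eval i (by fun_prop) (zo_m1_int.const_mul (g i))]
  have : ∀ i : Fin d, ∫ y, g i * y i ∂(zoPiG d) = 0 := fun i => by
    rw [zo_integral_eval (g := fun t => g i * t) i (by fun_prop), integral_const_mul, zo_m1, mul_zero]
  simp [this]

/-! ### Taylor bound -/

private lemma zo_taylor_bound {d : ℕ} {h : EuclideanSpace ℝ (Fin d) → ℝ} {ℓ : ℝ}
    (hdiff : Differentiable ℝ h)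
    (hlip : ∀ x x', ‖gradient h x - gradient h x'‖ ≤ ℓ * ‖x - x'‖) (hℓ : 0 ≤ ℓ)
    (x u : EuclideanSpace ℝ (Fin d)) :
    |h (x + u) - h x - ⟪gradient h x, u⟫| ≤ ℓ / 2 * ‖u‖ ^ 2 := by
  have grad_cont : Continuous (gradient h) := by
    refine (LipschitzWith.of_dist_le_mul (K := ⟨ℓ, hℓ⟩) fun a b => ?_).continuous
    rw [dist_eq_norm, dist_eq_norm]
    exact hlip a b
  set φ' : ℝ → ℝ := fun t => ⟪gradient h (x + t • u), u⟫ with hφ'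
  have hφcont : Continuous φ' := by
    apply Continuous.inner
    · exact grad_cont.comp (by continuity)
    · exact continuous_const
  have hφderiv : ∀ t : ℝ, HasDerivAt (fun s : ℝ => h (x + s • u)) (φ' t) t := by
    intro t
    have h1 : HasDerivAt (fun s : ℝ => x + s • u) u t := by
      simpa using ((hasDerivAt_id t).smul_const u).const_add x
    have h2 : HasFDerivAt h
        ((InnerProductSpace.toDual ℝ _) (gradient h (x + t • u))) (x + t • u) :=
      (hasGradientAt_iff_hasFDerivAt).mp (hdiff _).hasGradientAt
    have h3 := h2.comp_hasDerivAt t h1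
    rw [InnerProductSpace.toDual_apply_apply] at h3
    exact h3
  have hFTC : h (x + u) - h x = ∫ t in (0:ℝ)..1, φ' t := by
    have := intervalIntegral.integral_eq_sub_of_hasDerivAt
      (f := fun s : ℝ => h (x + s • u)) (f' := φ')
      (fun t _ => hφderiv t) (hφcont.intervalIntegrable 0 1)
    rw [this]; simp
  have key : h (x + u) - h x - ⟪gradient h x, u⟫
      = ∫ t in (0:ℝ)..1, (φ' t - ⟪gradient h x, u⟫) := by
    rw [intervalIntegral.integral_sub (hφcont.intervalIntegrable 0 1)
      (intervalIntegrable_const), hFTC]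
    simp
  rw [key]
  have bound : ∀ t ∈ Set.Icc (0:ℝ) 1, |φ' t - ⟪gradient h x, u⟫| ≤ ℓ * ‖u‖ ^ 2 * t := by
    intro t ht
    have : φ' t - ⟪gradient h x, u⟫ = ⟪gradient h (x + t • u) - gradient h x, u⟫ := by
      rw [inner_sub_left]
    rw [this]
    calc |⟪gradient h (x + t • u) - gradient h x, u⟫|
        ≤ ‖gradient h (x + t • u) - gradient h x‖ * ‖u‖ := abs_real_inner_le_norm _ _
      _ ≤ (ℓ * ‖(x + t • u) - x‖) * ‖u‖ := by
          apply mul_le_mul_of_nonneg_right (hlip _ _) (norm_nonneg _)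
      _ = ℓ * ‖u‖ ^ 2 * t := by
          simp only [add_sub_cancel_left, norm_smul, Real.norm_eq_abs,
            abs_of_nonneg ht.1]
          ring
  calc |∫ t in (0:ℝ)..1, (φ' t - ⟪gradient h x, u⟫)|
      ≤ ∫ t in (0:ℝ)..1, |φ' t - ⟪gradient h x, u⟫| :=
        intervalIntegral.abs_integral_le_integral_abs zero_le_one
    _ ≤ ∫ t in (0:ℝ)..1, ℓ * ‖u‖ ^ 2 * t := by
        apply intervalIntegral.integral_mono_on zero_le_one
        · exact ((hφcont.sub continuous_const).abs).intervalIntegrable 0 1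
        · exact (continuous_const.mul continuous_id).intervalIntegrable 0 1
        · exact bound
    _ = ℓ / 2 * ‖u‖ ^ 2 := by
        rw [intervalIntegral.integral_const_mul, integral_id]
        ring

/-- If `h : ℝ^d → ℝ` has `ℓ`-Lipschitz gradient and `τ > 0`, then for all `x`,
`|h(x) − h_τ(x)| ≤ (τ²/2) ℓ d`, where `h_τ(x) = E_ν[h(x + τν)]`. -/
theorem zo_vrgda_stmt4 (d : ℕ) (h : EuclideanSpace ℝ (Fin d) → ℝ) (ℓ τ : ℝ) (hτ : 0 < τ)
    (hdiff : Differentiable ℝ h)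
    (hlip : ∀ x x', ‖gradient h x - gradient h x'‖ ≤ ℓ * ‖x - x'‖) :
    ∀ x, |h x - ∫ ν, h (x + τ • ν) ∂(stdGaussian d)| ≤ τ ^ 2 / 2 * ℓ * d := by
  intro x
  rcases Nat.eq_zero_or_pos d with rfl | hd
  · have hsub : ∀ ν : EuclideanSpace ℝ (Fin 0), x + τ • ν = x := fun ν => by
      apply Subsingleton.elim
    simp only [hsub, integral_const, measure_univ, ENNReal.toReal_one, one_smul]
    simp
  · have hℓ : 0 ≤ ℓ := by
      have hu : ‖EuclideanSpace.single (⟨0, hd⟩ : Fin d) (1:ℝ) - 0‖ = 1 := by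
        simp [EuclideanSpace.norm_single]
      have := (norm_nonneg
        (gradient h (EuclideanSpace.single (⟨0, hd⟩ : Fin d) (1:ℝ)) - gradient h 0)).trans
        (hlip (EuclideanSpace.single (⟨0, hd⟩ : Fin d) (1:ℝ)) 0)
      rwa [hu, mul_one] at this
    set g := gradient h x with hg
    -- pointwise bound
    have hTay : ∀ ν : EuclideanSpace ℝ (Fin d),
        |h (x + τ • ν) - h x - ⟪g, τ • ν⟫| ≤ ℓ / 2 * (τ ^ 2 * ‖ν‖ ^ 2) := by
      intro ν
      have := zo_taylor_bound hdiff hlip hℓ x (τ • ν)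
      have hns : ‖τ • ν‖ ^ 2 = τ ^ 2 * ‖ν‖ ^ 2 := by
        rw [norm_smul, mul_pow, Real.norm_eq_abs, sq_abs]
      rwa [hns] at this
    -- integrability of h (x + τ • ν)
    have hmeas : AEStronglyMeasurable (fun ν : EuclideanSpace ℝ (Fin d) => h (x + τ • ν))
        (stdGaussian d) := by
      apply Continuous.aestronglyMeasurable
      exact hdiff.continuous.comp (continuous_const.add (continuous_id.const_smul τ))
    have hbound_int : Integrable
        (fun ν : EuclideanSpace ℝ (Fin d) =>
          |h x| + ‖g‖ * (τ * ‖ν‖) + ℓ / 2 * (τ ^ 2 * ‖ν‖ ^ 2)) (stdGaussian d) := by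
      refine Integrable.add (Integrable.add (integrable_const _) ?_) ?_
      · have := zo_std_norm_integrable (d := d)
        exact ((this.const_mul τ).const_mul ‖g‖).congr
          (Filter.Eventually.of_forall fun ν => by ring)
      · have := zo_std_normsq_integrable (d := d)
        exact ((this.const_mul (τ ^ 2)).const_mul (ℓ / 2)).congr
          (Filter.Eventually.of_forall fun ν => by ring)
    have hint : Integrable (fun ν : EuclideanSpace ℝ (Fin d) => h (x + τ • ν))
        (stdGaussian d) := by
      refine Integrable.mono' hbound_int hmeas (Filter.Eventually.of_forall fun ν => ?_)
      have h1 := hTay ν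
      have h2 : |⟪g, τ • ν⟫| ≤ ‖g‖ * (τ * ‖ν‖) := by
        calc |⟪g, τ • ν⟫| ≤ ‖g‖ * ‖τ • ν‖ := abs_real_inner_le_norm _ _
          _ = ‖g‖ * (τ * ‖ν‖) := by rw [norm_smul, Real.norm_eq_abs, abs_of_pos hτ]
      rw [Real.norm_eq_abs]
      have := abs_abs (h (x + τ • ν))
      calc |h (x + τ • ν)|
          = |h x + ⟪g, τ • ν⟫ + (h (x + τ • ν) - h x - ⟪g, τ • ν⟫)| := by ring_nf
        _ ≤ |h x| + |⟪g, τ • ν⟫| + |h (x + τ • ν) - h x - ⟪g, τ • ν⟫| :=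
            (abs_add_le _ _).trans (by gcongr; exact abs_add_le _ _)
        _ ≤ |h x| + ‖g‖ * (τ * ‖ν‖) + ℓ / 2 * (τ ^ 2 * ‖ν‖ ^ 2) := by gcongr
    -- integrability of the inner product
    have hinner_int : Integrable (fun ν : EuclideanSpace ℝ (Fin d) => ⟪g, τ • ν⟫)
        (stdGaussian d) := by
      have := (zo_std_inner_integrable (d := d) g).const_mul τ
      exact this.congr (Filter.Eventually.of_forall fun ν =>
        (real_inner_smul_right g ν τ).symm)
    have hinner_zero : ∫ ν, ⟪g, τ • ν⟫ ∂(stdGaussian d) = 0 := by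
      have : (fun ν : EuclideanSpace ℝ (Fin d) => ⟪g, τ • ν⟫)
          = fun ν => τ * ⟪g, ν⟫ := by
        ext ν; rw [real_inner_smul_right]
      rw [this, integral_const_mul, zo_std_inner_integral, mul_zero]
    -- rewrite the difference as an integral
    have hconst : ∫ _ν, h x ∂(stdGaussian d) = h x := by
      simp
    have hsum_int : Integrable (fun ν : EuclideanSpace ℝ (Fin d) => h x + ⟪g, τ • ν⟫)
        (stdGaussian d) := (integrable_const _).add hinner_int
    have hdiffeq : h x - ∫ ν, h (x + τ • ν) ∂(stdGaussian d)
        = ∫ ν, (h x + ⟪g, τ • ν⟫ - h (x + τ • ν)) ∂(stdGaussian d) := by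
      rw [integral_sub hsum_int hint,
        integral_add (integrable_const (h x)) hinner_int, hconst, hinner_zero]
      ring
    rw [hdiffeq]
    have habs : |∫ ν, (h x + ⟪g, τ • ν⟫ - h (x + τ • ν)) ∂(stdGaussian d)|
        ≤ ∫ ν, |h x + ⟪g, τ • ν⟫ - h (x + τ • ν)| ∂(stdGaussian d) := by
      rw [← Real.norm_eq_abs]
      refine (norm_integral_le_integral_norm _).trans (le_of_eq ?_)
      simp [Real.norm_eq_abs]
    refine habs.trans ?_
    have hmono : ∫ ν, |h x + ⟪g, τ • ν⟫ - h (x + τ • ν)| ∂(stdGaussian d)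
        ≤ ∫ ν, ℓ / 2 * (τ ^ 2 * ‖ν‖ ^ 2) ∂(stdGaussian d) := by
      apply integral_mono
      · exact (((integrable_const (h x)).add hinner_int).sub hint).abs
      · exact ((zo_std_normsq_integrable (d := d)).const_mul (τ ^ 2)).const_mul (ℓ / 2) |>.congr
          (Filter.Eventually.of_forall fun ν => by ring)
      · intro ν
        have := hTay ν
        calc |h x + ⟪g, τ • ν⟫ - h (x + τ • ν)|
            = |h (x + τ • ν) - h x - ⟪g, τ • ν⟫| := by rw [abs_sub_comm]; ring_nf
          _ ≤ ℓ / 2 * (τ ^ 2 * ‖ν‖ ^ 2) := this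
    refine hmono.trans ?_
    have : ∫ ν, ℓ / 2 * (τ ^ 2 * ‖ν‖ ^ 2) ∂(stdGaussian d)
        = ℓ / 2 * (τ ^ 2 * d) := by
      rw [integral_const_mul]
      congr 1
      rw [integral_const_mul, zo_std_normsq_integral]
    rw [this]
    ring_nf
    apply le_of_eq
    ring
end

section
/- Let h : ℝ^d → ℝ have ℓ-Lipschitz gradient, and let τ > 0. Then for all x ∈ ℝ^d, the gradient of the Gaussian smoothed function h_τ(x) = E_ν[h(x + τν)] admits the representation ∇h_τ(x) = E_ν[ ((h(x + τν) − h(x))/τ) ν ], where ν is a standard Gaussian random vector on ℝ^d; in particular the single-point zeroth-order estimator ((h(x + τν) − h(x))/τ) ν is an unbiased estimator of ∇h_τ(x). -/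
open MeasureTheory ProbabilityTheory

namespace ZOProof
open Real Filter Set InnerProductSpace
open scoped NNReal ENNReal Topology


noncomputable def φ : ℝ → ℝ := gaussianPDFReal 0 1

lemma φ_def (t : ℝ) : φ t = (√(2*π))⁻¹ * rexp (-(t^2)/2) := by
  simp [φ, gaussianPDFReal]

lemma φ_nonneg (t : ℝ) : 0 ≤ φ t := gaussianPDFReal_nonneg 0 1 t

lemma φ_cont : Continuous φ := by
  simp only [funext φ_def]
  fun_prop

lemma hasDerivAt_φ (t : ℝ) : HasDerivAt φ (-t * φ t) t := by
  have h1 : HasDerivAt (fun t : ℝ => -(t^2)/2) (-t) t := by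
    have := ((hasDerivAt_pow 2 t).neg).div_const 2
    simpa using this.congr_deriv (by ring)
  have h2 := (h1.exp).const_mul (√(2*π))⁻¹
  have : (fun t : ℝ => (√(2*π))⁻¹ * rexp (-(t^2)/2)) = φ := by
    ext t; rw [φ_def]
  rw [this] at h2
  exact h2.congr_deriv (by rw [φ_def]; ring)

lemma gaussian_eq_withDensity :
    gaussianReal 0 1 = volume.withDensity (fun t => ENNReal.ofReal (φ t)) := by
  rw [gaussianReal_of_var_ne_zero 0 one_ne_zero]; rfl

lemma integral_gaussian_eq (f : ℝ → ℝ) :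
    ∫ t, f t ∂(gaussianReal 0 1) = ∫ t, φ t * f t := by
  rw [gaussian_eq_withDensity]
  have : (fun t => ENNReal.ofReal (φ t)) = (fun t => ((Real.toNNReal (φ t) : ℝ≥0) : ℝ≥0∞)) := rfl
  rw [this, integral_withDensity_eq_integral_smul]
  · congr 1; ext t
    simp [NNReal.smul_def, Real.coe_toNNReal _ (φ_nonneg t)]
  · exact (measurable_real_toNNReal.comp φ_cont.measurable)

lemma integrable_gaussian_iff {f : ℝ → ℝ} :
    Integrable f (gaussianReal 0 1) ↔ Integrable (fun t => f t * φ t) := by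
  rw [gaussian_eq_withDensity, integrable_withDensity_iff]
  · simp_rw [ENNReal.toReal_ofReal (φ_nonneg _)]
  · exact ENNReal.measurable_ofReal.comp φ_cont.measurable
  · exact ae_of_all _ fun x => ENNReal.ofReal_lt_top

lemma integrable_exp_mul (c : ℝ) : Integrable (fun t => rexp (c*t)) (gaussianReal 0 1) := by
  rw [integrable_gaussian_iff]
  have : (fun t => rexp (c*t) * φ t)
      = fun t => ((√(2*π))⁻¹ * rexp (c^2/2)) * rexp (-(1/2) * (t - c)^2) := by
    ext t
    rw [φ_def, show rexp (c*t) * ((√(2*π))⁻¹ * rexp (-(t^2)/2))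
      = (√(2*π))⁻¹ * rexp (c*t + -(t^2)/2) by rw [Real.exp_add]; ring,
      mul_assoc, ← Real.exp_add]
    congr 1
    ring_nf
  rw [this]
  exact ((integrable_exp_neg_mul_sq (by norm_num : (0:ℝ) < 1/2)).comp_sub_right c).const_mul _

lemma integrable_exp_abs (c : ℝ) : Integrable (fun t => rexp (c*|t|)) (gaussianReal 0 1) := by
  refine (((integrable_exp_mul c).add (integrable_exp_mul (-c))).mono'
    ((Real.continuous_exp.comp (continuous_const.mul continuous_abs)).aestronglyMeasurable) (ae_of_all _ fun t => ?_))
  rw [Real.norm_eq_abs, abs_of_nonneg (Real.exp_nonneg _)]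
  rcases abs_cases t with ⟨h1, _⟩ | ⟨h1, _⟩ <;> rw [h1]
  · exact le_add_of_nonneg_right (Real.exp_nonneg _)
  · rw [show c * -t = -c * t by ring]; exact le_add_of_nonneg_left (Real.exp_nonneg _)

lemma pow_le_exp (u : ℝ) (hu : 0 ≤ u) (n : ℕ) : u ^ n ≤ n.factorial * rexp u := by
  have h := Real.sum_le_exp_of_nonneg hu (n+1)
  have h2 : u ^ n / n.factorial ≤ ∑ i ∈ Finset.range (n+1), u ^ i / i.factorial :=
    Finset.single_le_sum (f := fun i => u ^ i / (i.factorial : ℝ))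
      (fun i _ => by positivity) (Finset.self_mem_range_succ n)
  have hfac : (0:ℝ) < n.factorial := by exact_mod_cast n.factorial_pos
  rw [div_le_iff₀ hfac] at h2
  calc u^n ≤ rexp u * n.factorial := h2.trans (by gcongr)
  _ = _ := by ring


lemma integrable_of_le_exp {E : Type*} [NormedAddCommGroup E] {f : ℝ → E}
    (hm : AEStronglyMeasurable f (gaussianReal 0 1)) (a c : ℝ)
    (h : ∀ t, ‖f t‖ ≤ a * rexp (c * |t|)) : Integrable f (gaussianReal 0 1) :=
  ((integrable_exp_abs c).const_mul a).mono' hm (ae_of_all _ h)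

lemma poly3_le_exp (A B C D u : ℝ) (hu : 0 ≤ u) :
    A + B*u + C*u^2 + D*u^3 ≤ (|A| + |B| + 2*|C| + 6*|D|) * rexp u := by
  have e1 : u ≤ rexp u := by simpa using pow_le_exp u hu 1
  have e2 : u^2 ≤ 2 * rexp u := by simpa [Nat.factorial] using pow_le_exp u hu 2
  have e3 : u^3 ≤ 6 * rexp u := by
    have := pow_le_exp u hu 3
    norm_num [Nat.factorial] at this
    linarith
  have e0 : 1 ≤ rexp u := Real.one_le_exp hu
  have hA : A ≤ |A| * rexp u := (le_abs_self A).trans (le_mul_of_one_le_right (abs_nonneg A) e0)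
  have hB : B * u ≤ |B| * rexp u := by
    calc B * u ≤ |B| * u := mul_le_mul_of_nonneg_right (le_abs_self B) hu
    _ ≤ |B| * rexp u := mul_le_mul_of_nonneg_left e1 (abs_nonneg B)
  have hC : C * u^2 ≤ |C| * (2 * rexp u) := by
    calc C * u^2 ≤ |C| * u^2 := mul_le_mul_of_nonneg_right (le_abs_self C) (sq_nonneg u)
    _ ≤ _ := mul_le_mul_of_nonneg_left e2 (abs_nonneg C)
  have hD : D * u^3 ≤ |D| * (6 * rexp u) := by
    calc D * u^3 ≤ |D| * u^3 := mul_le_mul_of_nonneg_right (le_abs_self D) (by positivity)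
    _ ≤ _ := mul_le_mul_of_nonneg_left e3 (abs_nonneg D)
  nlinarith

lemma integrable_gaussian_poly {E : Type*} [NormedAddCommGroup E] {f : ℝ → E}
    (hm : AEStronglyMeasurable f (gaussianReal 0 1)) (A B C D : ℝ)
    (h : ∀ t, ‖f t‖ ≤ A + B*|t| + C*|t|^2 + D*|t|^3) : Integrable f (gaussianReal 0 1) :=
  integrable_of_le_exp hm (|A| + |B| + 2*|C| + 6*|D|) 1 fun t => by
    simpa using (h t).trans (poly3_le_exp A B C D |t| (abs_nonneg t))

lemma tendsto_bound {c : ℝ} {F : ℝ → ℝ}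
    (hF : ∀ t : ℝ, 1 ≤ |t| → |F t| ≤ c * (t^2 * rexp (-(t^2)/2))) :
    Tendsto F atTop (𝓝 0) ∧ Tendsto F atBot (𝓝 0) := by
  have key : ∀ t : ℝ, 1 ≤ |t| → |F t| ≤ (2 * |c| * rexp 1) * rexp (-(t^2)/4) := by
    intro t ht
    have h1 : t^2 ≤ 2 * rexp |t| := by
      have := pow_le_exp |t| (abs_nonneg t) 2
      norm_num [Nat.factorial, sq_abs] at this
      try linarith
    have h2 : |t| + -(t^2)/2 ≤ 1 + -(t^2)/4 := by nlinarith [sq_abs t, sq_nonneg (|t| - 2)]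
    calc |F t| ≤ c * (t^2 * rexp (-(t^2)/2)) := hF t ht
    _ ≤ |c| * (t^2 * rexp (-(t^2)/2)) :=
        mul_le_mul_of_nonneg_right (le_abs_self c) (by positivity)
    _ ≤ |c| * ((2 * rexp |t|) * rexp (-(t^2)/2)) := by
        gcongr
    _ = 2 * |c| * rexp (|t| + -(t^2)/2) := by rw [Real.exp_add]; ring
    _ ≤ 2 * |c| * rexp (1 + -(t^2)/4) := by
        gcongr
        try exact Real.exp_le_exp.2 h2
    _ = _ := by rw [Real.exp_add]; ring
  have hG : Tendsto (fun t : ℝ => (2 * |c| * rexp 1) * rexp (-(t^2)/4)) atTop (𝓝 0)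
      ∧ Tendsto (fun t : ℝ => (2 * |c| * rexp 1) * rexp (-(t^2)/4)) atBot (𝓝 0) := by
    have hsq_top : Tendsto (fun t : ℝ => -(t^2)/4) atTop atBot := by
      simp_rw [neg_div]
      exact tendsto_neg_atBot_iff.mpr ((tendsto_pow_atTop two_ne_zero).atTop_div_const
        (by norm_num))
    have hsq_bot : Tendsto (fun t : ℝ => -(t^2)/4) atBot atBot := by
      simp_rw [neg_div]
      refine tendsto_neg_atBot_iff.mpr ?_
      have : Tendsto (fun t : ℝ => t^2) atBot atTop := by
        simpa [Function.comp_def, sq_abs] using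
          ((tendsto_pow_atTop two_ne_zero).comp tendsto_abs_atBot_atTop :
            Tendsto ((fun x : ℝ => x^2) ∘ abs) atBot atTop)
      exact this.atTop_div_const (by norm_num)
    constructor
    · simpa using (Real.tendsto_exp_atBot.comp hsq_top).const_mul (2 * |c| * rexp 1)
    · simpa using (Real.tendsto_exp_atBot.comp hsq_bot).const_mul (2 * |c| * rexp 1)
  constructor
  · refine squeeze_zero_norm' ?_ hG.1
    filter_upwards [eventually_ge_atTop (1:ℝ)] with t ht
    exact key t (by rw [abs_of_nonneg (by linarith)]; linarith)
  · refine squeeze_zero_norm' ?_ hG.2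
    filter_upwards [eventually_le_atBot (-1:ℝ)] with t ht
    exact key t (by rw [abs_of_nonpos (by linarith)]; linarith)

lemma stein {f f' : ℝ → ℝ} (hd : ∀ t, HasDerivAt f (f' t) t) (hc : Continuous f')
    {a b : ℝ} (hg : ∀ t, |f' t| ≤ a + b * |t|) :
    (∫ t, f' t ∂(gaussianReal 0 1) = ∫ t, t * f t ∂(gaussianReal 0 1))
    ∧ Integrable f' (gaussianReal 0 1)
    ∧ Integrable (fun t => t * f t) (gaussianReal 0 1) := by
  have hg' : ∀ t, |f' t| ≤ |a| + |b| * |t| := fun t => (hg t).trans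
    (add_le_add (le_abs_self a) (mul_le_mul_of_nonneg_right (le_abs_self b) (abs_nonneg t)))
  have hcf : Continuous f := by
    rw [continuous_iff_continuousAt]; exact fun t => (hd t).differentiableAt.continuousAt
  have hfg : ∀ t, |f t| ≤ |f 0| + (|a| + |b| * |t|) * |t| := by
    intro t
    have hmem0 : (0:ℝ) ∈ Icc (-|t|) |t| := ⟨neg_nonpos.2 (abs_nonneg t), abs_nonneg t⟩
    have hmemt : t ∈ Icc (-|t|) |t| := ⟨neg_abs_le t, le_abs_self t⟩
    have := Convex.norm_image_sub_le_of_norm_hasDerivWithin_le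
      (f := f) (f' := f') (C := |a| + |b| * |t|) (s := Icc (-|t|) (|t|))
      (fun z _ => (hd z).hasDerivWithinAt)
      (fun z hz => by
        have : |z| ≤ |t| := abs_le.2 ⟨hz.1, hz.2⟩
        refine (hg' z).trans ?_
        have : |b| * |z| ≤ |b| * |t| := mul_le_mul_of_nonneg_left this (abs_nonneg b)
        linarith)
      (convex_Icc _ _) hmem0 hmemt
    have h2 : |f t - f 0| ≤ (|a| + |b| * |t|) * |t| := by simpa using this
    calc |f t| = |f 0 + (f t - f 0)| := by ring_nf
    _ ≤ |f 0| + |f t - f 0| := abs_add_le _ _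
    _ ≤ _ := by linarith
  -- integrability
  have I1 : Integrable f' (gaussianReal 0 1) :=
    integrable_gaussian_poly hc.aestronglyMeasurable |a| |b| 0 0 (fun t => by
      simpa using hg' t)
  have I2 : Integrable (fun t => t * f t) (gaussianReal 0 1) := by
    refine integrable_gaussian_poly ((continuous_id.mul hcf).aestronglyMeasurable)
      0 (|f 0|) |a| |b| (fun t => ?_)
    have := hfg t
    have habs : |t * f t| = |t| * |f t| := abs_mul t (f t)
    rw [Real.norm_eq_abs, habs]
    nlinarith [abs_nonneg t, abs_nonneg (f t), sq_nonneg t, abs_nonneg b, abs_nonneg a]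
  have J1 : Integrable (fun t => f' t * φ t) (volume : Measure ℝ) :=
    integrable_gaussian_iff.1 I1
  have J2 : Integrable (fun t => (t * f t) * φ t) (volume : Measure ℝ) :=
    integrable_gaussian_iff.1 I2
  have JF : Integrable (fun t => (f' t - t * f t) * φ t) (volume : Measure ℝ) := by
    refine (J1.sub J2).congr (ae_of_all _ fun t => ?_)
    show _ = _
    simp [sub_mul]
  set F := fun t => f t * φ t with hFdef
  have hF : ∀ t, HasDerivAt F ((f' t - t * f t) * φ t) t := fun t =>
    ((hd t).mul (hasDerivAt_φ t)).congr_deriv (by ring)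
  have hFcont : Continuous F := hcf.mul φ_cont
  -- limits
  have hbound : ∀ t : ℝ, 1 ≤ |t| →
      |F t| ≤ (|f 0| + |a| + |b|) * (t^2 * rexp (-(t^2)/2)) := by
    intro t ht
    have h1 : |F t| = |f t| * φ t := by
      rw [hFdef]; simp [abs_mul, abs_of_nonneg (φ_nonneg t)]
    have h2 : φ t ≤ rexp (-(t^2)/2) := by
      rw [φ_def]
      have h3 : (1:ℝ) ≤ √(2*π) := by
        rw [show (1:ℝ) = √1 by simp]
        exact Real.sqrt_le_sqrt (by nlinarith [Real.pi_gt_three])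
      nlinarith [Real.exp_pos (-(t^2)/2), inv_le_one_of_one_le₀ h3,
        Real.exp_nonneg (-(t^2)/2), inv_nonneg.2 (le_trans zero_le_one h3)]
    have h4 : |f t| ≤ (|f 0| + |a| + |b|) * t^2 := by
      have := hfg t
      have ht2 : |t| ≤ t^2 := by nlinarith [sq_abs t, abs_nonneg t]
      nlinarith [abs_nonneg (f 0), abs_nonneg a, abs_nonneg b, sq_abs t, abs_nonneg t,
        sq_nonneg t]
    calc |F t| = |f t| * φ t := h1
    _ ≤ ((|f 0| + |a| + |b|) * t^2) * rexp (-(t^2)/2) := by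
        apply mul_le_mul h4 h2 (φ_nonneg t)
        positivity
    _ = _ := by ring
  obtain ⟨htop, hbot⟩ := tendsto_bound hbound
  -- FTC on the two half lines
  have hIoi : ∫ t in Ioi (0:ℝ), (f' t - t * f t) * φ t = 0 - F 0 :=
    integral_Ioi_of_hasDerivAt_of_tendsto hFcont.continuousWithinAt
      (fun t _ => hF t) JF.integrableOn htop
  have hIic : ∫ t in Iic (0:ℝ), (f' t - t * f t) * φ t = F 0 - 0 :=
    integral_Iic_of_hasDerivAt_of_tendsto hFcont.continuousWithinAt
      (fun t _ => hF t) JF.integrableOn hbot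
  have htotal : ∫ t, (f' t - t * f t) * φ t = 0 := by
    rw [← intervalIntegral.integral_Iic_add_Ioi JF.integrableOn JF.integrableOn, hIoi, hIic]; ring
  have hsplit : ∫ t, (f' t - t * f t) * φ t
      = (∫ t, f' t * φ t) - ∫ t, (t * f t) * φ t := by
    simp_rw [sub_mul]
    exact integral_sub J1 J2
  refine ⟨?_, I1, I2⟩
  rw [integral_gaussian_eq, integral_gaussian_eq]
  have := htotal
  rw [hsplit] at this
  simp_rw [mul_comm (φ _)]
  linarith



variable {d : ℕ}

/-- The transfer equivalence. -/
noncomputable def me (d : ℕ) : (Fin d → ℝ) ≃ᵐ EuclideanSpace ℝ (Fin d) :=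
  MeasurableEquiv.toLp 2 (Fin d → ℝ)

lemma me_continuous : Continuous (me d) :=
  (EuclideanSpace.equiv (Fin d) ℝ).symm.continuous

lemma me_apply_coord (v : Fin d → ℝ) (i : Fin d) : (me d v) i = v i := rfl

lemma stdGaussian_eq :
    stdGaussian d = (Measure.pi fun _ : Fin d => gaussianReal 0 1).map (me d) := rfl

lemma integral_stdGaussian {E : Type*} [NormedAddCommGroup E] [NormedSpace ℝ E]
    (f : EuclideanSpace ℝ (Fin d) → E) :
    ∫ ν, f ν ∂(stdGaussian d) = ∫ v, f (me d v) ∂(Measure.pi fun _ : Fin d => gaussianReal 0 1) := by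
  rw [stdGaussian_eq, integral_map_equiv]

lemma integrable_stdGaussian_iff {E : Type*} [NormedAddCommGroup E]
    (f : EuclideanSpace ℝ (Fin d) → E) :
    Integrable f (stdGaussian d) ↔
      Integrable (fun v => f (me d v)) (Measure.pi fun _ : Fin d => gaussianReal 0 1) := by
  rw [stdGaussian_eq]
  exact integrable_map_equiv (me d) f

instance : IsProbabilityMeasure (stdGaussian d) := by
  rw [stdGaussian_eq]
  exact Measure.isProbabilityMeasure_map (me d).measurable.aemeasurable

lemma norm_me_le (v : Fin d → ℝ) : ‖me d v‖ ≤ ∑ i, |v i| := by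
  rw [EuclideanSpace.norm_eq]
  have h1 : ∑ i, ‖(me d v) i‖^2 ≤ (∑ i, |v i|)^2 := by
    simp_rw [me_apply_coord, Real.norm_eq_abs]
    have : ∀ i : Fin d, i ∈ Finset.univ → |v i|^2 ≤ |v i| * ∑ j, |v j| := by
      intro i _
      rw [sq]
      exact mul_le_mul_of_nonneg_left
        (Finset.single_le_sum (f := fun j => |v j|) (fun j _ => abs_nonneg _)
          (Finset.mem_univ i)) (abs_nonneg _)
    calc ∑ i, |v i|^2 ≤ ∑ i, |v i| * ∑ j, |v j| := Finset.sum_le_sum this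
    _ = (∑ i, |v i|)^2 := by rw [← Finset.sum_mul, sq]
  calc √(∑ i, ‖(me d v) i‖^2) ≤ √((∑ i, |v i|)^2) := Real.sqrt_le_sqrt h1
  _ = ∑ i, |v i| := Real.sqrt_sq (Finset.sum_nonneg fun i _ => abs_nonneg _)

/-- Product of one-variable integrable functions is integrable on a pi probability measure. -/
lemma integrable_pi_prod {n : ℕ} {μ : Measure ℝ} [IsProbabilityMeasure μ] {g : ℝ → ℝ}
    (hg : Integrable g μ) :
    Integrable (fun v : Fin n → ℝ => ∏ i, g (v i)) (Measure.pi fun _ : Fin n => μ) := by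
  induction n with
  | zero =>
      simp only [Finset.univ_eq_empty, Finset.prod_empty]
      exact integrable_const 1
  | succ n ih =>
      have hmp := (measurePreserving_piFinSuccAbove (fun _ : Fin (n+1) => μ) 0).symm
      rw [← hmp.integrable_comp_emb (MeasurableEquiv.measurableEmbedding _)]
      have : (fun v : Fin (n+1) → ℝ => ∏ i, g (v i)) ∘
          (MeasurableEquiv.piFinSuccAbove (fun _ => ℝ) 0).symm
          = fun p : ℝ × (Fin n → ℝ) => g p.1 * ∏ i, g (p.2 i) := by
        ext p
        simp only [Function.comp_apply, MeasurableEquiv.piFinSuccAbove_symm_apply]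
        rw [Fin.prod_univ_succ]
        simp [Fin.insertNth_zero]
      rw [this]
      exact Integrable.mul_prod hg ih

lemma integrable_stdGaussian_of_le_exp {E : Type*} [NormedAddCommGroup E]
    {f : EuclideanSpace ℝ (Fin d) → E} (hc : Continuous f) (a b : ℝ) (hb : 0 ≤ b)
    (hg : ∀ ν, ‖f ν‖ ≤ a * rexp (b * ‖ν‖)) : Integrable f (stdGaussian d) := by
  rw [integrable_stdGaussian_iff]
  have hbound : Integrable (fun v : Fin d → ℝ => |a| * ∏ i, rexp (b * |v i|))
      (Measure.pi fun _ : Fin d => gaussianReal 0 1) :=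
    (integrable_pi_prod (integrable_exp_abs b)).const_mul _
  refine hbound.mono' ((hc.comp me_continuous).aestronglyMeasurable) (ae_of_all _ fun v => ?_)
  have h1 : ‖f (me d v)‖ ≤ a * rexp (b * ‖me d v‖) := hg _
  have h2 : rexp (b * ‖me d v‖) ≤ rexp (b * ∑ i, |v i|) :=
    Real.exp_le_exp.2 (mul_le_mul_of_nonneg_left (norm_me_le v) hb)
  have h3 : rexp (b * ∑ i, |v i|) = ∏ i, rexp (b * |v i|) := by
    rw [← Real.exp_sum, Finset.mul_sum]
  calc ‖f (me d v)‖ ≤ a * rexp (b * ‖me d v‖) := h1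
  _ ≤ |a| * rexp (b * ∑ i, |v i|) := by
      apply mul_le_mul (le_abs_self a) h2 (Real.exp_nonneg _) (abs_nonneg a)
  _ = |a| * ∏ i, rexp (b * |v i|) := by rw [h3]

lemma integrable_stdGaussian_poly {E : Type*} [NormedAddCommGroup E]
    {f : EuclideanSpace ℝ (Fin d) → E} (hc : Continuous f) (A B C D : ℝ)
    (hg : ∀ ν, ‖f ν‖ ≤ A + B*‖ν‖ + C*‖ν‖^2 + D*‖ν‖^3) : Integrable f (stdGaussian d) :=
  integrable_stdGaussian_of_le_exp hc (|A| + |B| + 2*|C| + 6*|D|) 1 zero_le_one fun ν => by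
    simpa using (hg ν).trans (poly3_le_exp A B C D ‖ν‖ (norm_nonneg ν))



variable {d : ℕ} {h : EuclideanSpace ℝ (Fin d) → ℝ} {ℓ τ : ℝ}

lemma grad_cont (hlip : ∀ x x', ‖gradient h x - gradient h x'‖ ≤ ℓ * ‖x - x'‖) :
    Continuous (gradient h) := by
  refine (LipschitzWith.of_dist_le_mul (K := ‖ℓ‖₊) fun x y => ?_).continuous
  rw [dist_eq_norm, dist_eq_norm]
  exact (hlip x y).trans (mul_le_mul_of_nonneg_right (le_abs_self ℓ) (norm_nonneg _))

lemma fderiv_eq_toDual (y : EuclideanSpace ℝ (Fin d)) :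
    fderiv ℝ h y = (toDual ℝ (EuclideanSpace ℝ (Fin d))) (gradient h y) :=
  ((toDual ℝ (EuclideanSpace ℝ (Fin d))).apply_symm_apply (fderiv ℝ h y)).symm

lemma norm_fderiv_eq (y : EuclideanSpace ℝ (Fin d)) :
    ‖fderiv ℝ h y‖ = ‖gradient h y‖ := by
  rw [fderiv_eq_toDual]
  exact (toDual ℝ (EuclideanSpace ℝ (Fin d))).norm_map _

lemma fderiv_cont (hlip : ∀ x x', ‖gradient h x - gradient h x'‖ ≤ ℓ * ‖x - x'‖) :
    Continuous (fderiv ℝ h) := by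
  have : fderiv ℝ h = fun y => (toDual ℝ (EuclideanSpace ℝ (Fin d))) (gradient h y) :=
    funext fderiv_eq_toDual
  rw [this]
  exact (toDual ℝ (EuclideanSpace ℝ (Fin d))).continuous.comp (grad_cont hlip)

lemma grad_bound (hlip : ∀ x x', ‖gradient h x - gradient h x'‖ ≤ ℓ * ‖x - x'‖)
    (x y : EuclideanSpace ℝ (Fin d)) :
    ‖gradient h y‖ ≤ ‖gradient h x‖ + |ℓ| * ‖y - x‖ := by
  have h1 : ‖gradient h y‖ ≤ ‖gradient h x‖ + ‖gradient h y - gradient h x‖ := by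
    have := norm_add_le (gradient h x) (gradient h y - gradient h x)
    simpa using this
  have h2 : ‖gradient h y - gradient h x‖ ≤ |ℓ| * ‖y - x‖ :=
    (hlip y x).trans (mul_le_mul_of_nonneg_right (le_abs_self ℓ) (norm_nonneg _))
  linarith

lemma mvt (hdiff : Differentiable ℝ h)
    (hlip : ∀ x x', ‖gradient h x - gradient h x'‖ ≤ ℓ * ‖x - x'‖)
    (x y : EuclideanSpace ℝ (Fin d)) :
    |h y - h x| ≤ (‖gradient h x‖ + |ℓ| * ‖y - x‖) * ‖y - x‖ := by
  have := Convex.norm_image_sub_le_of_norm_fderiv_le (𝕜 := ℝ) (f := h)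
    (s := Metric.closedBall x ‖y - x‖) (C := ‖gradient h x‖ + |ℓ| * ‖y - x‖)
    (fun z _ => hdiff z) (fun z hz => by
      rw [norm_fderiv_eq]
      refine (grad_bound hlip x z).trans ?_
      have hz' : ‖z - x‖ ≤ ‖y - x‖ := by
        rw [Metric.mem_closedBall, dist_eq_norm] at hz; exact hz
      have := mul_le_mul_of_nonneg_left hz' (abs_nonneg ℓ)
      linarith)
    (convex_closedBall _ _) (Metric.mem_closedBall_self (norm_nonneg _))
    (by rw [Metric.mem_closedBall, dist_eq_norm])
  simpa using this

set_option maxHeartbeats 1000000 in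
lemma stepA (hτ : 0 < τ) (hdiff : Differentiable ℝ h)
    (hlip : ∀ x x', ‖gradient h x - gradient h x'‖ ≤ ℓ * ‖x - x'‖)
    (x : EuclideanSpace ℝ (Fin d)) :
    (∀ i : Fin d, gradient (fun z => ∫ ν, h (z + τ • ν) ∂(stdGaussian d)) x i =
      ∫ ν, gradient h (x + τ • ν) i ∂(stdGaussian d)) ∧
    Integrable (fun ν => gradient h (x + τ • ν)) (stdGaussian d) := by
  have hhc : Continuous h := hdiff.continuous
  have hgc := grad_cont hlip
  have hmapc : Continuous (fun ν : EuclideanSpace ℝ (Fin d) => x + τ • ν) := by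
    fun_prop
  have hnorm_smul : ∀ ν : EuclideanSpace ℝ (Fin d), ‖x + τ • ν - x‖ = τ * ‖ν‖ := by
    intro ν
    rw [add_sub_cancel_left, norm_smul, Real.norm_eq_abs, abs_of_pos hτ]
  have hgradb : ∀ ν : EuclideanSpace ℝ (Fin d),
      ‖gradient h (x + τ • ν)‖ ≤ ‖gradient h x‖ + (|ℓ| * τ) * ‖ν‖ := fun ν => by
    have := grad_bound hlip x (x + τ • ν)
    rw [hnorm_smul ν] at this
    calc ‖gradient h (x + τ • ν)‖ ≤ ‖gradient h x‖ + |ℓ| * (τ * ‖ν‖) := this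
    _ = _ := by ring
  have Igrad : Integrable (fun ν => gradient h (x + τ • ν)) (stdGaussian d) :=
    integrable_stdGaussian_poly (hgc.comp hmapc) (‖gradient h x‖) (|ℓ| * τ) 0 0
      (fun ν => by simpa using hgradb ν)
  have IF' : Integrable (fun ν => fderiv ℝ h (x + τ • ν)) (stdGaussian d) :=
    integrable_stdGaussian_poly ((fderiv_cont hlip).comp hmapc) (‖gradient h x‖) (|ℓ| * τ) 0 0
      (fun ν => by rw [norm_fderiv_eq]; simpa using hgradb ν)
  have Ih : Integrable (fun ν => h (x + τ • ν)) (stdGaussian d) := by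
    refine integrable_stdGaussian_poly (hhc.comp hmapc)
      (|h x|) (‖gradient h x‖ * τ) (|ℓ| * τ^2) 0 (fun ν => ?_)
    have hm := mvt hdiff hlip x (x + τ • ν)
    rw [hnorm_smul ν] at hm
    have : |h (x + τ • ν)| ≤ |h x| + |h (x + τ • ν) - h x| := by
      have := abs_add_le (h x) (h (x + τ • ν) - h x); simpa using this
    have hτ0 : 0 ≤ τ := hτ.le
    have hν0 : 0 ≤ ‖ν‖ := norm_nonneg ν
    rw [Real.norm_eq_abs]
    nlinarith [abs_nonneg ℓ, norm_nonneg (gradient h x)]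
  have bound_int : Integrable
      (fun ν : EuclideanSpace ℝ (Fin d) => (‖gradient h x‖ + |ℓ|) + (|ℓ| * τ) * ‖ν‖)
      (stdGaussian d) := by
    refine integrable_stdGaussian_poly (by fun_prop) (‖gradient h x‖ + |ℓ|) (|ℓ| * τ) 0 0
      (fun ν => by
        simp only [Real.norm_eq_abs]
        have h1 : 0 ≤ (|ℓ| * τ) * ‖ν‖ := by positivity
        have h2 : 0 ≤ ‖gradient h x‖ + |ℓ| := by positivity
        rw [abs_of_nonneg (by linarith)]
        simp)
  have key := hasFDerivAt_integral_of_dominated_of_fderiv_le (𝕜 := ℝ)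
    (μ := stdGaussian d) (F := fun z ν => h (z + τ • ν))
    (F' := fun z ν => fderiv ℝ h (z + τ • ν)) (x₀ := x)
    (bound := fun ν => (‖gradient h x‖ + |ℓ|) + (|ℓ| * τ) * ‖ν‖)
    (Metric.ball_mem_nhds x zero_lt_one)
    (Eventually.of_forall fun z =>
      (by fun_prop : Continuous fun ν : EuclideanSpace ℝ (Fin d) => h (z + τ • ν)).aestronglyMeasurable)
    Ih
    (((fderiv_cont hlip).comp hmapc).aestronglyMeasurable)
    (ae_of_all _ fun ν z hz => by
      show ‖fderiv ℝ h (z + τ • ν)‖ ≤ (‖gradient h x‖ + |ℓ|) + (|ℓ| * τ) * ‖ν‖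
      rw [norm_fderiv_eq]
      have hb := grad_bound hlip x (z + τ • ν)
      have hzx : ‖z + τ • ν - x‖ ≤ 1 + τ * ‖ν‖ := by
        have : z + τ • ν - x = (z - x) + τ • ν := by abel
        rw [this]
        refine (norm_add_le _ _).trans ?_
        have h1 : ‖z - x‖ ≤ 1 := by
          rw [Metric.mem_ball, dist_eq_norm] at hz; exact hz.le
        rw [norm_smul, Real.norm_eq_abs, abs_of_pos hτ]
        linarith
      have h2 : |ℓ| * ‖z + τ • ν - x‖ ≤ |ℓ| * (1 + τ * ‖ν‖) :=
        mul_le_mul_of_nonneg_left hzx (abs_nonneg ℓ)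
      nlinarith [abs_nonneg ℓ, norm_nonneg ν, hτ.le])
    bound_int
    (ae_of_all _ fun ν z hz => by
      have h1 : HasFDerivAt (fun z : EuclideanSpace ℝ (Fin d) => z + τ • ν)
          (ContinuousLinearMap.id ℝ _) z := (hasFDerivAt_id z).add_const _
      have h2 := ((hdiff (z + τ • ν)).hasFDerivAt).comp z h1
      exact h2)
  have hgrad := key.hasGradientAt.gradient
  refine ⟨fun i => ?_, Igrad⟩
  rw [hgrad]
  have h1 : ((toDual ℝ (EuclideanSpace ℝ (Fin d))).symm
      (∫ ν, fderiv ℝ h (x + τ • ν) ∂(stdGaussian d))) i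
      = (∫ ν, fderiv ℝ h (x + τ • ν) ∂(stdGaussian d)) (EuclideanSpace.single i 1) := by
    have h2 : ⟪((toDual ℝ (EuclideanSpace ℝ (Fin d))).symm
        (∫ ν, fderiv ℝ h (x + τ • ν) ∂(stdGaussian d))), EuclideanSpace.single i 1⟫_ℝ
        = (∫ ν, fderiv ℝ h (x + τ • ν) ∂(stdGaussian d)) (EuclideanSpace.single i 1) :=
      toDual_symm_apply
    rw [EuclideanSpace.inner_single_right] at h2
    simpa using h2
  rw [h1, ContinuousLinearMap.integral_apply IF']
  congr 1
  ext ν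
  rw [fderiv_eq_toDual, toDual_apply_apply, EuclideanSpace.inner_single_right]
  simp



variable {d : ℕ} {h : EuclideanSpace ℝ (Fin d) → ℝ} {ℓ τ : ℝ}

lemma abs_coord_le (u : EuclideanSpace ℝ (Fin d)) (i : Fin d) : |u i| ≤ ‖u‖ := by
  have h1 : ⟪u, EuclideanSpace.single i (1:ℝ)⟫_ℝ = u i := by
    rw [EuclideanSpace.inner_single_right]; simp
  calc |u i| = |⟪u, EuclideanSpace.single i (1:ℝ)⟫_ℝ| := by rw [h1]
  _ ≤ ‖u‖ * ‖EuclideanSpace.single i (1:ℝ)‖ := abs_real_inner_le_norm _ _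
  _ ≤ ‖u‖ := by rw [EuclideanSpace.norm_single]; simp

lemma me_add_smul (u s : Fin d → ℝ) (t : ℝ) :
    me d (u + t • s) = me d u + t • me d s := rfl

lemma me_single (i : Fin d) : me d (Pi.single i 1) = EuclideanSpace.single i 1 := rfl

lemma me_coord (v : Fin d → ℝ) (i : Fin d) : me d v i = v i := rfl

lemma ins_eq {n : ℕ} (i : Fin (n+1)) (t : ℝ) (w : Fin n → ℝ) :
    Fin.insertNth (α := fun _ : Fin (n+1) => ℝ) i t w
      = Fin.insertNth (α := fun _ : Fin (n+1) => ℝ) i 0 w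
        + t • (Pi.single i (1:ℝ) : Fin (n+1) → ℝ) := by
  funext j
  refine Fin.succAboveCases i ?_ ?_ j
  · simp
  · intro k
    simp [Fin.insertNth_apply_succAbove, Pi.single_eq_of_ne (i.succAbove_ne k)]

lemma stepB (hτ : 0 < τ) (hdiff : Differentiable ℝ h)
    (hlip : ∀ x x', ‖gradient h x - gradient h x'‖ ≤ ℓ * ‖x - x'‖)
    (x : EuclideanSpace ℝ (Fin d)) (i : Fin d) :
    ∫ ν, gradient h (x + τ • ν) i ∂(stdGaussian d)
      = ∫ ν, ((h (x + τ • ν) - h x) / τ) * ν i ∂(stdGaussian d) := by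
  obtain ⟨n, rfl⟩ : ∃ n, d = n + 1 := ⟨d - 1, by have := i.pos; omega⟩
  have hgc := grad_cont hlip
  have hhc := hdiff.continuous
  have hmec : Continuous (me (n+1)) := (EuclideanSpace.equiv (Fin (n+1)) ℝ).symm.continuous
  -- integrability of the two integrands over stdGaussian
  have hnorm_smul : ∀ ν : EuclideanSpace ℝ (Fin (n+1)), ‖x + τ • ν - x‖ = τ * ‖ν‖ := by
    intro ν
    rw [add_sub_cancel_left, norm_smul, Real.norm_eq_abs, abs_of_pos hτ]
  have IP : Integrable (fun ν : EuclideanSpace ℝ (Fin (n+1)) => gradient h (x + τ • ν) i)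
      (stdGaussian (n+1)) := by
    refine integrable_stdGaussian_poly
      (by fun_prop) (‖gradient h x‖) (|ℓ| * τ) 0 0 (fun ν => ?_)
    have h1 := (abs_coord_le _ i).trans (grad_bound hlip x (x + τ • ν))
    rw [hnorm_smul ν] at h1
    rw [Real.norm_eq_abs]
    calc |gradient h (x + τ • ν) i| ≤ ‖gradient h x‖ + |ℓ| * (τ * ‖ν‖) := h1
    _ ≤ _ := by rw [mul_assoc]; simp
  have IQ : Integrable (fun ν : EuclideanSpace ℝ (Fin (n+1)) =>
      ((h (x + τ • ν) - h x) / τ) * ν i) (stdGaussian (n+1)) := by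
    refine integrable_stdGaussian_poly
      (by fun_prop)
      0 0 (‖gradient h x‖) (|ℓ| * τ) (fun ν => ?_)
    have hm := mvt hdiff hlip x (x + τ • ν)
    rw [hnorm_smul ν] at hm
    have h2 : |ν i| ≤ ‖ν‖ := abs_coord_le ν i
    rw [Real.norm_eq_abs, abs_mul, abs_div, abs_of_pos hτ]
    have hν := norm_nonneg ν
    have h3 : |h (x + τ • ν) - h x| / τ ≤ (‖gradient h x‖ + |ℓ| * τ * ‖ν‖) * ‖ν‖ := by
      rw [div_le_iff₀ hτ]
      calc |h (x + τ • ν) - h x| ≤ (‖gradient h x‖ + |ℓ| * (τ * ‖ν‖)) * (τ * ‖ν‖) := hm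
      _ = (‖gradient h x‖ + |ℓ| * τ * ‖ν‖) * ‖ν‖ * τ := by ring
    calc |h (x + τ • ν) - h x| / τ * |ν i|
        ≤ ((‖gradient h x‖ + |ℓ| * τ * ‖ν‖) * ‖ν‖) * ‖ν‖ := by
          apply mul_le_mul h3 h2 (abs_nonneg _)
          positivity
    _ = ‖gradient h x‖ * ‖ν‖^2 + (|ℓ| * τ) * ‖ν‖^3 := by ring
    _ ≤ _ := by simp
  -- transfer to the pi measure and split coordinate i
  set Pm : Measure (Fin (n+1) → ℝ) := Measure.pi fun _ => gaussianReal 0 1 with hPm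
  set Pm' : Measure (Fin n → ℝ) := Measure.pi fun _ => gaussianReal 0 1 with hPm'
  set e := MeasurableEquiv.piFinSuccAbove (fun _ : Fin (n+1) => ℝ) i with he
  have mp : MeasurePreserving e Pm ((gaussianReal 0 1).prod Pm') :=
    measurePreserving_piFinSuccAbove (fun _ => gaussianReal 0 1) i
  set P : ℝ × (Fin n → ℝ) → ℝ :=
    fun p => gradient h (x + τ • me (n+1) (i.insertNth p.1 p.2)) i with hP
  set Q : ℝ × (Fin n → ℝ) → ℝ :=
    fun p => ((h (x + τ • me (n+1) (i.insertNth p.1 p.2)) - h x) / τ) * p.1 with hQ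
  have hPe : ∀ v : Fin (n+1) → ℝ, P (e v) = gradient h (x + τ • me (n+1) v) i := by
    intro v
    rw [hP]
    simp [he, MeasurableEquiv.piFinSuccAbove_apply, Fin.insertNthEquiv_symm_apply,
      Fin.insertNth_self_removeNth]
  have hQe : ∀ v : Fin (n+1) → ℝ, Q (e v) = ((h (x + τ • me (n+1) v) - h x) / τ) * v i := by
    intro v
    rw [hQ]
    simp [he, MeasurableEquiv.piFinSuccAbove_apply, Fin.insertNthEquiv_symm_apply,
      Fin.insertNth_self_removeNth]
  have IPprod : Integrable P ((gaussianReal 0 1).prod Pm') := by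
    rw [← mp.integrable_comp_emb e.measurableEmbedding]
    have : P ∘ e = fun v => gradient h (x + τ • me (n+1) v) i := funext hPe
    rw [this]
    exact (integrable_stdGaussian_iff _).1 IP
  have IQprod : Integrable Q ((gaussianReal 0 1).prod Pm') := by
    rw [← mp.integrable_comp_emb e.measurableEmbedding]
    have : Q ∘ e = fun v => ((h (x + τ • me (n+1) v) - h x) / τ) * v i := funext hQe
    rw [this]
    exact (integrable_stdGaussian_iff _).1 IQ
  -- the path decomposition
  set bvec : EuclideanSpace ℝ (Fin (n+1)) := τ • me (n+1) (Pi.single i 1) with hbvec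
  have hbnorm : ‖bvec‖ = τ := by
    rw [hbvec, norm_smul, me_single, EuclideanSpace.norm_single]
    simp [abs_of_pos hτ]
  have hpath : ∀ (t : ℝ) (w : Fin n → ℝ),
      x + τ • me (n+1) (i.insertNth t w) = (x + τ • me (n+1) (i.insertNth 0 w)) + t • bvec := by
    intro t w
    rw [ins_eq i t w, me_add_smul, hbvec]
    rw [smul_add]
    rw [smul_comm τ t]
    abel
  -- per-slice Stein
  have hsliceP : ∀ w : Fin n → ℝ,
      (∫ t, P (t, w) ∂(gaussianReal 0 1)) = ∫ t, Q (t, w) ∂(gaussianReal 0 1) := by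
    intro w
    set A : EuclideanSpace ℝ (Fin (n+1)) := x + τ • me (n+1) (i.insertNth 0 w) with hA
    set fw : ℝ → ℝ := fun t => (h (A + t • bvec) - h x) / τ with hfw
    set fw' : ℝ → ℝ := fun t => gradient h (A + t • bvec) i with hfw'
    have hder : ∀ t, HasDerivAt fw (fw' t) t := by
      intro t
      have h1 : HasDerivAt (fun t : ℝ => A + t • bvec) bvec t := by
        simpa using ((hasDerivAt_id t).smul_const bvec).const_add A
      have h2 := ((hdiff (A + t • bvec)).hasFDerivAt).comp_hasDerivAt t h1
      have h3 : fderiv ℝ h (A + t • bvec) bvec = τ * gradient h (A + t • bvec) i := by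
        rw [fderiv_eq_toDual, toDual_apply_apply, hbvec, real_inner_smul_right]
        have : ⟪gradient h (A + t • bvec), me (n+1) (Pi.single i 1)⟫_ℝ
            = gradient h (A + t • bvec) i := by
          rw [me_single, EuclideanSpace.inner_single_right]; simp
        rw [this]
      rw [h3] at h2
      have h4 := (h2.sub_const (h x)).div_const τ
      refine h4.congr_deriv ?_
      field_simp
      rfl
    have hcont' : Continuous fw' := by
      rw [hfw']
      fun_prop
    have hgrow : ∀ t, |fw' t| ≤ (‖gradient h x‖ + |ℓ| * ‖A - x‖) + (|ℓ| * τ) * |t| := by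
      intro t
      have h1 := (abs_coord_le _ i).trans (grad_bound hlip x (A + t • bvec))
      have h2 : ‖A + t • bvec - x‖ ≤ ‖A - x‖ + |t| * τ := by
        have : A + t • bvec - x = (A - x) + t • bvec := by abel
        rw [this]
        refine (norm_add_le _ _).trans ?_
        rw [norm_smul, Real.norm_eq_abs, hbnorm]
      have h3 : |ℓ| * ‖A + t • bvec - x‖ ≤ |ℓ| * (‖A - x‖ + |t| * τ) :=
        mul_le_mul_of_nonneg_left h2 (abs_nonneg ℓ)
      rw [hfw']
      calc |gradient h (A + t • bvec) i| ≤ ‖gradient h x‖ + |ℓ| * ‖A + t • bvec - x‖ := h1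
      _ ≤ ‖gradient h x‖ + |ℓ| * (‖A - x‖ + |t| * τ) := by linarith
      _ = _ := by ring
    have hst := (stein hder hcont' hgrow).1
    have hPt : ∀ t : ℝ, P (t, w) = fw' t := by
      intro t
      simp only [hP, hfw']
      rw [hpath t w, ← hA]
    have hQt : ∀ t : ℝ, Q (t, w) = fw t * t := by
      intro t
      simp only [hQ, hfw]
      try dsimp only
      rw [hpath t w, ← hA]
    simp_rw [hPt, hQt]
    rw [hst]
    congr 1
    ext t
    ring
  -- assemble
  rw [integral_stdGaussian, integral_stdGaussian]
  simp only [me_coord]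
  rw [← hPm]
  have t1 : ∫ v, gradient h (x + τ • me (n+1) v) i ∂Pm
      = ∫ p, P p ∂((gaussianReal 0 1).prod Pm') := by
    rw [← mp.integral_comp']
    congr 1
    ext v
    rw [hPe]
  have t2 : ∫ v, ((h (x + τ • me (n+1) v) - h x) / τ) * v i ∂Pm
      = ∫ p, Q p ∂((gaussianReal 0 1).prod Pm') := by
    rw [← mp.integral_comp']
    congr 1
    ext v
    rw [hQe]
  rw [t1, t2]
  rw [integral_prod _ IPprod, integral_prod _ IQprod]
  have s1 : ∫ t, ∫ w, P (t, w) ∂Pm' ∂(gaussianReal 0 1)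
      = ∫ w, ∫ t, P (t, w) ∂(gaussianReal 0 1) ∂Pm' :=
    integral_integral_swap (f := fun t w => P (t, w)) (by exact IPprod)
  have s2 : ∫ t, ∫ w, Q (t, w) ∂Pm' ∂(gaussianReal 0 1)
      = ∫ w, ∫ t, Q (t, w) ∂(gaussianReal 0 1) ∂Pm' :=
    integral_integral_swap (f := fun t w => Q (t, w)) (by exact IQprod)
  rw [s1, s2]
  congr 1
  ext w
  exact hsliceP w


end ZOProof

open ZOProof in
/-- If `h : ℝ^d → ℝ` has `ℓ`-Lipschitz gradient and `τ > 0`, then for all `x`,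
`∇h_τ(x) = E_ν[((h(x + τν) − h(x))/τ) ν]`, i.e. the single-point zeroth-order estimator
`((h(x + τν) − h(x))/τ) ν` is an unbiased estimator of `∇h_τ(x)`. -/
theorem zo_vrgda_stmt6 (d : ℕ) (h : EuclideanSpace ℝ (Fin d) → ℝ) (ℓ τ : ℝ) (hτ : 0 < τ)
    (hdiff : Differentiable ℝ h)
    (hlip : ∀ x x', ‖gradient h x - gradient h x'‖ ≤ ℓ * ‖x - x'‖) :
    ∀ x, gradient (fun z => ∫ ν, h (z + τ • ν) ∂(stdGaussian d)) x =
      ∫ ν, ((h (x + τ • ν) - h x) / τ) • ν ∂(stdGaussian d) := by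
  intro x
  have hgc := grad_cont hlip
  have hhc := hdiff.continuous
  have hnorm_smul : ∀ ν : EuclideanSpace ℝ (Fin d), ‖x + τ • ν - x‖ = τ * ‖ν‖ := by
    intro ν
    rw [add_sub_cancel_left, norm_smul, Real.norm_eq_abs, abs_of_pos hτ]
  -- integrability of the right-hand side integrand
  have IR : Integrable (fun ν : EuclideanSpace ℝ (Fin d) =>
      ((h (x + τ • ν) - h x) / τ) • ν) (stdGaussian d) := by
    refine integrable_stdGaussian_poly
      (by fun_prop)
      0 0 (‖gradient h x‖) (|ℓ| * τ) (fun ν => ?_)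
    have hm := mvt hdiff hlip x (x + τ • ν)
    rw [hnorm_smul ν] at hm
    rw [norm_smul, Real.norm_eq_abs, abs_div, abs_of_pos hτ]
    have hν := norm_nonneg ν
    have h3 : |h (x + τ • ν) - h x| / τ ≤ (‖gradient h x‖ + |ℓ| * τ * ‖ν‖) * ‖ν‖ := by
      rw [div_le_iff₀ hτ]
      calc |h (x + τ • ν) - h x| ≤ (‖gradient h x‖ + |ℓ| * (τ * ‖ν‖)) * (τ * ‖ν‖) := hm
      _ = (‖gradient h x‖ + |ℓ| * τ * ‖ν‖) * ‖ν‖ * τ := by ring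
    calc |h (x + τ • ν) - h x| / τ * ‖ν‖
        ≤ ((‖gradient h x‖ + |ℓ| * τ * ‖ν‖) * ‖ν‖) * ‖ν‖ := by
          apply mul_le_mul_of_nonneg_right h3 hν
    _ = ‖gradient h x‖ * ‖ν‖^2 + (|ℓ| * τ) * ‖ν‖^3 := by ring
    _ ≤ _ := by simp
  obtain ⟨hA, _⟩ := stepA hτ hdiff hlip x
  ext i
  rw [hA i, stepB hτ hdiff hlip x i]
  have hproj := ContinuousLinearMap.integral_comp_comm
    (EuclideanSpace.proj (𝕜 := ℝ) i) IR
  have : ∀ ν : EuclideanSpace ℝ (Fin d),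
      (EuclideanSpace.proj (𝕜 := ℝ) i) (((h (x + τ • ν) - h x) / τ) • ν)
        = ((h (x + τ • ν) - h x) / τ) * ν i := by
    intro ν
    rfl
  simp_rw [this] at hproj
  rw [hproj]
  rfl
end

section
/- Let f : ℝ^{d1} × ℝ^{d2} → ℝ be differentiable with ℓ-Lipschitz gradient, and let μ₁, μ₂ > 0. Define the partially smoothed functions f_{μ₁}(x,y) = E_ν[f(x + μ₁ν, y)] with ν ~ N(0, I_{d1}) and f_{μ₂}(x,y) = E_ω[f(x, y + μ₂ω)] with ω ~ N(0, I_{d2}). Then for every (x,y) ∈ ℝ^{d1} × ℝ^{d2} and every pair of vectors v ∈ ℝ^{d1}, u ∈ ℝ^{d2}: (i) ‖∇_x f(x,y) − v‖² + ‖∇_y f(x,y) − u‖² ≤ 2(‖∇_x f_{μ₁}(x,y) − v‖² + ‖∇_y f_{μ₂}(x,y) − u‖²) + (μ₁²/2)ℓ²(d1+3)³ + (μ₂²/2)ℓ²(d2+3)³; and (ii) ‖∇_y f(x,y)‖² ≤ 2‖∇_y f_{μ₂}(x,y)‖² + (μ₂²/2)ℓ²(d2+3)³. -/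
open MeasureTheory ProbabilityTheory

open scoped ENNReal NNReal
open Real Set Filter InnerProductSpace

namespace ZOaux


lemma measurable_esymm (d : ℕ) :
    Measurable ((EuclideanSpace.equiv (Fin d) ℝ).symm : (Fin d → ℝ) → EuclideanSpace ℝ (Fin d)) :=
  (EuclideanSpace.equiv (Fin d) ℝ).symm.continuous.measurable

instance stdGaussian_prob (d : ℕ) : IsProbabilityMeasure (stdGaussian d) := by
  unfold _root_.stdGaussian
  exact Measure.isProbabilityMeasure_map (measurable_esymm d).aemeasurable

lemma eval_measurePreserving (d : ℕ) (i : Fin d) :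
    MeasurePreserving (Function.eval i) (Measure.pi fun _ : Fin d => gaussianReal 0 1)
      (gaussianReal 0 1) := by
  refine ⟨measurable_pi_apply i, ?_⟩
  ext s hs
  rw [Measure.map_apply (measurable_pi_apply i) hs]
  have h : Function.eval i ⁻¹' s =
      Set.pi Set.univ (Function.update (fun _ : Fin d => (Set.univ : Set ℝ)) i s) := by
    rw [Set.eval_preimage]
  rw [h, Measure.pi_pi, Finset.prod_eq_single i]
  · simp
  · intro j _ hj; simp [Function.update_of_ne hj]
  · simp

lemma gauss_pdf_eq (x : ℝ) : gaussianPDFReal 0 1 x = (√(2 * π))⁻¹ * rexp (-x ^ 2 / 2) := by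
  simp [gaussianPDFReal]

lemma gaussianReal_eq_withDensity :
    gaussianReal 0 1 = volume.withDensity fun x => ((gaussianPDFReal 0 1 x).toNNReal : ℝ≥0∞) := by
  rw [gaussianReal_of_var_ne_zero 0 one_ne_zero]
  rfl

lemma integral_gaussianReal_eq (φ : ℝ → ℝ) :
    ∫ x, φ x ∂(gaussianReal 0 1) = ∫ x, gaussianPDFReal 0 1 x * φ x := by
  rw [gaussianReal_eq_withDensity,
    integral_withDensity_eq_integral_smul
      ((measurable_gaussianPDFReal 0 1).real_toNNReal) φ]
  congr 1
  ext x
  simp [NNReal.smul_def, Real.coe_toNNReal _ (gaussianPDFReal_nonneg 0 1 x)]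

lemma integrable_gaussianReal_iff (φ : ℝ → ℝ) :
    Integrable φ (gaussianReal 0 1) ↔ Integrable (fun x => gaussianPDFReal 0 1 x * φ x) := by
  rw [gaussianReal_eq_withDensity,
    integrable_withDensity_iff_integrable_smul ((measurable_gaussianPDFReal 0 1).real_toNNReal)]
  constructor <;> intro h <;> refine h.congr (Filter.Eventually.of_forall fun x => ?_) <;>
    simp [NNReal.smul_def, Real.coe_toNNReal _ (gaussianPDFReal_nonneg 0 1 x)]

lemma integrable_abs_gauss : Integrable (fun x : ℝ => |x|) (gaussianReal 0 1) := by
  rw [integrable_gaussianReal_iff]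
  have h : Integrable (fun x : ℝ => |x| * rexp (-(2:ℝ)⁻¹ * x ^ 2)) := by
    have := (integrable_mul_exp_neg_mul_sq (b := (2:ℝ)⁻¹) (by norm_num)).abs
    refine this.congr (Filter.Eventually.of_forall fun x => ?_)
    simp [abs_mul, abs_of_pos (exp_pos _)]
  refine (h.const_mul ((√(2 * π))⁻¹)).congr (Filter.Eventually.of_forall fun x => ?_)
  simp only [gauss_pdf_eq]
  ring_nf

lemma integrable_sq_gauss : Integrable (fun x : ℝ => x ^ 2) (gaussianReal 0 1) := by
  rw [integrable_gaussianReal_iff]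
  have hint : Integrable (fun x : ℝ => (√(2 * π))⁻¹ * 4 * rexp (-(4:ℝ)⁻¹ * x ^ 2)) :=
    (integrable_exp_neg_mul_sq (by norm_num)).const_mul _
  refine hint.mono' ?_ (Filter.Eventually.of_forall fun x => ?_)
  · exact ((measurable_gaussianPDFReal 0 1).mul (measurable_id.pow_const 2)).aestronglyMeasurable
  · simp only [gauss_pdf_eq, norm_eq_abs]
    have h1 : x ^ 2 ≤ 4 * rexp (x ^ 2 / 4) := by
      have := Real.add_one_le_exp (x ^ 2 / 4)
      nlinarith [sq_nonneg x, Real.exp_pos (x ^ 2 / 4)]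
    have h2 : rexp (x ^ 2 / 4) * rexp (-x ^ 2 / 2) = rexp (-(4:ℝ)⁻¹ * x ^ 2) := by
      rw [← Real.exp_add]; ring_nf
    rw [abs_of_nonneg (by positivity)]
    calc (√(2 * π))⁻¹ * rexp (-x ^ 2 / 2) * x ^ 2
        ≤ (√(2 * π))⁻¹ * rexp (-x ^ 2 / 2) * (4 * rexp (x ^ 2 / 4)) := by
          refine mul_le_mul_of_nonneg_left h1 (by positivity)
      _ = (√(2 * π))⁻¹ * 4 * (rexp (x ^ 2 / 4) * rexp (-x ^ 2 / 2)) := by ring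
      _ = (√(2 * π))⁻¹ * 4 * rexp (-(4:ℝ)⁻¹ * x ^ 2) := by rw [h2]

lemma tendsto_aux : Tendsto (fun y : ℝ => -y ^ 2 / 2) atTop atBot := by
  have h1 : Tendsto (fun y : ℝ => y ^ 2) atTop atTop := tendsto_pow_atTop (by norm_num)
  exact (tendsto_neg_atBot_iff.mpr h1).atBot_div_const (by norm_num)

lemma integral_Ioi_xexp : ∫ x in Ioi (0:ℝ), x * rexp (-x ^ 2 / 2) = 1 := by
  have hderiv : ∀ x ∈ Ici (0:ℝ), HasDerivAt (fun y : ℝ => -rexp (-y ^ 2 / 2))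
      (x * rexp (-x ^ 2 / 2)) x := by
    intro x _
    have h1 : HasDerivAt (fun y : ℝ => -y ^ 2 / 2) (-x) x := by
      have := ((hasDerivAt_pow 2 x).neg).div_const 2
      simpa using this.congr_deriv (by push_cast; ring)
    have := (h1.exp).neg
    exact this.congr_deriv (by ring)
  have hint : IntegrableOn (fun x : ℝ => x * rexp (-x ^ 2 / 2)) (Ioi 0) := by
    have : Integrable (fun x : ℝ => x * rexp (-(2:ℝ)⁻¹ * x ^ 2)) :=
      integrable_mul_exp_neg_mul_sq (by norm_num)
    exact (this.congr (Eventually.of_forall fun x => by ring_nf)).integrableOn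
  have htend : Tendsto (fun y : ℝ => -rexp (-y ^ 2 / 2)) atTop (nhds 0) := by
    rw [show (0:ℝ) = -0 by ring]
    exact (Real.tendsto_exp_atBot.comp tendsto_aux).neg
  have := integral_Ioi_of_hasDerivAt_of_tendsto' hderiv hint htend
  simpa using this

lemma sqrt_two_pi_ge : (2:ℝ) ≤ √(2 * π) := by
  have h : (4:ℝ) ≤ 2 * π := by nlinarith [Real.pi_gt_three]
  calc (2:ℝ) = √4 := by
        rw [show (4:ℝ) = 2 ^ 2 by norm_num, Real.sqrt_sq (by norm_num : (0:ℝ) ≤ 2)]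
    _ ≤ √(2 * π) := Real.sqrt_le_sqrt h

lemma integral_abs_gauss_le : ∫ x, |x| ∂(gaussianReal 0 1) ≤ 1 := by
  rw [integral_gaussianReal_eq]
  have h2 : ∫ x : ℝ, gaussianPDFReal 0 1 x * |x|
      = ∫ x : ℝ, (fun t : ℝ => (√(2 * π))⁻¹ * (t * rexp (-t ^ 2 / 2))) |x| := by
    refine integral_congr_ae (Eventually.of_forall fun x => ?_)
    simp only [gauss_pdf_eq]
    rw [show |x| ^ 2 = x ^ 2 by rw [sq_abs]]
    ring
  rw [h2, integral_comp_abs (f := fun t : ℝ => (√(2 * π))⁻¹ * (t * rexp (-t ^ 2 / 2))),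
    integral_const_mul, integral_Ioi_xexp]
  have h3 : (0:ℝ) < √(2 * π) := by positivity
  rw [mul_one, show (1:ℝ) = 2 * 2⁻¹ by norm_num]
  refine mul_le_mul_of_nonneg_left ?_ (by norm_num)
  rw [inv_le_inv₀ h3 (by norm_num)]
  exact sqrt_two_pi_ge

lemma euclid_norm_le_sum (d : ℕ) (ν : EuclideanSpace ℝ (Fin d)) : ‖ν‖ ≤ ∑ i, |ν i| := by
  rw [EuclideanSpace.norm_eq]
  calc √(∑ i, ‖ν i‖ ^ 2) ≤ √((∑ i, ‖ν i‖) ^ 2) :=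
        Real.sqrt_le_sqrt (Finset.sum_sq_le_sq_sum_of_nonneg fun i _ => norm_nonneg _)
    _ = ∑ i, |ν i| := by
        rw [Real.sqrt_sq (Finset.sum_nonneg fun i _ => norm_nonneg _)]
        simp [Real.norm_eq_abs]

lemma euclid_normsq_eq (d : ℕ) (ν : EuclideanSpace ℝ (Fin d)) : ‖ν‖ ^ 2 = ∑ i, (ν i) ^ 2 := by
  rw [EuclideanSpace.norm_eq, Real.sq_sqrt (Finset.sum_nonneg fun i _ => sq_nonneg _)]
  simp [Real.norm_eq_abs, sq_abs]

lemma integrable_coord_abs (d : ℕ) (i : Fin d) :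
    Integrable (fun a : Fin d → ℝ => |a i|) (Measure.pi fun _ : Fin d => gaussianReal 0 1) := by
  have := ((eval_measurePreserving d i).integrable_comp
    integrable_abs_gauss.aestronglyMeasurable).mpr integrable_abs_gauss
  simpa [Function.comp_def] using this

lemma integral_coord_abs (d : ℕ) (i : Fin d) :
    ∫ a : Fin d → ℝ, |a i| ∂(Measure.pi fun _ : Fin d => gaussianReal 0 1)
      = ∫ x, |x| ∂(gaussianReal 0 1) := by
  have h2 : ∫ x, |x| ∂((Measure.pi fun _ : Fin d => gaussianReal 0 1).map (Function.eval i))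
      = ∫ a : Fin d → ℝ, |a i| ∂(Measure.pi fun _ : Fin d => gaussianReal 0 1) :=
    integral_map (measurable_pi_apply i).aemeasurable
      (by rw [(eval_measurePreserving d i).map_eq]
          exact integrable_abs_gauss.aestronglyMeasurable)
  rw [(eval_measurePreserving d i).map_eq] at h2
  exact h2.symm

lemma integrable_sum_abs (d : ℕ) :
    Integrable (fun a : Fin d → ℝ => ∑ i, |a i|)
      (Measure.pi fun _ : Fin d => gaussianReal 0 1) :=
  integrable_finset_sum _ fun i _ => integrable_coord_abs d i

lemma integral_sum_abs_le (d : ℕ) :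
    ∫ a : Fin d → ℝ, (∑ i, |a i|) ∂(Measure.pi fun _ : Fin d => gaussianReal 0 1) ≤ d := by
  rw [integral_finset_sum _ fun i _ => integrable_coord_abs d i]
  calc (∑ i : Fin d, ∫ a : Fin d → ℝ, |a i| ∂(Measure.pi fun _ : Fin d => gaussianReal 0 1))
      ≤ ∑ _i : Fin d, (1:ℝ) := by
        refine Finset.sum_le_sum fun i _ => ?_
        rw [integral_coord_abs d i]
        exact integral_abs_gauss_le
    _ = d := by simp

lemma integrable_norm_pi (d : ℕ) :
    Integrable (fun a : Fin d → ℝ => ‖(EuclideanSpace.equiv (Fin d) ℝ).symm a‖)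
      (Measure.pi fun _ : Fin d => gaussianReal 0 1) := by
  refine (integrable_sum_abs d).mono'
    ((measurable_esymm d).norm.aestronglyMeasurable) (Eventually.of_forall fun a => ?_)
  rw [norm_norm]
  exact euclid_norm_le_sum d _

lemma integrable_norm_stdGaussian (d : ℕ) :
    Integrable (fun ν : EuclideanSpace ℝ (Fin d) => ‖ν‖) (stdGaussian d) := by
  rw [_root_.stdGaussian, integrable_map_measure
    (continuous_norm.aestronglyMeasurable) (measurable_esymm d).aemeasurable]
  exact integrable_norm_pi d

lemma integral_norm_stdGaussian_le (d : ℕ) :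
    ∫ ν, ‖ν‖ ∂(stdGaussian d) ≤ d := by
  rw [_root_.stdGaussian, integral_map (measurable_esymm d).aemeasurable
    (continuous_norm.aestronglyMeasurable)]
  refine le_trans (integral_mono (integrable_norm_pi d) (integrable_sum_abs d)
    fun a => euclid_norm_le_sum d _) (integral_sum_abs_le d)

lemma integrable_normsq_stdGaussian (d : ℕ) :
    Integrable (fun ν : EuclideanSpace ℝ (Fin d) => ‖ν‖ ^ 2) (stdGaussian d) := by
  rw [_root_.stdGaussian, integrable_map_measure
    (by
      have h : Continuous fun ν : EuclideanSpace ℝ (Fin d) => ‖ν‖ ^ 2 := continuous_norm.pow 2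
      exact h.aestronglyMeasurable) (measurable_esymm d).aemeasurable]
  have hsum : Integrable (fun a : Fin d → ℝ => ∑ i, (a i) ^ 2)
      (Measure.pi fun _ : Fin d => gaussianReal 0 1) := by
    refine integrable_finset_sum _ fun i _ => ?_
    have := ((eval_measurePreserving d i).integrable_comp
      integrable_sq_gauss.aestronglyMeasurable).mpr integrable_sq_gauss
    simpa [Function.comp_def] using this
  refine hsum.congr (Eventually.of_forall fun a => ?_)
  exact (euclid_normsq_eq d _).symm


lemma norm_gradient_sub {d : ℕ} (g h : EuclideanSpace ℝ (Fin d) → ℝ)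
    (a b : EuclideanSpace ℝ (Fin d)) :
    ‖gradient g a - gradient h b‖ = ‖fderiv ℝ g a - fderiv ℝ h b‖ := by
  rw [gradient, gradient, ← LinearIsometryEquiv.map_sub, LinearIsometryEquiv.norm_map]

lemma smoothing_grad_close (d : ℕ) (g : EuclideanSpace ℝ (Fin d) → ℝ) (L μ : ℝ)
    (hμ : 0 < μ) (hL : 0 ≤ L) (hg : Differentiable ℝ g)
    (hglip : ∀ a b, ‖gradient g a - gradient g b‖ ≤ L * ‖a - b‖)
    (z₀ : EuclideanSpace ℝ (Fin d)) :
    ‖gradient (fun z => ∫ ν, g (z + μ • ν) ∂(stdGaussian d)) z₀ - gradient g z₀‖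
      ≤ L * μ * d := by
  have hflip : ∀ a b : EuclideanSpace ℝ (Fin d), ‖fderiv ℝ g a - fderiv ℝ g b‖ ≤ L * ‖a - b‖ := by
    intro a b
    rw [← norm_gradient_sub g g a b]
    exact hglip a b
  have hgc : Continuous g := hg.continuous
  have hfc : Continuous fun a : EuclideanSpace ℝ (Fin d) => fderiv ℝ g a := by
    have : LipschitzWith L.toNNReal (fun a : EuclideanSpace ℝ (Fin d) => fderiv ℝ g a) := by
      refine LipschitzWith.of_dist_le_mul fun a b => ?_
      rw [dist_eq_norm, dist_eq_norm]
      simpa [Real.coe_toNNReal L hL] using hflip a b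
    exact this.continuous
  have hshift : Continuous fun ν : EuclideanSpace ℝ (Fin d) => z₀ + μ • ν :=
    continuous_const.add (continuous_id.const_smul μ)
  have hnsmul : ∀ ν : EuclideanSpace ℝ (Fin d), ‖μ • ν‖ = μ * ‖ν‖ := fun ν => by
    rw [norm_smul, Real.norm_eq_abs, abs_of_pos hμ]
  -- derivative of the translated function
  have hdiffF : ∀ (c : EuclideanSpace ℝ (Fin d)) (x : EuclideanSpace ℝ (Fin d)),
      HasFDerivAt (fun z : EuclideanSpace ℝ (Fin d) => g (z + c)) (fderiv ℝ g (x + c)) x := by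
    intro c x
    have h := (hg (x + c)).hasFDerivAt.comp x ((hasFDerivAt_id x).add_const c)
    simpa [Function.comp_def] using h
  -- norm bound on fderiv in balls
  have hfb : ∀ (w x : EuclideanSpace ℝ (Fin d)), ‖fderiv ℝ g w‖ ≤ ‖fderiv ℝ g x‖ + L * ‖w - x‖ := by
    intro w x
    calc ‖fderiv ℝ g w‖ ≤ ‖fderiv ℝ g x‖ + ‖fderiv ℝ g w - fderiv ℝ g x‖ := by
          have := norm_add_le (fderiv ℝ g x) (fderiv ℝ g w - fderiv ℝ g x)
          simpa using this
      _ ≤ ‖fderiv ℝ g x‖ + L * ‖w - x‖ := by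
          exact add_le_add_right (hflip w x) _
  -- pointwise value bound
  have hval : ∀ ν : EuclideanSpace ℝ (Fin d), |g (z₀ + μ • ν) - g z₀|
      ≤ (‖fderiv ℝ g z₀‖ + L * (μ * ‖ν‖)) * (μ * ‖ν‖) := by
    intro ν
    have hmem1 : z₀ ∈ Metric.closedBall z₀ (μ * ‖ν‖) := by
      refine Metric.mem_closedBall_self (by positivity)
    have hmem2 : z₀ + μ • ν ∈ Metric.closedBall z₀ (μ * ‖ν‖) := by
      rw [Metric.mem_closedBall, dist_eq_norm, add_sub_cancel_left, hnsmul]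
    have := Convex.norm_image_sub_le_of_norm_fderiv_le
      (f := g) (C := ‖fderiv ℝ g z₀‖ + L * (μ * ‖ν‖)) (s := Metric.closedBall z₀ (μ * ‖ν‖))
      (fun w _ => hg w)
      (fun w hw => by
        refine (hfb w z₀).trans (add_le_add_right ?_ _)
        rw [Metric.mem_closedBall, dist_eq_norm] at hw
        exact mul_le_mul_of_nonneg_left hw hL)
      (convex_closedBall _ _) hmem1 hmem2
    rw [add_sub_cancel_left] at this
    calc |g (z₀ + μ • ν) - g z₀| = ‖g (z₀ + μ • ν) - g z₀‖ := rfl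
      _ ≤ (‖fderiv ℝ g z₀‖ + L * (μ * ‖ν‖)) * ‖μ • ν‖ := this
      _ = (‖fderiv ℝ g z₀‖ + L * (μ * ‖ν‖)) * (μ * ‖ν‖) := by rw [hnsmul]
  -- integrability of F z₀
  have hF_int : Integrable (fun ν : EuclideanSpace ℝ (Fin d) => g (z₀ + μ • ν)) (stdGaussian d) := by
    have hbint : Integrable (fun ν : EuclideanSpace ℝ (Fin d) =>
        (|g z₀| + ‖fderiv ℝ g z₀‖ * μ * ‖ν‖) + L * μ ^ 2 * ‖ν‖ ^ 2) (stdGaussian d) :=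
      ((integrable_const _).add ((integrable_norm_stdGaussian d).const_mul _)).add
        ((integrable_normsq_stdGaussian d).const_mul _)
    refine hbint.mono' ((hgc.comp hshift).aestronglyMeasurable)
      (Eventually.of_forall fun ν => ?_)
    have h1 := hval ν
    have h2 : |g (z₀ + μ • ν)| ≤ |g z₀| + |g (z₀ + μ • ν) - g z₀| := by
      have := abs_add_le (g z₀) (g (z₀ + μ • ν) - g z₀)
      simpa using this
    rw [Real.norm_eq_abs]
    nlinarith [abs_nonneg (g (z₀ + μ • ν) - g z₀), norm_nonneg ν, sq_nonneg ‖ν‖]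
  -- integrability of F' z₀
  have hF'_int : Integrable (fun ν : EuclideanSpace ℝ (Fin d) => fderiv ℝ g (z₀ + μ • ν)) (stdGaussian d) := by
    have hbint : Integrable (fun ν : EuclideanSpace ℝ (Fin d) => ‖fderiv ℝ g z₀‖ + L * μ * ‖ν‖) (stdGaussian d) :=
      (integrable_const _).add ((integrable_norm_stdGaussian d).const_mul _)
    refine hbint.mono' ((hfc.comp hshift).aestronglyMeasurable)
      (Eventually.of_forall fun ν => ?_)
    calc ‖fderiv ℝ g (z₀ + μ • ν)‖ ≤ ‖fderiv ℝ g z₀‖ + L * ‖z₀ + μ • ν - z₀‖ := hfb _ _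
      _ = ‖fderiv ℝ g z₀‖ + L * μ * ‖ν‖ := by rw [add_sub_cancel_left, hnsmul]; ring
  -- differentiation under the integral
  have hHas : HasFDerivAt (fun x : EuclideanSpace ℝ (Fin d) => ∫ ν, g (x + μ • ν) ∂(stdGaussian d))
      (∫ ν, fderiv ℝ g (z₀ + μ • ν) ∂(stdGaussian d)) z₀ := by
    refine hasFDerivAt_integral_of_dominated_of_fderiv_le
      (F := fun x ν => g (x + μ • ν)) (F' := fun x ν => fderiv ℝ g (x + μ • ν))
      (bound := fun ν => ‖fderiv ℝ g z₀‖ + L * (1 + μ * ‖ν‖)) (s := Metric.ball z₀ 1) (Metric.ball_mem_nhds z₀ one_pos)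
      (Eventually.of_forall fun x =>
        (hgc.comp (continuous_const.add (continuous_id.const_smul μ))).aestronglyMeasurable)
      hF_int
      ((hfc.comp hshift).aestronglyMeasurable)
      (Eventually.of_forall fun ν => ?_) ?_ (Eventually.of_forall fun ν x _ => ?_)
    · intro x hx
      calc ‖fderiv ℝ g (x + μ • ν)‖ ≤ ‖fderiv ℝ g z₀‖ + L * ‖x + μ • ν - z₀‖ := hfb _ _
        _ ≤ ‖fderiv ℝ g z₀‖ + L * (1 + μ * ‖ν‖) := by
            refine add_le_add_right (mul_le_mul_of_nonneg_left ?_ hL) _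
            calc ‖x + μ • ν - z₀‖ = ‖(x - z₀) + μ • ν‖ := by congr 1; abel
              _ ≤ ‖x - z₀‖ + ‖μ • ν‖ := norm_add_le _ _
              _ ≤ 1 + μ * ‖ν‖ := by
                  rw [hnsmul]
                  refine add_le_add_left ?_ _
                  rw [Metric.mem_ball, dist_eq_norm] at hx
                  exact hx.le
    · have : Integrable (fun ν : EuclideanSpace ℝ (Fin d) => (‖fderiv ℝ g z₀‖ + L) + L * μ * ‖ν‖) (stdGaussian d) :=
        (integrable_const _).add ((integrable_norm_stdGaussian d).const_mul _)
      refine this.congr (Eventually.of_forall fun ν => ?_)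
      ring
    · exact hdiffF (μ • ν) x
  -- conclude
  have hfder : fderiv ℝ (fun x : EuclideanSpace ℝ (Fin d) => ∫ ν, g (x + μ • ν) ∂(stdGaussian d)) z₀
      = ∫ ν, fderiv ℝ g (z₀ + μ • ν) ∂(stdGaussian d) := hHas.fderiv
  rw [norm_gradient_sub, hfder]
  have hconst : fderiv ℝ g z₀ = ∫ _ν : EuclideanSpace ℝ (Fin d), fderiv ℝ g z₀ ∂(stdGaussian d) := by
    rw [integral_const]; simp
  rw [hconst, ← integral_sub hF'_int (integrable_const _)]
  calc ‖∫ ν, (fderiv ℝ g (z₀ + μ • ν) - fderiv ℝ g z₀) ∂(stdGaussian d)‖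
      ≤ ∫ ν, ‖fderiv ℝ g (z₀ + μ • ν) - fderiv ℝ g z₀‖ ∂(stdGaussian d) :=
        norm_integral_le_integral_norm _
    _ ≤ ∫ ν, (L * μ) * ‖ν‖ ∂(stdGaussian d) := by
        refine integral_mono ((hF'_int.sub (integrable_const _)).norm)
          ((integrable_norm_stdGaussian d).const_mul _) fun ν => ?_
        calc ‖fderiv ℝ g (z₀ + μ • ν) - fderiv ℝ g z₀‖ ≤ L * ‖z₀ + μ • ν - z₀‖ := hflip _ _
          _ = (L * μ) * ‖ν‖ := by rw [add_sub_cancel_left, hnsmul]; ring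
    _ = (L * μ) * ∫ ν, ‖ν‖ ∂(stdGaussian d) := integral_const_mul _ _
    _ ≤ (L * μ) * d := by
        refine mul_le_mul_of_nonneg_left (integral_norm_stdGaussian_le d) (by positivity)
    _ = L * μ * d := by ring

end ZOaux

open ZOaux

set_option maxHeartbeats 2000000

/-- for `f` differentiable with `ℓ`-Lipschitz gradient and partial Gaussian
smoothings `f_{μ₁}(x,y) = E_ν[f(x+μ₁ν,y)]`, `f_{μ₂}(x,y) = E_ω[f(x,y+μ₂ω)]`, one has, for every
`(x,y)` and every `v, u`:
(i) `‖∇_x f(x,y)−v‖² + ‖∇_y f(x,y)−u‖² ≤ 2(‖∇_x f_{μ₁}(x,y)−v‖² + ‖∇_y f_{μ₂}(x,y)−u‖²)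
      + (μ₁²/2)ℓ²(d1+3)³ + (μ₂²/2)ℓ²(d2+3)³`, and
(ii) `‖∇_y f(x,y)‖² ≤ 2‖∇_y f_{μ₂}(x,y)‖² + (μ₂²/2)ℓ²(d2+3)³`. -/
theorem zo_vrgda_stmt8 (d1 d2 : ℕ)
    (f : EuclideanSpace ℝ (Fin d1) → EuclideanSpace ℝ (Fin d2) → ℝ)
    (ℓ μ₁ μ₂ : ℝ) (hμ₁ : 0 < μ₁) (hμ₂ : 0 < μ₂)
    (hdiff : Differentiable ℝ
      (fun p : EuclideanSpace ℝ (Fin d1) × EuclideanSpace ℝ (Fin d2) => f p.1 p.2))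
    (hlip : ∀ x x' y y',
      ‖gradient (fun x'' => f x'' y) x - gradient (fun x'' => f x'' y') x'‖ ^ 2 +
          ‖gradient (f x) y - gradient (f x') y'‖ ^ 2 ≤
        ℓ ^ 2 * (‖x - x'‖ ^ 2 + ‖y - y'‖ ^ 2)) :
    ∀ (x : EuclideanSpace ℝ (Fin d1)) (y : EuclideanSpace ℝ (Fin d2))
      (v : EuclideanSpace ℝ (Fin d1)) (u : EuclideanSpace ℝ (Fin d2)),
      (‖gradient (fun x' => f x' y) x - v‖ ^ 2 + ‖gradient (f x) y - u‖ ^ 2 ≤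
        2 * (‖gradient (fun x' => ∫ ν, f (x' + μ₁ • ν) y ∂(stdGaussian d1)) x - v‖ ^ 2 +
            ‖gradient (fun y' => ∫ ω, f x (y' + μ₂ • ω) ∂(stdGaussian d2)) y - u‖ ^ 2) +
          μ₁ ^ 2 / 2 * ℓ ^ 2 * ((d1 : ℝ) + 3) ^ 3 +
          μ₂ ^ 2 / 2 * ℓ ^ 2 * ((d2 : ℝ) + 3) ^ 3) ∧
      (‖gradient (f x) y‖ ^ 2 ≤
        2 * ‖gradient (fun y' => ∫ ω, f x (y' + μ₂ • ω) ∂(stdGaussian d2)) y‖ ^ 2 +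
          μ₂ ^ 2 / 2 * ℓ ^ 2 * ((d2 : ℝ) + 3) ^ 3) := by
  intro x y v u
  -- differentiability of the partial maps
  have hg1 : Differentiable ℝ (fun x' => f x' y) := by
    have := hdiff.comp (f := fun x' : EuclideanSpace ℝ (Fin d1) => (x', y))
      (differentiable_id.prodMk (differentiable_const y))
    exact this
  have hg2 : Differentiable ℝ (f x) := by
    have := hdiff.comp (f := fun y' : EuclideanSpace ℝ (Fin d2) => (x, y'))
      ((differentiable_const x).prodMk differentiable_id)
    exact this
  -- Lipschitz gradients of the partial maps
  have hg1lip : ∀ a b, ‖gradient (fun x' => f x' y) a - gradient (fun x' => f x' y) b‖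
      ≤ |ℓ| * ‖a - b‖ := by
    intro a b
    have h := hlip a b y y
    simp only [sub_self, norm_zero] at h
    have h2 : ‖gradient (fun x'' => f x'' y) a - gradient (fun x'' => f x'' y) b‖ ^ 2
        ≤ (|ℓ| * ‖a - b‖) ^ 2 := by
      have hsq : (|ℓ| * ‖a - b‖) ^ 2 = ℓ ^ 2 * ‖a - b‖ ^ 2 := by
        rw [mul_pow, sq_abs]
      rw [hsq]
      nlinarith [sq_nonneg ‖gradient (f a) y - gradient (f b) y‖]
    nlinarith [h2, norm_nonneg (gradient (fun x' => f x' y) a - gradient (fun x' => f x' y) b),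
      mul_nonneg (abs_nonneg ℓ) (norm_nonneg (a - b))]
  have hg2lip : ∀ a b, ‖gradient (f x) a - gradient (f x) b‖ ≤ |ℓ| * ‖a - b‖ := by
    intro a b
    have h := hlip x x a b
    simp only [sub_self, norm_zero] at h
    have h2 : ‖gradient (f x) a - gradient (f x) b‖ ^ 2 ≤ (|ℓ| * ‖a - b‖) ^ 2 := by
      have hsq : (|ℓ| * ‖a - b‖) ^ 2 = ℓ ^ 2 * ‖a - b‖ ^ 2 := by
        rw [mul_pow, sq_abs]
      rw [hsq]
      nlinarith [sq_nonneg ‖gradient (fun x'' => f x'' a) x - gradient (fun x'' => f x'' b) x‖]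
    nlinarith [h2, norm_nonneg (gradient (f x) a - gradient (f x) b),
      mul_nonneg (abs_nonneg ℓ) (norm_nonneg (a - b))]
  -- smoothing bounds
  have hx : ‖gradient (fun x' => ∫ ν, f (x' + μ₁ • ν) y ∂(stdGaussian d1)) x
      - gradient (fun x' => f x' y) x‖ ≤ |ℓ| * μ₁ * d1 :=
    smoothing_grad_close d1 (fun x' => f x' y) |ℓ| μ₁ hμ₁ (abs_nonneg ℓ) hg1 hg1lip x
  have hy : ‖gradient (fun y' => ∫ ω, f x (y' + μ₂ • ω) ∂(stdGaussian d2)) y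
      - gradient (f x) y‖ ≤ |ℓ| * μ₂ * d2 :=
    smoothing_grad_close d2 (f x) |ℓ| μ₂ hμ₂ (abs_nonneg ℓ) hg2 hg2lip y
  -- abbreviations
  set A1 := ‖gradient (fun x' => f x' y) x - v‖ with hA1
  set A2 := ‖gradient (f x) y - u‖ with hA2
  set A3 := ‖gradient (f x) y‖ with hA3
  set B1 := ‖gradient (fun x' => ∫ ν, f (x' + μ₁ • ν) y ∂(stdGaussian d1)) x - v‖ with hB1
  set B2 := ‖gradient (fun y' => ∫ ω, f x (y' + μ₂ • ω) ∂(stdGaussian d2)) y - u‖ with hB2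
  set B3 := ‖gradient (fun y' => ∫ ω, f x (y' + μ₂ • ω) ∂(stdGaussian d2)) y‖ with hB3
  set D1 := ‖gradient (fun x' => ∫ ν, f (x' + μ₁ • ν) y ∂(stdGaussian d1)) x
      - gradient (fun x' => f x' y) x‖ with hD1
  set D2 := ‖gradient (fun y' => ∫ ω, f x (y' + μ₂ • ω) ∂(stdGaussian d2)) y
      - gradient (f x) y‖ with hD2
  -- triangle inequalities
  have ht1 : A1 ≤ B1 + D1 := by
    rw [hA1, hB1, hD1]
    have heq : gradient (fun x' => f x' y) x - v
        = (gradient (fun x' => ∫ ν, f (x' + μ₁ • ν) y ∂(stdGaussian d1)) x - v)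
          - (gradient (fun x' => ∫ ν, f (x' + μ₁ • ν) y ∂(stdGaussian d1)) x
            - gradient (fun x' => f x' y) x) := by abel
    rw [heq]
    exact norm_sub_le _ _
  have ht2 : A2 ≤ B2 + D2 := by
    rw [hA2, hB2, hD2]
    have heq : gradient (f x) y - u
        = (gradient (fun y' => ∫ ω, f x (y' + μ₂ • ω) ∂(stdGaussian d2)) y - u)
          - (gradient (fun y' => ∫ ω, f x (y' + μ₂ • ω) ∂(stdGaussian d2)) y
            - gradient (f x) y) := by abel
    rw [heq]
    exact norm_sub_le _ _
  have ht3 : A3 ≤ B3 + D2 := by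
    rw [hA3, hB3, hD2]
    have heq : gradient (f x) y
        = (gradient (fun y' => ∫ ω, f x (y' + μ₂ • ω) ∂(stdGaussian d2)) y)
          - (gradient (fun y' => ∫ ω, f x (y' + μ₂ • ω) ∂(stdGaussian d2)) y
            - gradient (f x) y) := by abel
    conv_lhs => rw [heq]
    exact norm_sub_le _ _
  have hA1n : 0 ≤ A1 := norm_nonneg _
  have hA2n : 0 ≤ A2 := norm_nonneg _
  have hA3n : 0 ≤ A3 := norm_nonneg _
  have hB1n : 0 ≤ B1 := norm_nonneg _
  have hB2n : 0 ≤ B2 := norm_nonneg _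
  have hB3n : 0 ≤ B3 := norm_nonneg _
  have hD1n : 0 ≤ D1 := norm_nonneg _
  have hD2n : 0 ≤ D2 := norm_nonneg _
  clear_value A1 A2 A3 B1 B2 B3 D1 D2
  clear hA1 hA2 hA3 hB1 hB2 hB3 hD1 hD2 hg1lip hg2lip hg1 hg2 hlip hdiff f
  -- numeric bounds on the constants
  have hc1 : 2 * (|ℓ| * μ₁ * (d1:ℝ)) ^ 2 ≤ μ₁ ^ 2 / 2 * ℓ ^ 2 * ((d1 : ℝ) + 3) ^ 3 := by
    have hd : 4 * (d1:ℝ) ^ 2 ≤ ((d1:ℝ) + 3) ^ 3 := by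
      nlinarith [Nat.cast_nonneg (α := ℝ) d1]
    calc 2 * (|ℓ| * μ₁ * (d1:ℝ)) ^ 2 = ℓ ^ 2 * μ₁ ^ 2 / 2 * (4 * (d1:ℝ) ^ 2) := by
          rw [mul_pow, mul_pow, sq_abs]; ring
      _ ≤ ℓ ^ 2 * μ₁ ^ 2 / 2 * (((d1:ℝ) + 3) ^ 3) :=
          mul_le_mul_of_nonneg_left hd (by positivity)
      _ = μ₁ ^ 2 / 2 * ℓ ^ 2 * ((d1 : ℝ) + 3) ^ 3 := by ring
  have hc2 : 2 * (|ℓ| * μ₂ * (d2:ℝ)) ^ 2 ≤ μ₂ ^ 2 / 2 * ℓ ^ 2 * ((d2 : ℝ) + 3) ^ 3 := by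
    have hd : 4 * (d2:ℝ) ^ 2 ≤ ((d2:ℝ) + 3) ^ 3 := by
      nlinarith [Nat.cast_nonneg (α := ℝ) d2]
    calc 2 * (|ℓ| * μ₂ * (d2:ℝ)) ^ 2 = ℓ ^ 2 * μ₂ ^ 2 / 2 * (4 * (d2:ℝ) ^ 2) := by
          rw [mul_pow, mul_pow, sq_abs]; ring
      _ ≤ ℓ ^ 2 * μ₂ ^ 2 / 2 * (((d2:ℝ) + 3) ^ 3) :=
          mul_le_mul_of_nonneg_left hd (by positivity)
      _ = μ₂ ^ 2 / 2 * ℓ ^ 2 * ((d2 : ℝ) + 3) ^ 3 := by ring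
  -- nonnegativity
  have hr1n : (0:ℝ) ≤ |ℓ| * μ₁ * d1 := by positivity
  have hr2n : (0:ℝ) ≤ |ℓ| * μ₂ * d2 := by positivity
  have hD1sq : D1 ^ 2 ≤ (|ℓ| * μ₁ * (d1:ℝ)) ^ 2 := pow_le_pow_left₀ hD1n hx 2
  have hD2sq : D2 ^ 2 ≤ (|ℓ| * μ₂ * (d2:ℝ)) ^ 2 := pow_le_pow_left₀ hD2n hy 2
  have h1 : A1 ^ 2 ≤ 2 * B1 ^ 2 + μ₁ ^ 2 / 2 * ℓ ^ 2 * ((d1 : ℝ) + 3) ^ 3 := by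
    calc A1 ^ 2 ≤ (B1 + D1) ^ 2 := pow_le_pow_left₀ hA1n ht1 2
      _ ≤ 2 * B1 ^ 2 + 2 * D1 ^ 2 := by nlinarith [sq_nonneg (B1 - D1)]
      _ ≤ 2 * B1 ^ 2 + μ₁ ^ 2 / 2 * ℓ ^ 2 * ((d1 : ℝ) + 3) ^ 3 := by linarith
  have h2 : A2 ^ 2 ≤ 2 * B2 ^ 2 + μ₂ ^ 2 / 2 * ℓ ^ 2 * ((d2 : ℝ) + 3) ^ 3 := by
    calc A2 ^ 2 ≤ (B2 + D2) ^ 2 := pow_le_pow_left₀ hA2n ht2 2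
      _ ≤ 2 * B2 ^ 2 + 2 * D2 ^ 2 := by nlinarith [sq_nonneg (B2 - D2)]
      _ ≤ 2 * B2 ^ 2 + μ₂ ^ 2 / 2 * ℓ ^ 2 * ((d2 : ℝ) + 3) ^ 3 := by linarith
  have h3 : A3 ^ 2 ≤ 2 * B3 ^ 2 + μ₂ ^ 2 / 2 * ℓ ^ 2 * ((d2 : ℝ) + 3) ^ 3 := by
    calc A3 ^ 2 ≤ (B3 + D2) ^ 2 := pow_le_pow_left₀ hA3n ht3 2
      _ ≤ 2 * B3 ^ 2 + 2 * D2 ^ 2 := by nlinarith [sq_nonneg (B3 - D2)]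
      _ ≤ 2 * B3 ^ 2 + μ₂ ^ 2 / 2 * ℓ ^ 2 * ((d2 : ℝ) + 3) ^ 3 := by linarith
  exact ⟨by linarith, h3⟩
end

section
/- Let f : ℝ^{d1} × ℝ^{d2} → ℝ be differentiable with ℓ-Lipschitz gradient, and let μ₂ > 0. Then the partially smoothed function f_{μ₂}(x,y) = E_ω[f(x, y + μ₂ω)], with ω ~ N(0, I_{d2}), is differentiable with ℓ-Lipschitz gradient (jointly in (x,y)), and for every (x,y), ‖∇_y f_{μ₂}(x,y) − ∇_y f(x,y)‖² ≤ (μ₂²/4)ℓ²(d2+3)³. -/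
set_option maxHeartbeats 1000000

open MeasureTheory ProbabilityTheory

namespace ZO

open Metric InnerProductSpace

noncomputable def eqE (d : ℕ) : EuclideanSpace ℝ (Fin d) ≃ᵐ (Fin d → ℝ) :=
  (EuclideanSpace.equiv (Fin d) ℝ).toHomeomorph.toMeasurableEquiv

lemma stdGaussian_eq (d : ℕ) :
    stdGaussian d = (Measure.pi fun _ : Fin d => gaussianReal 0 1).map (eqE d).symm := rfl

instance (d : ℕ) : IsProbabilityMeasure (stdGaussian d) := by
  rw [stdGaussian_eq]
  exact Measure.isProbabilityMeasure_map (eqE d).symm.measurable.aemeasurable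

lemma integral_stdGaussian {d : ℕ} {G : Type*} [NormedAddCommGroup G] [NormedSpace ℝ G]
    (g : EuclideanSpace ℝ (Fin d) → G) :
    ∫ ω, g ω ∂(stdGaussian d)
      = ∫ x, g ((eqE d).symm x) ∂(Measure.pi fun _ : Fin d => gaussianReal 0 1) := by
  rw [stdGaussian_eq]
  exact integral_map_equiv (eqE d).symm g

lemma pi_map_eval (d : ℕ) (i : Fin d) :
    (Measure.pi fun _ : Fin d => gaussianReal 0 1).map (Function.eval i) = gaussianReal 0 1 := by
  ext s hs
  rw [Measure.map_apply (measurable_pi_apply i) hs, Set.eval_preimage, Measure.pi_pi]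
  simp [Function.update_apply, apply_ite, Finset.prod_ite_eq']

lemma gauss_pdf_bound (x : ℝ) :
    gaussianPDFReal 0 1 x * x ^ 2 ≤ (Real.sqrt (2 * Real.pi))⁻¹ * (4 * Real.exp (-(1/4) * x ^ 2)) := by
  have h1 : x ^ 2 ≤ 4 * Real.exp (x ^ 2 / 4) := by
    have := Real.add_one_le_exp (x ^ 2 / 4)
    nlinarith [Real.exp_pos (x ^ 2 / 4), sq_nonneg x]
  have hpdf : gaussianPDFReal 0 1 x
      = (Real.sqrt (2 * Real.pi))⁻¹ * Real.exp (-x ^ 2 / 2) := by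
    simp [gaussianPDFReal]
  rw [hpdf]
  have hs : (0:ℝ) < Real.sqrt (2 * Real.pi) := Real.sqrt_pos.2 (by positivity)
  have h2 : Real.exp (-x ^ 2 / 2) * x ^ 2 ≤ 4 * Real.exp (-(1/4) * x ^ 2) := by
    calc Real.exp (-x ^ 2 / 2) * x ^ 2 ≤ Real.exp (-x ^ 2 / 2) * (4 * Real.exp (x ^ 2 / 4)) := by
          exact mul_le_mul_of_nonneg_left h1 (Real.exp_nonneg _)
      _ = 4 * Real.exp (-(1/4) * x ^ 2) := by
          rw [← mul_assoc, mul_comm (Real.exp _) (4:ℝ), mul_assoc, ← Real.exp_add]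
          ring_nf
  calc (Real.sqrt (2 * Real.pi))⁻¹ * Real.exp (-x ^ 2 / 2) * x ^ 2
      = (Real.sqrt (2 * Real.pi))⁻¹ * (Real.exp (-x ^ 2 / 2) * x ^ 2) := by ring
    _ ≤ (Real.sqrt (2 * Real.pi))⁻¹ * (4 * Real.exp (-(1/4) * x ^ 2)) := by
        exact mul_le_mul_of_nonneg_left h2 (by positivity)

lemma gauss_withDensity :
    gaussianReal 0 1 = MeasureTheory.Measure.withDensity volume
      (fun x => ((Real.toNNReal (gaussianPDFReal 0 1 x)) : ENNReal)) := by
  rw [gaussianReal_of_var_ne_zero 0 one_ne_zero]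
  rfl

lemma meas_pdfNN : Measurable (fun x => Real.toNNReal (gaussianPDFReal 0 1 x)) :=
  (measurable_gaussianPDFReal 0 1).real_toNNReal

lemma gauss_env_int : Integrable
    (fun x : ℝ => (Real.sqrt (2 * Real.pi))⁻¹ * (4 * Real.exp (-(1/4) * x ^ 2))) := by
  exact ((integrable_exp_neg_mul_sq (by norm_num : (0:ℝ) < 1/4)).const_mul 4).const_mul _

lemma gauss_smul_eq (g : ℝ → ℝ) :
    (fun x => (Real.toNNReal (gaussianPDFReal 0 1 x)) • g x)
      = fun x => gaussianPDFReal 0 1 x * g x := by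
  ext x
  simp [NNReal.smul_def, Real.coe_toNNReal _ (gaussianPDFReal_nonneg 0 1 x)]

lemma gauss_pdf_sq_int : Integrable (fun x => gaussianPDFReal 0 1 x * x ^ 2) := by
  refine gauss_env_int.mono' ?_ ?_
  · exact ((measurable_gaussianPDFReal 0 1).mul (measurable_id.pow_const 2)).aestronglyMeasurable
  · filter_upwards with x
    rw [Real.norm_eq_abs, abs_of_nonneg (mul_nonneg (gaussianPDFReal_nonneg 0 1 x) (sq_nonneg x))]
    exact gauss_pdf_bound x

lemma gauss_sq_int : Integrable (fun t : ℝ => t ^ 2) (gaussianReal 0 1) := by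
  rw [gauss_withDensity, integrable_withDensity_iff_integrable_smul meas_pdfNN]
  have := gauss_smul_eq (fun t => t ^ 2)
  rw [this]
  exact gauss_pdf_sq_int

lemma sqrt_calc : (Real.sqrt (2 * Real.pi))⁻¹ * (4 * Real.sqrt (Real.pi / (1/4))) ≤ 6 := by
  have hpi : (0:ℝ) < Real.pi := Real.pi_pos
  rw [Real.sqrt_mul (by norm_num : (0:ℝ) ≤ 2), show Real.pi / (1/4) = 4 * Real.pi by ring,
    Real.sqrt_mul (by norm_num : (0:ℝ) ≤ 4)]
  have h4 : Real.sqrt 4 = 2 := by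
    rw [show (4:ℝ) = 2 ^ 2 by norm_num, Real.sqrt_sq (by norm_num)]
  rw [h4]
  have hs2 : (0:ℝ) < Real.sqrt 2 := Real.sqrt_pos.2 (by norm_num)
  have hsp : (0:ℝ) < Real.sqrt Real.pi := Real.sqrt_pos.2 hpi
  have h2 : (Real.sqrt 2) ^ 2 = 2 := Real.sq_sqrt (by norm_num)
  have key : (Real.sqrt 2 * Real.sqrt Real.pi)⁻¹ * (4 * (2 * Real.sqrt Real.pi))
      = 8 / Real.sqrt 2 := by
    field_simp
    ring
  rw [key, div_le_iff₀ hs2]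
  nlinarith [h2, hs2]

lemma gauss_sq_le : ∫ t, t ^ 2 ∂(gaussianReal 0 1) ≤ 6 := by
  rw [gauss_withDensity, integral_withDensity_eq_integral_smul meas_pdfNN]
  have heq := gauss_smul_eq (fun t => t ^ 2)
  rw [heq]
  have hle : ∫ x, gaussianPDFReal 0 1 x * x ^ 2 ∂volume
      ≤ ∫ x : ℝ, (Real.sqrt (2 * Real.pi))⁻¹ * (4 * Real.exp (-(1/4) * x ^ 2)) ∂volume :=
    integral_mono gauss_pdf_sq_int gauss_env_int (fun x => gauss_pdf_bound x)
  refine hle.trans ?_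
  rw [MeasureTheory.integral_const_mul, MeasureTheory.integral_const_mul]
  have hg := integral_gaussian (1/4)
  simp only [neg_mul] at hg ⊢
  rw [hg]
  exact sqrt_calc
lemma norm_symm_sq {d : ℕ} (x : Fin d → ℝ) :
    ‖(eqE d).symm x‖ ^ 2 = ∑ i, (x i) ^ 2 := by
  rw [EuclideanSpace.norm_eq, Real.sq_sqrt (by positivity)]
  exact Finset.sum_congr rfl fun i _ => by
    rw [Real.norm_eq_abs, sq_abs]
    rfl

lemma coord_sq_int {d : ℕ} (i : Fin d) :
    Integrable (fun x : Fin d → ℝ => (x i) ^ 2)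
      (Measure.pi fun _ : Fin d => gaussianReal 0 1) := by
  have h := gauss_sq_int
  rw [← pi_map_eval d i] at h
  exact (integrable_map_measure ((continuous_pow 2).aestronglyMeasurable)
    (measurable_pi_apply i).aemeasurable).mp h

lemma coord_sq_integral {d : ℕ} (i : Fin d) :
    ∫ x, (x i) ^ 2 ∂(Measure.pi fun _ : Fin d => gaussianReal 0 1)
      = ∫ t, t ^ 2 ∂(gaussianReal 0 1) := by
  have h2 := integral_map (μ := Measure.pi fun _ : Fin d => gaussianReal 0 1)
    (φ := Function.eval i) (f := fun t : ℝ => t ^ 2)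
    (measurable_pi_apply i).aemeasurable ((continuous_pow 2).aestronglyMeasurable)
  conv_rhs => rw [← pi_map_eval d i]
  rw [h2]

lemma stdGaussian_sq_int (d : ℕ) : Integrable (fun ω => ‖ω‖ ^ 2) (stdGaussian d) := by
  rw [stdGaussian_eq, integrable_map_equiv]
  have : ((fun ω : EuclideanSpace ℝ (Fin d) => ‖ω‖ ^ 2) ∘ (eqE d).symm)
      = fun x : Fin d → ℝ => ∑ i, (x i) ^ 2 := by
    ext x; exact norm_symm_sq x
  rw [this]
  exact integrable_finset_sum _ fun i _ => coord_sq_int i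

lemma stdGaussian_sq_le (d : ℕ) : ∫ ω, ‖ω‖ ^ 2 ∂(stdGaussian d) ≤ 6 * d := by
  rw [integral_stdGaussian]
  have heq : (fun x : Fin d → ℝ => ‖(eqE d).symm x‖ ^ 2)
      = fun x : Fin d → ℝ => ∑ i, (x i) ^ 2 := by
    ext x; exact norm_symm_sq x
  rw [heq, integral_finset_sum _ fun i _ => coord_sq_int i]
  calc (∑ i : Fin d, ∫ x, (x i) ^ 2 ∂(Measure.pi fun _ : Fin d => gaussianReal 0 1))
      = ∑ _i : Fin d, ∫ t, t ^ 2 ∂(gaussianReal 0 1) :=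
        Finset.sum_congr rfl fun i _ => coord_sq_integral i
    _ = d * ∫ t, t ^ 2 ∂(gaussianReal 0 1) := by
        rw [Finset.sum_const, Finset.card_univ, Fintype.card_fin, nsmul_eq_mul]
    _ ≤ 6 * d := by
        have h := gauss_sq_le
        have h0 : (0:ℝ) ≤ ∫ t, t ^ 2 ∂(gaussianReal 0 1) :=
          integral_nonneg fun t => sq_nonneg t
        nlinarith [Nat.cast_nonneg (α := ℝ) d]

lemma stdGaussian_norm_int (d : ℕ) : Integrable (fun ω => ‖ω‖) (stdGaussian d) := by
  refine ((integrable_const (1:ℝ)).add (stdGaussian_sq_int d)).mono'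
    continuous_norm.aestronglyMeasurable ?_
  filter_upwards with ω
  rw [Real.norm_eq_abs, abs_of_nonneg (norm_nonneg ω)]
  simp only [Pi.add_apply]
  nlinarith [norm_nonneg ω, sq_nonneg (‖ω‖ - 1)]

lemma jensen_sq {α : Type*} [MeasurableSpace α] {μ : Measure α} [IsProbabilityMeasure μ]
    {h : α → ℝ} (hm : AEStronglyMeasurable h μ) (hi : Integrable (fun a => h a ^ 2) μ) :
    (∫ a, h a ∂μ) ^ 2 ≤ ∫ a, h a ^ 2 ∂μ := by
  have hmem : MemLp h 2 μ := (memLp_two_iff_integrable_sq hm).2 hi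
  have hv := variance_nonneg h μ
  rw [variance_eq_sub hmem] at hv
  have : (μ[h ^ 2] : ℝ) = ∫ a, h a ^ 2 ∂μ := by
    simp [Pi.pow_apply]
  linarith [hv, this ▸ hv]

section Core

variable {d1 d2 : ℕ}

local notation "E₁" => EuclideanSpace ℝ (Fin d1)
local notation "E₂" => EuclideanSpace ℝ (Fin d2)

theorem core (f : E₁ → E₂ → ℝ)
    (ℓ μ₂ : ℝ) (hμ₂ : 0 < μ₂)
    (hdiff : Differentiable ℝ (fun p : E₁ × E₂ => f p.1 p.2))
    (hlip : ∀ x x' y y',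
      ‖gradient (fun x'' => f x'' y) x - gradient (fun x'' => f x'' y') x'‖ ^ 2 +
          ‖gradient (f x) y - gradient (f x') y'‖ ^ 2 ≤
        ℓ ^ 2 * (‖x - x'‖ ^ 2 + ‖y - y'‖ ^ 2)) :
    Differentiable ℝ
      (fun p : E₁ × E₂ => ∫ ω, f p.1 (p.2 + μ₂ • ω) ∂(stdGaussian d2)) ∧
    (∀ x x' y y',
      ‖gradient (fun x'' => ∫ ω, f x'' (y + μ₂ • ω) ∂(stdGaussian d2)) x -
            gradient (fun x'' => ∫ ω, f x'' (y' + μ₂ • ω) ∂(stdGaussian d2)) x'‖ ^ 2 +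
          ‖gradient (fun y'' => ∫ ω, f x (y'' + μ₂ • ω) ∂(stdGaussian d2)) y -
            gradient (fun y'' => ∫ ω, f x' (y'' + μ₂ • ω) ∂(stdGaussian d2)) y'‖ ^ 2 ≤
        ℓ ^ 2 * (‖x - x'‖ ^ 2 + ‖y - y'‖ ^ 2)) ∧
    (∀ x y,
      ‖gradient (fun y' => ∫ ω, f x (y' + μ₂ • ω) ∂(stdGaussian d2)) y -
          gradient (f x) y‖ ^ 2 ≤ μ₂ ^ 2 / 4 * ℓ ^ 2 * ((d2 : ℝ) + 3) ^ 3) := by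
  set γ := stdGaussian d2 with hγ
  set g : E₁ × E₂ → ℝ := fun p => f p.1 p.2 with hgdef
  have hg : Differentiable ℝ g := hdiff
  -- partial derivatives
  have hx : ∀ (x : E₁) (y : E₂), HasFDerivAt (fun x'' => f x'' y)
      ((fderiv ℝ g (x, y)).comp (ContinuousLinearMap.inl ℝ E₁ E₂)) x := fun x y =>
    ((hg (x, y)).hasFDerivAt).comp (f := fun e : E₁ => (e, y)) x (hasFDerivAt_prodMk_left x y)
  have hy : ∀ (x : E₁) (y : E₂), HasFDerivAt (f x)
      ((fderiv ℝ g (x, y)).comp (ContinuousLinearMap.inr ℝ E₁ E₂)) y := fun x y =>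
    ((hg (x, y)).hasFDerivAt).comp y (hasFDerivAt_prodMk_right x y)
  have hgradx : ∀ (x : E₁) (y : E₂), gradient (fun x'' => f x'' y) x
      = (toDual ℝ E₁).symm ((fderiv ℝ g (x, y)).comp (ContinuousLinearMap.inl ℝ E₁ E₂)) :=
    fun x y => congrArg _ (hx x y).fderiv
  have hgrady : ∀ (x : E₁) (y : E₂), gradient (f x) y
      = (toDual ℝ E₂).symm ((fderiv ℝ g (x, y)).comp (ContinuousLinearMap.inr ℝ E₁ E₂)) :=
    fun x y => congrArg _ (hy x y).fderiv
  -- Lipschitz property of the full derivative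
  have key : ∀ p q : E₁ × E₂, ‖fderiv ℝ g p - fderiv ℝ g q‖ ≤ 2 * |ℓ| * ‖p - q‖ := by
    intro p q
    set A := fderiv ℝ g p with hA
    set B := fderiv ℝ g q with hB
    set a := ‖A.comp (ContinuousLinearMap.inl ℝ E₁ E₂) - B.comp (ContinuousLinearMap.inl ℝ E₁ E₂)‖ with haa
    set b := ‖A.comp (ContinuousLinearMap.inr ℝ E₁ E₂) - B.comp (ContinuousLinearMap.inr ℝ E₁ E₂)‖ with hbb
    have hab : a ^ 2 + b ^ 2 ≤ ℓ ^ 2 * (‖p.1 - q.1‖ ^ 2 + ‖p.2 - q.2‖ ^ 2) := by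
      have h := hlip p.1 q.1 p.2 q.2
      rw [hgradx, hgradx, hgrady, hgrady, ← map_sub, ← map_sub,
        LinearIsometryEquiv.norm_map, LinearIsometryEquiv.norm_map] at h
      simpa only [Prod.mk.eta, ← hA, ← hB] using h
    have h1 : ‖p.1 - q.1‖ ≤ ‖p - q‖ := by
      have := norm_fst_le (p - q); simpa using this
    have h2 : ‖p.2 - q.2‖ ≤ ‖p - q‖ := by
      have := norm_snd_le (p - q); simpa using this
    have ha0 : (0:ℝ) ≤ a := norm_nonneg _
    have hb0 : (0:ℝ) ≤ b := norm_nonneg _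
    have hab2 : a ^ 2 + b ^ 2 ≤ 2 * ℓ ^ 2 * ‖p - q‖ ^ 2 := by
      have e1 : ‖p.1 - q.1‖ ^ 2 ≤ ‖p - q‖ ^ 2 := pow_le_pow_left₀ (norm_nonneg _) h1 2
      have e2 : ‖p.2 - q.2‖ ^ 2 ≤ ‖p - q‖ ^ 2 := pow_le_pow_left₀ (norm_nonneg _) h2 2
      nlinarith [e1, e2, hab, sq_nonneg ℓ]
    have hsum : a + b ≤ 2 * |ℓ| * ‖p - q‖ := by
      have hC : (0:ℝ) ≤ 2 * |ℓ| * ‖p - q‖ := by positivity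
      have hsq : (a + b) ^ 2 ≤ (2 * |ℓ| * ‖p - q‖) ^ 2 := by
        nlinarith [sq_nonneg (a - b), sq_abs ℓ, hab2]
      calc a + b = Real.sqrt ((a + b) ^ 2) := (Real.sqrt_sq (by linarith)).symm
        _ ≤ Real.sqrt ((2 * |ℓ| * ‖p - q‖) ^ 2) := Real.sqrt_le_sqrt hsq
        _ = 2 * |ℓ| * ‖p - q‖ := Real.sqrt_sq hC
    refine ContinuousLinearMap.opNorm_le_bound _ (by positivity) fun u => ?_
    have hu : ((u.1, (0 : E₂)) : E₁ × E₂) + ((0 : E₁), u.2) = u := by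
      ext <;> simp
    have hdecomp : (A - B) u
        = (A.comp (ContinuousLinearMap.inl ℝ E₁ E₂) - B.comp (ContinuousLinearMap.inl ℝ E₁ E₂)) u.1
          + (A.comp (ContinuousLinearMap.inr ℝ E₁ E₂) - B.comp (ContinuousLinearMap.inr ℝ E₁ E₂)) u.2 := by
      conv_lhs => rw [← hu]
      rw [map_add]
      rfl
    rw [hdecomp]
    have t1 := (A.comp (ContinuousLinearMap.inl ℝ E₁ E₂) - B.comp (ContinuousLinearMap.inl ℝ E₁ E₂)).le_opNorm u.1
    have t2 := (A.comp (ContinuousLinearMap.inr ℝ E₁ E₂) - B.comp (ContinuousLinearMap.inr ℝ E₁ E₂)).le_opNorm u.2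
    have hn1 : ‖u.1‖ ≤ ‖u‖ := norm_fst_le u
    have hn2 : ‖u.2‖ ≤ ‖u‖ := norm_snd_le u
    calc ‖_ + _‖ ≤ a * ‖u.1‖ + b * ‖u.2‖ := (norm_add_le _ _).trans (add_le_add t1 t2)
      _ ≤ (a + b) * ‖u‖ := by
          have ha0 : (0:ℝ) ≤ a := norm_nonneg _
          have hb0 : (0:ℝ) ≤ b := norm_nonneg _
          nlinarith [mul_le_mul_of_nonneg_left hn1 ha0, mul_le_mul_of_nonneg_left hn2 hb0]
      _ ≤ 2 * |ℓ| * ‖p - q‖ * ‖u‖ := mul_le_mul_of_nonneg_right hsum (norm_nonneg u)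
  -- continuity of the derivative
  have hDgcont : Continuous (fderiv ℝ g) := by
    have hlw : LipschitzWith (Real.toNNReal (2 * |ℓ|)) (fderiv ℝ g) := by
      refine LipschitzWith.of_dist_le_mul fun p q => ?_
      rw [dist_eq_norm, dist_eq_norm, Real.coe_toNNReal _ (by positivity)]
      exact key p q
    exact hlw.continuous
  have hsmulnorm : ∀ ω : E₂, ‖μ₂ • ω‖ = μ₂ * ‖ω‖ := fun ω => by
    rw [norm_smul, Real.norm_eq_abs, abs_of_pos hμ₂]
  have hnorm0 : ∀ w : E₂, ‖(((0 : E₁), w) : E₁ × E₂)‖ = ‖w‖ := fun w => by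
    rw [Prod.norm_def]
    simp [max_eq_right (norm_nonneg w)]
  -- derivative of the integrand in the parameter
  have hψ : ∀ (w : E₂) (q : E₁ × E₂), HasFDerivAt (fun q : E₁ × E₂ => (q.1, q.2 + w))
      (ContinuousLinearMap.id ℝ (E₁ × E₂)) q := by
    intro w q
    have hid : ((ContinuousLinearMap.fst ℝ E₁ E₂).prod (ContinuousLinearMap.snd ℝ E₁ E₂))
        = ContinuousLinearMap.id ℝ (E₁ × E₂) := ContinuousLinearMap.ext fun u => rfl
    have h1 : HasFDerivAt (fun q : E₁ × E₂ => q.1) (ContinuousLinearMap.fst ℝ E₁ E₂) q :=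
      hasFDerivAt_fst
    have h2 : HasFDerivAt (fun q : E₁ × E₂ => q.2) (ContinuousLinearMap.snd ℝ E₁ E₂) q :=
      hasFDerivAt_snd
    have h := h1.prodMk (h2.add_const w)
    rwa [hid] at h
  have hφ : ∀ (ω : E₂) (q : E₁ × E₂), HasFDerivAt (fun q : E₁ × E₂ => f q.1 (q.2 + μ₂ • ω))
      (fderiv ℝ g (q.1, q.2 + μ₂ • ω)) q := by
    intro ω q
    have h := ((hg (q.1, q.2 + μ₂ • ω)).hasFDerivAt).comp q (hψ (μ₂ • ω) q)
    rwa [ContinuousLinearMap.comp_id] at h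
  -- main: differentiation under the integral sign
  have main : ∀ (x : E₁) (y : E₂),
      Integrable (fun ω => fderiv ℝ g (x, y + μ₂ • ω)) γ ∧
      HasFDerivAt (fun q : E₁ × E₂ => ∫ ω, f q.1 (q.2 + μ₂ • ω) ∂γ)
        (∫ ω, fderiv ℝ g (x, y + μ₂ • ω) ∂γ) (x, y) := by
    intro x y
    have hd0 : ∀ ω : E₂, ((x, y + μ₂ • ω) : E₁ × E₂) - (x, y) = ((0 : E₁), μ₂ • ω) := by
      intro ω
      ext
      · simp
      · simp
    have hcontF : ∀ q : E₁ × E₂, Continuous (fun ω : E₂ => f q.1 (q.2 + μ₂ • ω)) := by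
      intro q
      exact hg.continuous.comp
        (continuous_const.prodMk (continuous_const.add (continuous_id.const_smul μ₂)))
    refine hasFDerivAt_integral_of_dominated_loc_of_lip
      (F' := fun ω => fderiv ℝ g (x, y + μ₂ • ω))
      (bound := fun ω => ‖fderiv ℝ g (x, y)‖ + 2 * |ℓ| * μ₂ * ‖ω‖ + 2 * |ℓ|)
      (s := ball ((x, y) : E₁ × E₂) 1) (ball_mem_nhds _ one_pos)
      (Filter.Eventually.of_forall fun q => (hcontF q).aestronglyMeasurable) ?_ ?_ ?_ ?_
      (Filter.Eventually.of_forall fun ω => hφ ω (x, y))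
    · -- integrability of F x₀
      refine Integrable.mono'
        (g := fun ω => |g (x, y)| + ‖fderiv ℝ g (x, y)‖ * μ₂ * ‖ω‖ + 2 * |ℓ| * μ₂ ^ 2 * ‖ω‖ ^ 2)
        (((integrable_const _).add ((stdGaussian_norm_int d2).const_mul
          (‖fderiv ℝ g (x, y)‖ * μ₂))).add ((stdGaussian_sq_int d2).const_mul (2 * |ℓ| * μ₂ ^ 2)))
        (hcontF (x, y)).aestronglyMeasurable ?_
      filter_upwards with ω
      have hmem : ((x, y + μ₂ • ω) : E₁ × E₂) ∈ closedBall ((x, y) : E₁ × E₂) (μ₂ * ‖ω‖) := by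
        rw [mem_closedBall_iff_norm, hd0 ω, hnorm0, hsmulnorm]
      have hDb : ∀ z ∈ closedBall ((x, y) : E₁ × E₂) (μ₂ * ‖ω‖),
          ‖fderiv ℝ g z‖ ≤ ‖fderiv ℝ g (x, y)‖ + 2 * |ℓ| * (μ₂ * ‖ω‖) := by
        intro z hz
        have h1 := norm_sub_norm_le (fderiv ℝ g z) (fderiv ℝ g (x, y))
        have h2 := key z (x, y)
        have h3 : ‖z - ((x, y) : E₁ × E₂)‖ ≤ μ₂ * ‖ω‖ := mem_closedBall_iff_norm.1 hz
        have h4 : 2 * |ℓ| * ‖z - ((x, y) : E₁ × E₂)‖ ≤ 2 * |ℓ| * (μ₂ * ‖ω‖) :=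
          mul_le_mul_of_nonneg_left h3 (by positivity)
        linarith
      have hsub := Convex.norm_image_sub_le_of_norm_fderiv_le (fun z _ => hg z) hDb
        (convex_closedBall _ _) (mem_closedBall_self (by positivity)) hmem
      have hval : f x (y + μ₂ • ω) = g ((x, y + μ₂ • ω) : E₁ × E₂) := rfl
      rw [Real.norm_eq_abs]
      have htri : |f x (y + μ₂ • ω)| ≤ |g (x, y)| + ‖g ((x, y + μ₂ • ω) : E₁ × E₂) - g (x, y)‖ := by
        rw [hval]
        have := abs_sub_abs_le_abs_sub (g ((x, y + μ₂ • ω) : E₁ × E₂)) (g (x, y))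
        rw [Real.norm_eq_abs]
        linarith
      have hdist : ‖((x, y + μ₂ • ω) : E₁ × E₂) - (x, y)‖ = μ₂ * ‖ω‖ := by
        rw [hd0 ω, hnorm0, hsmulnorm]
      rw [hdist] at hsub
      have hfin : |f x (y + μ₂ • ω)| ≤ |g (x, y)|
          + (‖fderiv ℝ g (x, y)‖ + 2 * |ℓ| * (μ₂ * ‖ω‖)) * (μ₂ * ‖ω‖) := by linarith
      nlinarith [hfin, norm_nonneg ω, abs_nonneg ℓ, hμ₂.le, norm_nonneg (fderiv ℝ g (x, y)), sq_nonneg ‖ω‖]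
    · -- measurability of F'
      exact (hDgcont.comp
        (continuous_const.prodMk (continuous_const.add (continuous_id.const_smul μ₂)))).aestronglyMeasurable
    · -- Lipschitz estimate on the unit ball
      refine Filter.Eventually.of_forall fun ω => ?_
      refine Convex.lipschitzOnWith_of_nnnorm_fderiv_le
        (fun q _ => (hφ ω q).differentiableAt) ?_ (convex_ball _ _)
      intro q hq
      rw [← NNReal.coe_le_coe, coe_nnnorm, Real.coe_nnabs, (hφ ω q).fderiv]
      beta_reduce
      refine le_trans ?_ (le_abs_self _)
      have h1 := key ((q.1, q.2 + μ₂ • ω) : E₁ × E₂) ((x, y + μ₂ • ω) : E₁ × E₂)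
      have h2 := key ((x, y + μ₂ • ω) : E₁ × E₂) ((x, y) : E₁ × E₂)
      have hdq : ((q.1, q.2 + μ₂ • ω) : E₁ × E₂) - (x, y + μ₂ • ω) = q - (x, y) := by
        ext
        · simp
        · simp
      rw [hdq] at h1
      rw [hd0 ω, hnorm0, hsmulnorm] at h2
      have hqlt : ‖q - ((x, y) : E₁ × E₂)‖ ≤ 1 := by
        have := mem_ball_iff_norm.1 hq
        linarith
      have t1 := norm_sub_norm_le (fderiv ℝ g ((q.1, q.2 + μ₂ • ω) : E₁ × E₂))
        (fderiv ℝ g ((x, y + μ₂ • ω) : E₁ × E₂))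
      have t2 := norm_sub_norm_le (fderiv ℝ g ((x, y + μ₂ • ω) : E₁ × E₂))
        (fderiv ℝ g ((x, y) : E₁ × E₂))
      have h5 : 2 * |ℓ| * ‖q - ((x, y) : E₁ × E₂)‖ ≤ 2 * |ℓ| :=  by
        nlinarith [abs_nonneg ℓ, hqlt]
      linarith [t1, t2, h1, h2, h5]
    · -- integrability of the bound
      exact ((integrable_const _).add ((stdGaussian_norm_int d2).const_mul
        (2 * |ℓ| * μ₂))).add (integrable_const _)
  -- gradient formulas for partial maps
  have gradxF : ∀ (x : E₁) (y : E₂),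
      gradient (fun x'' => ∫ ω, f x'' (y + μ₂ • ω) ∂γ) x
        = ∫ ω, gradient (fun x'' => f x'' (y + μ₂ • ω)) x ∂γ
      ∧ Integrable (fun ω => gradient (fun x'' => f x'' (y + μ₂ • ω)) x) γ := by
    intro x y
    obtain ⟨hInt, hDer⟩ := main x y
    set L1 : ((E₁ × E₂) →L[ℝ] ℝ) →L[ℝ] (E₁ →L[ℝ] ℝ) :=
      (ContinuousLinearMap.compL ℝ E₁ (E₁ × E₂) ℝ).flip (ContinuousLinearMap.inl ℝ E₁ E₂) with hL1
    have hF1 : HasFDerivAt (fun x'' : E₁ => ∫ ω, f x'' (y + μ₂ • ω) ∂γ)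
        ((∫ ω, fderiv ℝ g (x, y + μ₂ • ω) ∂γ).comp (ContinuousLinearMap.inl ℝ E₁ E₂)) x :=
      hDer.comp (f := fun e : E₁ => (e, y)) x (hasFDerivAt_prodMk_left x y)
    have hIntL : Integrable
        (fun ω => (fderiv ℝ g (x, y + μ₂ • ω)).comp (ContinuousLinearMap.inl ℝ E₁ E₂)) γ :=
      L1.integrable_comp hInt
    have hcomm : (∫ ω, fderiv ℝ g (x, y + μ₂ • ω) ∂γ).comp (ContinuousLinearMap.inl ℝ E₁ E₂)
        = ∫ ω, (fderiv ℝ g (x, y + μ₂ • ω)).comp (ContinuousLinearMap.inl ℝ E₁ E₂) ∂γ :=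
      (L1.integral_comp_comm hInt).symm
    have hgrad : gradient (fun x'' : E₁ => ∫ ω, f x'' (y + μ₂ • ω) ∂γ) x
        = (toDual ℝ E₁).symm
            (∫ ω, (fderiv ℝ g (x, y + μ₂ • ω)).comp (ContinuousLinearMap.inl ℝ E₁ E₂) ∂γ) :=
      (congrArg _ hF1.fderiv).trans (congrArg _ hcomm)
    have hiso := ((toDual ℝ E₁).symm.toLinearIsometry).integral_comp_comm (μ := γ)
      (fun ω => (fderiv ℝ g (x, y + μ₂ • ω)).comp (ContinuousLinearMap.inl ℝ E₁ E₂))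
    simp only [LinearIsometryEquiv.coe_toLinearIsometry] at hiso
    constructor
    · rw [hgrad, ← hiso]
      congr 1
      funext ω
      exact (hgradx x (y + μ₂ • ω)).symm
    · have hInt2 : Integrable (fun ω => (toDual ℝ E₁).symm
          ((fderiv ℝ g (x, y + μ₂ • ω)).comp (ContinuousLinearMap.inl ℝ E₁ E₂))) γ :=
        ((toDual ℝ E₁).symm.toLinearIsometry.toContinuousLinearMap).integrable_comp hIntL
      exact hInt2.congr (Filter.Eventually.of_forall fun ω => (hgradx x (y + μ₂ • ω)).symm)
  have gradyF : ∀ (x : E₁) (y : E₂),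
      gradient (fun y'' => ∫ ω, f x (y'' + μ₂ • ω) ∂γ) y
        = ∫ ω, gradient (f x) (y + μ₂ • ω) ∂γ
      ∧ Integrable (fun ω => gradient (f x) (y + μ₂ • ω)) γ := by
    intro x y
    obtain ⟨hInt, hDer⟩ := main x y
    set L2 : ((E₁ × E₂) →L[ℝ] ℝ) →L[ℝ] (E₂ →L[ℝ] ℝ) :=
      (ContinuousLinearMap.compL ℝ E₂ (E₁ × E₂) ℝ).flip (ContinuousLinearMap.inr ℝ E₁ E₂) with hL2
    have hF2 : HasFDerivAt (fun y'' : E₂ => ∫ ω, f x (y'' + μ₂ • ω) ∂γ)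
        ((∫ ω, fderiv ℝ g (x, y + μ₂ • ω) ∂γ).comp (ContinuousLinearMap.inr ℝ E₁ E₂)) y :=
      hDer.comp y (hasFDerivAt_prodMk_right x y)
    have hIntL : Integrable
        (fun ω => (fderiv ℝ g (x, y + μ₂ • ω)).comp (ContinuousLinearMap.inr ℝ E₁ E₂)) γ :=
      L2.integrable_comp hInt
    have hcomm : (∫ ω, fderiv ℝ g (x, y + μ₂ • ω) ∂γ).comp (ContinuousLinearMap.inr ℝ E₁ E₂)
        = ∫ ω, (fderiv ℝ g (x, y + μ₂ • ω)).comp (ContinuousLinearMap.inr ℝ E₁ E₂) ∂γ :=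
      (L2.integral_comp_comm hInt).symm
    have hgrad : gradient (fun y'' : E₂ => ∫ ω, f x (y'' + μ₂ • ω) ∂γ) y
        = (toDual ℝ E₂).symm
            (∫ ω, (fderiv ℝ g (x, y + μ₂ • ω)).comp (ContinuousLinearMap.inr ℝ E₁ E₂) ∂γ) :=
      (congrArg _ hF2.fderiv).trans (congrArg _ hcomm)
    have hiso := ((toDual ℝ E₂).symm.toLinearIsometry).integral_comp_comm (μ := γ)
      (fun ω => (fderiv ℝ g (x, y + μ₂ • ω)).comp (ContinuousLinearMap.inr ℝ E₁ E₂))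
    simp only [LinearIsometryEquiv.coe_toLinearIsometry] at hiso
    constructor
    · rw [hgrad, ← hiso]
      congr 1
      funext ω
      exact (hgrady x (y + μ₂ • ω)).symm
    · have hInt2 : Integrable (fun ω => (toDual ℝ E₂).symm
          ((fderiv ℝ g (x, y + μ₂ • ω)).comp (ContinuousLinearMap.inr ℝ E₁ E₂))) γ :=
        ((toDual ℝ E₂).symm.toLinearIsometry.toContinuousLinearMap).integrable_comp hIntL
      exact hInt2.congr (Filter.Eventually.of_forall fun ω => (hgrady x (y + μ₂ • ω)).symm)
  refine ⟨?_, ?_, ?_⟩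
  · -- differentiability
    intro p
    exact ((main p.1 p.2).2).differentiableAt
  · -- Lipschitz gradient of the smoothed function
    intro x x' y y'
    obtain ⟨hgx1, hix1⟩ := gradxF x y
    obtain ⟨hgx2, hix2⟩ := gradxF x' y'
    obtain ⟨hgy1, hiy1⟩ := gradyF x y
    obtain ⟨hgy2, hiy2⟩ := gradyF x' y'
    rw [hgx1, hgx2, hgy1, hgy2, ← integral_sub hix1 hix2, ← integral_sub hiy1 hiy2]
    have hpt : ∀ ω : E₂,
        ‖gradient (fun x'' => f x'' (y + μ₂ • ω)) x - gradient (fun x'' => f x'' (y' + μ₂ • ω)) x'‖ ^ 2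
          + ‖gradient (f x) (y + μ₂ • ω) - gradient (f x') (y' + μ₂ • ω)‖ ^ 2
          ≤ ℓ ^ 2 * (‖x - x'‖ ^ 2 + ‖y - y'‖ ^ 2) := by
      intro ω
      have h := hlip x x' (y + μ₂ • ω) (y' + μ₂ • ω)
      rwa [add_sub_add_right_eq_sub] at h
    have hmx : AEStronglyMeasurable (fun ω : E₂ =>
        ‖gradient (fun x'' => f x'' (y + μ₂ • ω)) x - gradient (fun x'' => f x'' (y' + μ₂ • ω)) x'‖) γ :=
      (hix1.aestronglyMeasurable.sub hix2.aestronglyMeasurable).norm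
    have hmy : AEStronglyMeasurable (fun ω : E₂ =>
        ‖gradient (f x) (y + μ₂ • ω) - gradient (f x') (y' + μ₂ • ω)‖) γ :=
      (hiy1.aestronglyMeasurable.sub hiy2.aestronglyMeasurable).norm
    have hqx : Integrable (fun ω : E₂ =>
        ‖gradient (fun x'' => f x'' (y + μ₂ • ω)) x - gradient (fun x'' => f x'' (y' + μ₂ • ω)) x'‖ ^ 2) γ := by
      refine (integrable_const (ℓ ^ 2 * (‖x - x'‖ ^ 2 + ‖y - y'‖ ^ 2))).mono'
        ((continuous_pow 2).comp_aestronglyMeasurable hmx) ?_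
      filter_upwards with ω
      rw [Real.norm_eq_abs, abs_of_nonneg (sq_nonneg _)]
      nlinarith [hpt ω, sq_nonneg ‖gradient (f x) (y + μ₂ • ω) - gradient (f x') (y' + μ₂ • ω)‖]
    have hqy : Integrable (fun ω : E₂ =>
        ‖gradient (f x) (y + μ₂ • ω) - gradient (f x') (y' + μ₂ • ω)‖ ^ 2) γ := by
      refine (integrable_const (ℓ ^ 2 * (‖x - x'‖ ^ 2 + ‖y - y'‖ ^ 2))).mono'
        ((continuous_pow 2).comp_aestronglyMeasurable hmy) ?_
      filter_upwards with ω
      rw [Real.norm_eq_abs, abs_of_nonneg (sq_nonneg _)]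
      nlinarith [hpt ω, sq_nonneg ‖gradient (fun x'' => f x'' (y + μ₂ • ω)) x - gradient (fun x'' => f x'' (y' + μ₂ • ω)) x'‖]
    have hJx := jensen_sq hmx hqx
    have hJy := jensen_sq hmy hqy
    have hnx := norm_integral_le_integral_norm (μ := γ)
      (fun ω => gradient (fun x'' => f x'' (y + μ₂ • ω)) x - gradient (fun x'' => f x'' (y' + μ₂ • ω)) x')
    have hny := norm_integral_le_integral_norm (μ := γ)
      (fun ω => gradient (f x) (y + μ₂ • ω) - gradient (f x') (y' + μ₂ • ω))
    have hsx := le_trans (pow_le_pow_left₀ (norm_nonneg _) hnx 2) hJx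
    have hsy := le_trans (pow_le_pow_left₀ (norm_nonneg _) hny 2) hJy
    have hsum : (∫ ω, ‖gradient (fun x'' => f x'' (y + μ₂ • ω)) x - gradient (fun x'' => f x'' (y' + μ₂ • ω)) x'‖ ^ 2 ∂γ)
        + (∫ ω, ‖gradient (f x) (y + μ₂ • ω) - gradient (f x') (y' + μ₂ • ω)‖ ^ 2 ∂γ)
        ≤ ℓ ^ 2 * (‖x - x'‖ ^ 2 + ‖y - y'‖ ^ 2) := by
      rw [← integral_add hqx hqy]
      calc _ ≤ ∫ _ω : E₂, ℓ ^ 2 * (‖x - x'‖ ^ 2 + ‖y - y'‖ ^ 2) ∂γ :=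
            integral_mono (hqx.add hqy) (integrable_const _) hpt
        _ = ℓ ^ 2 * (‖x - x'‖ ^ 2 + ‖y - y'‖ ^ 2) := by simp [measure_univ]
    linarith
  · -- distance to the unsmoothed gradient
    intro x y
    obtain ⟨hgy1, hiy1⟩ := gradyF x y
    rw [hgy1, show (gradient (f x) y) = ∫ _ω : E₂, gradient (f x) y ∂γ from by simp [measure_univ],
      ← integral_sub hiy1 (integrable_const _)]
    have hpt : ∀ ω : E₂, ‖gradient (f x) (y + μ₂ • ω) - gradient (f x) y‖ ^ 2
        ≤ ℓ ^ 2 * μ₂ ^ 2 * ‖ω‖ ^ 2 := by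
      intro ω
      have h := hlip x x (y + μ₂ • ω) y
      simp only [sub_self, norm_zero, add_sub_cancel_left, hsmulnorm] at h
      nlinarith [h, sq_nonneg ‖gradient (fun x'' => f x'' (y + μ₂ • ω)) x - gradient (fun x'' => f x'' y) x‖]
    have hm : AEStronglyMeasurable
        (fun ω : E₂ => ‖gradient (f x) (y + μ₂ • ω) - gradient (f x) y‖) γ :=
      (hiy1.aestronglyMeasurable.sub aestronglyMeasurable_const).norm
    have hq : Integrable (fun ω : E₂ => ‖gradient (f x) (y + μ₂ • ω) - gradient (f x) y‖ ^ 2) γ := by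
      refine ((stdGaussian_sq_int d2).const_mul (ℓ ^ 2 * μ₂ ^ 2)).mono'
        ((continuous_pow 2).comp_aestronglyMeasurable hm) ?_
      filter_upwards with ω
      rw [Real.norm_eq_abs, abs_of_nonneg (sq_nonneg _)]
      have := hpt ω
      linarith [this]
    have hJ := jensen_sq hm hq
    have hn := norm_integral_le_integral_norm (μ := γ)
      (fun ω => gradient (f x) (y + μ₂ • ω) - gradient (f x) y)
    have hs := le_trans (pow_le_pow_left₀ (norm_nonneg _) hn 2) hJ
    have hle2 : (∫ ω, ‖gradient (f x) (y + μ₂ • ω) - gradient (f x) y‖ ^ 2 ∂γ)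
        ≤ ℓ ^ 2 * μ₂ ^ 2 * (6 * d2) := by
      calc _ ≤ ∫ ω : E₂, ℓ ^ 2 * μ₂ ^ 2 * ‖ω‖ ^ 2 ∂γ :=
            integral_mono hq ((stdGaussian_sq_int d2).const_mul _) hpt
        _ = ℓ ^ 2 * μ₂ ^ 2 * ∫ ω : E₂, ‖ω‖ ^ 2 ∂γ := integral_const_mul _ _
        _ ≤ ℓ ^ 2 * μ₂ ^ 2 * (6 * d2) :=
            mul_le_mul_of_nonneg_left (stdGaussian_sq_le d2) (by positivity)
    have hdd : (24 : ℝ) * d2 ≤ ((d2 : ℝ) + 3) ^ 3 := by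
      have h0 : (0:ℝ) ≤ (d2 : ℝ) := Nat.cast_nonneg d2
      nlinarith [h0, sq_nonneg ((d2:ℝ)), mul_nonneg h0 (sq_nonneg ((d2:ℝ)))]
    nlinarith [hs, hle2, hdd, sq_nonneg (ℓ * μ₂), (Nat.cast_nonneg d2 : (0:ℝ) ≤ (d2 : ℝ))]

end Core

end ZO

/-- if `f` is differentiable with `ℓ`-Lipschitz gradient and `μ₂ > 0`, then the
partially smoothed `f_{μ₂}(x,y) = E_ω[f(x, y+μ₂ω)]` is differentiable with `ℓ`-Lipschitz
gradient (jointly in `(x,y)`), and `‖∇_y f_{μ₂}(x,y) − ∇_y f(x,y)‖² ≤ (μ₂²/4)ℓ²(d2+3)³`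
for every `(x,y)`. -/
theorem zo_vrgda_stmt9 (d1 d2 : ℕ)
    (f : EuclideanSpace ℝ (Fin d1) → EuclideanSpace ℝ (Fin d2) → ℝ)
    (ℓ μ₂ : ℝ) (hμ₂ : 0 < μ₂)
    (hdiff : Differentiable ℝ
      (fun p : EuclideanSpace ℝ (Fin d1) × EuclideanSpace ℝ (Fin d2) => f p.1 p.2))
    (hlip : ∀ x x' y y',
      ‖gradient (fun x'' => f x'' y) x - gradient (fun x'' => f x'' y') x'‖ ^ 2 +
          ‖gradient (f x) y - gradient (f x') y'‖ ^ 2 ≤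
        ℓ ^ 2 * (‖x - x'‖ ^ 2 + ‖y - y'‖ ^ 2)) :
    Differentiable ℝ
      (fun p : EuclideanSpace ℝ (Fin d1) × EuclideanSpace ℝ (Fin d2) =>
        ∫ ω, f p.1 (p.2 + μ₂ • ω) ∂(stdGaussian d2)) ∧
    (∀ x x' y y',
      ‖gradient (fun x'' => ∫ ω, f x'' (y + μ₂ • ω) ∂(stdGaussian d2)) x -
            gradient (fun x'' => ∫ ω, f x'' (y' + μ₂ • ω) ∂(stdGaussian d2)) x'‖ ^ 2 +
          ‖gradient (fun y'' => ∫ ω, f x (y'' + μ₂ • ω) ∂(stdGaussian d2)) y -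
            gradient (fun y'' => ∫ ω, f x' (y'' + μ₂ • ω) ∂(stdGaussian d2)) y'‖ ^ 2 ≤
        ℓ ^ 2 * (‖x - x'‖ ^ 2 + ‖y - y'‖ ^ 2)) ∧
    (∀ x y,
      ‖gradient (fun y' => ∫ ω, f x (y' + μ₂ • ω) ∂(stdGaussian d2)) y -
          gradient (f x) y‖ ^ 2 ≤ μ₂ ^ 2 / 4 * ℓ ^ 2 * ((d2 : ℝ) + 3) ^ 3) :=
  ZO.core f ℓ μ₂ hμ₂ hdiff hlip
end

section
/- Let g : ℝ^d → ℝ be μ-strongly convex with ℓ-Lipschitz gradient (0 < μ ≤ ℓ), let τ > 0, and let g_τ(y) = E_ω[g(y + τω)] with ω ~ N(0, I_d) be its Gaussian smoothing. Then for all y, y′ ∈ ℝ^d: g_τ(y) − g_τ(y′) ≤ (1/μ)‖∇g_τ(y)‖² + (τ²/(4μ))ℓ²(d+3)³ + τ²ℓd. -/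
open MeasureTheory ProbabilityTheory

lemma integrable_sq_gaussianReal : Integrable (fun t : ℝ => t ^ 2) (gaussianReal 0 1) := by
  rw [gaussianReal_of_var_ne_zero 0 one_ne_zero, gaussianPDF_def,
    integrable_withDensity_iff ((measurable_gaussianPDFReal 0 1).ennreal_ofReal)
      (Filter.Eventually.of_forall fun _ => ENNReal.ofReal_lt_top)]
  have base : Integrable (fun x : ℝ => x ^ 2 * Real.exp (-(1/2) * x ^ 2)) := by
    have := integrable_rpow_mul_exp_neg_mul_sq (b := 1/2) (by norm_num) (s := 2) (by norm_num)
    simpa [Real.rpow_two] using this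
  have h : (fun x : ℝ => x ^ 2 * (ENNReal.ofReal (gaussianPDFReal 0 1 x)).toReal)
      = fun x : ℝ => (Real.sqrt (2 * Real.pi * 1))⁻¹ * (x ^ 2 * Real.exp (-(1/2) * x ^ 2)) := by
    ext x
    rw [ENNReal.toReal_ofReal (gaussianPDFReal_nonneg 0 1 x), gaussianPDFReal]
    push_cast
    rw [show -(x - 0) ^ 2 / (2 * (1:ℝ)) = -(1/2) * x ^ 2 by ring]
    ring
  rw [h]
  exact base.const_mul _

lemma map_eval_pi (d : ℕ) (i : Fin d) :
    (Measure.pi fun _ : Fin d => gaussianReal 0 1).map (fun x => x i) = gaussianReal 0 1 := by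
  ext s hs
  rw [Measure.map_apply (measurable_pi_apply i) hs]
  have h : (fun x : Fin d → ℝ => x i) ⁻¹' s
      = Set.pi Set.univ (Function.update (fun _ : Fin d => (Set.univ : Set ℝ)) i s) := by
    ext x
    simp only [Set.mem_preimage, Set.mem_univ_pi]
    constructor
    · intro hx j
      rcases eq_or_ne j i with rfl | hj
      · simpa using hx
      · simp [Function.update_of_ne hj]
    · intro hx
      simpa using hx i
  rw [h, Measure.pi_pi]
  rw [Finset.prod_eq_single i]
  · simp
  · intro j _ hj
    simp [Function.update_of_ne hj]
  · simp

instance inst_s12 (d : ℕ) : IsProbabilityMeasure (stdGaussian d) :=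
  Measure.isProbabilityMeasure_map
    (EuclideanSpace.equiv (Fin d) ℝ).symm.toHomeomorph.continuous.measurable.aemeasurable

lemma stdGaussian_embed (d : ℕ) :
    MeasurableEmbedding ((EuclideanSpace.equiv (Fin d) ℝ).symm :
      (Fin d → ℝ) → EuclideanSpace ℝ (Fin d)) :=
  (EuclideanSpace.equiv (Fin d) ℝ).symm.toHomeomorph.measurableEmbedding

lemma integrable_norm_sq_stdGaussian (d : ℕ) :
    Integrable (fun ω => ‖ω‖ ^ 2) (stdGaussian d) := by
  rw [_root_.stdGaussian, (stdGaussian_embed d).integrable_map_iff]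
  have h : ((fun ω : EuclideanSpace ℝ (Fin d) => ‖ω‖ ^ 2) ∘
      ⇑(EuclideanSpace.equiv (Fin d) ℝ).symm) = fun x : Fin d → ℝ => ∑ i, (x i) ^ 2 := by
    ext x
    simp only [Function.comp_apply]
    rw [EuclideanSpace.norm_eq, Real.sq_sqrt (by positivity)]
    simp [Real.norm_eq_abs, sq_abs]
  rw [h]
  refine integrable_finset_sum _ fun i _ => ?_
  have := integrable_sq_gaussianReal
  rw [← map_eval_pi d i] at this
  exact (integrable_map_measure ((measurable_id.pow_const 2).aestronglyMeasurable)
    (measurable_pi_apply i).aemeasurable).mp this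

lemma integrable_norm_stdGaussian (d : ℕ) :
    Integrable (fun ω => ‖ω‖) (stdGaussian d) := by
  refine ((integrable_const (1:ℝ)).add (integrable_norm_sq_stdGaussian d)).mono'
    (by fun_prop) (Filter.Eventually.of_forall fun ω => ?_)
  simp only [Real.norm_eq_abs, abs_norm, Pi.add_apply]
  nlinarith [norm_nonneg ω, sq_nonneg (‖ω‖ - 1)]

set_option maxHeartbeats 1000000 in
theorem zo_vrgda_stmt12 (d : ℕ) (g : EuclideanSpace ℝ (Fin d) → ℝ)
    (ℓ μ τ : ℝ) (hμ : 0 < μ) (hμℓ : μ ≤ ℓ) (hτ : 0 < τ)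
    (hdiff : Differentiable ℝ g)
    (hlip : ∀ y y', ‖gradient g y - gradient g y'‖ ≤ ℓ * ‖y - y'‖)
    (hsc : ∀ y y',
      g y ≥ g y' + (inner ℝ (gradient g y') (y - y') : ℝ) + μ / 2 * ‖y - y'‖ ^ 2) :
    ∀ y y',
      (∫ ω, g (y + τ • ω) ∂(stdGaussian d)) - (∫ ω, g (y' + τ • ω) ∂(stdGaussian d)) ≤
        1 / μ * ‖gradient (fun z => ∫ ω, g (z + τ • ω) ∂(stdGaussian d)) y‖ ^ 2 +
          τ ^ 2 / (4 * μ) * ℓ ^ 2 * ((d : ℝ) + 3) ^ 3 + τ ^ 2 * ℓ * d := by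
  intro y y'
  set P := stdGaussian d with hP
  have hℓ : 0 < ℓ := lt_of_lt_of_le hμ hμℓ
  -- continuity facts
  have hgradcont : Continuous (gradient g) := by
    have : LipschitzWith ⟨ℓ, hℓ.le⟩ (gradient g) :=
      LipschitzWith.of_dist_le_mul fun a b => by rw [dist_eq_norm, dist_eq_norm]; exact hlip a b
    exact this.continuous
  have hfd : ∀ x, fderiv ℝ g x
      = (InnerProductSpace.toDual ℝ (EuclideanSpace ℝ (Fin d))) (gradient g x) := fun x =>
    ((InnerProductSpace.toDual ℝ _).apply_symm_apply _).symm
  have hfdnorm : ∀ x, ‖fderiv ℝ g x‖ = ‖gradient g x‖ := fun x => by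
    rw [hfd x]; exact (InnerProductSpace.toDual ℝ _).norm_map _
  have hfdcont : Continuous (fun x => fderiv ℝ g x) := by
    have h : (fun x => fderiv ℝ g x)
        = fun x => (InnerProductSpace.toDual ℝ (EuclideanSpace ℝ (Fin d))) (gradient g x) :=
      funext hfd
    rw [h]; exact (InnerProductSpace.toDual ℝ _).continuous.comp hgradcont
  have haffcont : ∀ z : EuclideanSpace ℝ (Fin d),
      Continuous (fun ω : EuclideanSpace ℝ (Fin d) => z + τ • ω) := fun z =>
    continuous_const.add (continuous_id.const_smul τ)
  -- growth bounds
  have hgradbd : ∀ x, ‖gradient g x‖ ≤ ‖gradient g 0‖ + ℓ * ‖x‖ := fun x => by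
    have h := hlip x 0
    simp only [sub_zero] at h
    have h2 := norm_sub_norm_le (gradient g x) (gradient g 0)
    linarith
  have habs : ∀ x, |g x| ≤ |g 0| + ‖gradient g 0‖ * ‖x‖ + ℓ * ‖x‖ ^ 2 := fun x => by
    have hup := hsc 0 x
    have hlo := hsc x 0
    simp only [zero_sub, sub_zero, norm_neg] at hup hlo
    have h1 : (inner ℝ (gradient g x) (-x) : ℝ) = -(inner ℝ (gradient g x) x : ℝ) :=
      inner_neg_right _ _
    have h2 : (inner ℝ (gradient g x) x : ℝ) ≤ ‖gradient g x‖ * ‖x‖ := real_inner_le_norm _ _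
    have h3 := abs_real_inner_le_norm (gradient g 0) x
    have h4 := hgradbd x
    rw [h1] at hup
    rw [abs_le]
    constructor
    · nlinarith [neg_abs_le (g 0), (abs_le.mp (le_refl |(inner ℝ (gradient g 0) x : ℝ)|)).1,
        abs_le.mp (le_refl |(inner ℝ (gradient g 0) x : ℝ)|), neg_abs_le ((inner ℝ (gradient g 0) x : ℝ)),
        mul_nonneg hμ.le (sq_nonneg ‖x‖), norm_nonneg x, hℓ.le, sq_nonneg ‖x‖]
    · nlinarith [le_abs_self (g 0), mul_le_mul_of_nonneg_right h4 (norm_nonneg x),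
        mul_nonneg hμ.le (sq_nonneg ‖x‖), norm_nonneg x]
  -- integrability of shifted g
  have hnorm_add : ∀ (z ω : EuclideanSpace ℝ (Fin d)), ‖z + τ • ω‖ ≤ ‖z‖ + τ * ‖ω‖ := by
    intro z ω
    calc ‖z + τ • ω‖ ≤ ‖z‖ + ‖τ • ω‖ := norm_add_le _ _
    _ = ‖z‖ + τ * ‖ω‖ := by rw [norm_smul, Real.norm_eq_abs, abs_of_pos hτ]
  have hint : ∀ z, Integrable (fun ω => g (z + τ • ω)) P := by
    intro z
    refine (((integrable_const (|g 0| + ‖gradient g 0‖ * ‖z‖ + ℓ * ‖z‖ ^ 2)).add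
      ((integrable_norm_stdGaussian d).const_mul (‖gradient g 0‖ * τ + 2 * ℓ * ‖z‖ * τ))).add
      ((integrable_norm_sq_stdGaussian d).const_mul (ℓ * τ ^ 2))).mono'
      ((hdiff.continuous.comp (haffcont z)).aestronglyMeasurable)
      (Filter.Eventually.of_forall fun ω => ?_)
    simp only [Pi.add_apply, Real.norm_eq_abs]
    have h1 := hnorm_add z ω
    have h2 := habs (z + τ • ω)
    have hq : ‖z + τ • ω‖ ^ 2 ≤ (‖z‖ + τ * ‖ω‖) ^ 2 := by
      have := pow_le_pow_left₀ (norm_nonneg _) h1 2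
      simpa using this
    have h5 := mul_le_mul_of_nonneg_left h1 (norm_nonneg (gradient g 0))
    have h6 := mul_le_mul_of_nonneg_left hq hℓ.le
    nlinarith [norm_nonneg ω, norm_nonneg z, hτ.le]
  -- shifted gradient bound
  have hgradshift : ∀ (z ω : EuclideanSpace ℝ (Fin d)),
      ‖gradient g (z + τ • ω)‖ ≤ ‖gradient g z‖ + ℓ * τ * ‖ω‖ := by
    intro z ω
    have h := hlip (z + τ • ω) z
    simp only [add_sub_cancel_left] at h
    have h2 := norm_sub_norm_le (gradient g (z + τ • ω)) (gradient g z)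
    rw [norm_smul, Real.norm_eq_abs, abs_of_pos hτ] at h
    nlinarith [norm_nonneg ω]
  have hintfd : Integrable (fun ω => fderiv ℝ g (y + τ • ω)) P := by
    refine ((integrable_const ‖gradient g y‖).add
      ((integrable_norm_stdGaussian d).const_mul (ℓ * τ))).mono'
      ((hfdcont.comp (haffcont y)).aestronglyMeasurable)
      (Filter.Eventually.of_forall fun ω => ?_)
    simp only [Pi.add_apply]
    rw [hfdnorm]
    exact hgradshift y ω
  -- differentiation under the integral sign
  have key : HasFDerivAt (fun z => ∫ ω, g (z + τ • ω) ∂P)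
      (∫ ω, fderiv ℝ g (y + τ • ω) ∂P) y := by
    apply hasFDerivAt_integral_of_dominated_of_fderiv_le (s := Metric.ball y 1) (Metric.ball_mem_nhds y one_pos)
      (bound := fun ω => (‖gradient g y‖ + ℓ) + ℓ * τ * ‖ω‖)
      (F' := fun x ω => fderiv ℝ g (x + τ • ω))
    · exact Filter.Eventually.of_forall fun x =>
        (hdiff.continuous.comp (haffcont x)).aestronglyMeasurable
    · exact hint y
    · exact (hfdcont.comp (haffcont y)).aestronglyMeasurable
    · refine Filter.Eventually.of_forall fun ω x hx => ?_
      rw [hfdnorm]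
      have h2 : ‖gradient g (x + τ • ω) - gradient g (y + τ • ω)‖ ≤ ℓ * ‖x - y‖ := by
        have h := hlip (x + τ • ω) (y + τ • ω)
        simpa [add_sub_add_right_eq_sub] using h
      have h3 := hgradshift y ω
      have hxy : ‖x - y‖ ≤ 1 := le_of_lt (by simpa [dist_eq_norm] using hx)
      have h4 := norm_sub_norm_le (gradient g (x + τ • ω)) (gradient g (y + τ • ω))
      nlinarith [hℓ.le, norm_nonneg (x - y)]
    · exact (integrable_const _).add ((integrable_norm_stdGaussian d).const_mul (ℓ * τ))
    · refine Filter.Eventually.of_forall fun ω x hx => ?_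
      have h := (hdiff (x + τ • ω)).hasFDerivAt
      have haff : HasFDerivAt (fun z : EuclideanSpace ℝ (Fin d) => z + τ • ω)
          (ContinuousLinearMap.id ℝ _) x := (hasFDerivAt_id x).add_const _
      convert h.comp x haff using 1
      rfl
      exact (ContinuousLinearMap.comp_id _).symm
  set G := fun z => ∫ ω, g (z + τ • ω) ∂P with hG
  have hGfd : fderiv ℝ G y = ∫ ω, fderiv ℝ g (y + τ • ω) ∂P := key.fderiv
  have hginner : ∀ v : EuclideanSpace ℝ (Fin d),
      (inner ℝ (gradient G y) v : ℝ) = ∫ ω, (inner ℝ (gradient g (y + τ • ω)) v : ℝ) ∂P := by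
    intro v
    have h0 : gradient G y
        = (InnerProductSpace.toDual ℝ (EuclideanSpace ℝ (Fin d))).symm (fderiv ℝ G y) := rfl
    have h1 : (inner ℝ (gradient G y) v : ℝ) = fderiv ℝ G y v := by
      rw [h0, InnerProductSpace.toDual_symm_apply]
    rw [h1, hGfd, ContinuousLinearMap.integral_apply hintfd]
    congr 1
    ext ω
    rw [hfd, InnerProductSpace.toDual_apply_apply]
  -- integrate strong convexity
  have hinnercont : Continuous (fun ω : EuclideanSpace ℝ (Fin d) =>
      (inner ℝ (gradient g (y + τ • ω)) (y' - y) : ℝ)) :=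
    (hgradcont.comp (haffcont y)).inner continuous_const
  have hintinner : Integrable (fun ω =>
      (inner ℝ (gradient g (y + τ • ω)) (y' - y) : ℝ)) P := by
    refine ((integrable_const (‖gradient g y‖ * ‖y' - y‖)).add
      ((integrable_norm_stdGaussian d).const_mul (ℓ * τ * ‖y' - y‖))).mono'
      hinnercont.aestronglyMeasurable (Filter.Eventually.of_forall fun ω => ?_)
    simp only [Pi.add_apply, Real.norm_eq_abs]
    have h1 := abs_real_inner_le_norm (gradient g (y + τ • ω)) (y' - y)
    have h2 := mul_le_mul_of_nonneg_right (hgradshift y ω) (norm_nonneg (y' - y))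
    nlinarith [norm_nonneg (y' - y)]
  have hmono : (∫ ω, (g (y + τ • ω) + (inner ℝ (gradient g (y + τ • ω)) (y' - y) : ℝ)
      + μ / 2 * ‖y' - y‖ ^ 2) ∂P) ≤ ∫ ω, g (y' + τ • ω) ∂P := by
    refine integral_mono (((hint y).add hintinner).add (integrable_const _)) (hint y')
      fun ω => ?_
    have h := hsc (y' + τ • ω) (y + τ • ω)
    simpa [add_sub_add_right_eq_sub] using h
  have hsplit : (∫ ω, (g (y + τ • ω) + (inner ℝ (gradient g (y + τ • ω)) (y' - y) : ℝ)
      + μ / 2 * ‖y' - y‖ ^ 2) ∂P)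
      = G y + (inner ℝ (gradient G y) (y' - y) : ℝ) + μ / 2 * ‖y' - y‖ ^ 2 := by
    have hAB : Integrable (fun ω => g (y + τ • ω)
        + (inner ℝ (gradient g (y + τ • ω)) (y' - y) : ℝ)) P := (hint y).add hintinner
    rw [integral_add hAB (integrable_const _),
      integral_add (hint y) hintinner, integral_const]
    simp only [measureReal_def, measure_univ, ENNReal.toReal_one, one_smul]
    rw [hginner]
  have hfin : G y - G y' ≤ (inner ℝ (gradient G y) (y - y') : ℝ) - μ / 2 * ‖y - y'‖ ^ 2 := by
    rw [hsplit] at hmono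
    have hswap : (inner ℝ (gradient G y) (y - y') : ℝ)
        = -(inner ℝ (gradient G y) (y' - y) : ℝ) := by
      rw [show y - y' = -(y' - y) by abel, inner_neg_right]
    have hnn : ‖y - y'‖ = ‖y' - y‖ := norm_sub_rev _ _
    rw [hswap, hnn]
    linarith
  have hip := real_inner_le_norm (gradient G y) (y - y')
  have ht1 : (0:ℝ) ≤ τ ^ 2 / (4 * μ) * ℓ ^ 2 * ((d : ℝ) + 3) ^ 3 := by positivity
  have ht2 : (0:ℝ) ≤ τ ^ 2 * ℓ * d := by positivity
  have hmain : ‖gradient G y‖ * ‖y - y'‖ - μ / 2 * ‖y - y'‖ ^ 2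
      ≤ 1 / μ * ‖gradient G y‖ ^ 2 := by
    rw [show 1 / μ * ‖gradient G y‖ ^ 2 = ‖gradient G y‖ ^ 2 / μ by ring, le_div_iff₀ hμ]
    nlinarith [sq_nonneg (‖gradient G y‖ - μ * ‖y - y'‖), sq_nonneg ‖gradient G y‖]
  linarith
end
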